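/- arXiv:1706.08892 — 14 statements merged into one kernel-verified Lean document; each statement's English description precedes it below -/
import Mathlib

section
/- Let a, b : [0,∞) → ℝ be continuous with a(t) ≤ A and 0 < b₁ < b(t) < b₂ for all t ≥ 0, where A, b₁, b₂ are positive constants. Let z : [0,∞) → ℝ be differentiable with z'(t) = a(t)z(t) − b(t)z(t)² for all t ≥ 0 and z(0) > 0. Then z is bounded on [0,∞) and ∫₀^∞ z(t) dt = ∞ if and only if ∫₀^∞ b(t) exp(∫₀^t a(s) ds) dt = ∞. -/
open Real Filter MeasureTheory Set intervalIntegral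

private lemma constOn_Ici {f : ℝ → ℝ} (hc : ContinuousOn f (Set.Ici (0:ℝ)))
    (hd : ∀ x ∈ Set.Ici (0:ℝ), HasDerivWithinAt f 0 (Set.Ici (0:ℝ)) x) :
    ∀ t ∈ Set.Ici (0:ℝ), f t = f 0 := by
  intro t ht
  exact constant_of_has_deriv_right_zero
    (hc.mono Set.Icc_subset_Ici_self)
    (fun x hx => (hd x hx.1).mono (Set.Ici_subset_Ici.mpr hx.1))
    t ⟨ht, le_refl t⟩

set_option maxHeartbeats 1000000 in
theorem stmt1 (a b z : ℝ → ℝ) (A b₁ b₂ : ℝ)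
    (hA : 0 < A) (hb₁ : 0 < b₁) (hb₂ : 0 < b₂)
    (ha : ContinuousOn a (Set.Ici (0:ℝ)))
    (hb : ContinuousOn b (Set.Ici (0:ℝ)))
    (haA : ∀ t ≥ (0:ℝ), a t ≤ A)
    (hbB : ∀ t ≥ (0:ℝ), b₁ < b t ∧ b t < b₂)
    (hz : ∀ t ≥ (0:ℝ), HasDerivWithinAt z (a t * z t - b t * z t ^ 2) (Set.Ici (0:ℝ)) t)
    (hz0 : z 0 > 0) :
    ((∃ M : ℝ, ∀ t ≥ (0:ℝ), |z t| ≤ M) ∧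
      Tendsto (fun T => ∫ t in (0:ℝ)..T, z t) atTop atTop) ↔
    Tendsto (fun T => ∫ t in (0:ℝ)..T, b t * Real.exp (∫ s in (0:ℝ)..t, a s)) atTop atTop := by
  have hmax : Continuous fun t : ℝ => max t 0 := continuous_id.max continuous_const
  have hmem : ∀ t : ℝ, max t 0 ∈ Set.Ici (0:ℝ) := fun t => Set.mem_Ici.mpr (le_max_right _ _)
  have hzc : ContinuousOn z (Set.Ici (0:ℝ)) := fun t ht => (hz t ht).continuousWithinAt
  set ab : ℝ → ℝ := fun t => a (max t 0) with hab
  set bb : ℝ → ℝ := fun t => b (max t 0) with hbb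
  set zb : ℝ → ℝ := fun t => z (max t 0) with hzb
  have habc : Continuous ab := ha.comp_continuous hmax hmem
  have hbbc : Continuous bb := hb.comp_continuous hmax hmem
  have hzbc : Continuous zb := hzc.comp_continuous hmax hmem
  have habe : ∀ t ≥ (0:ℝ), ab t = a t := fun t ht => by rw [hab]; simp [max_eq_left ht]
  have hbbe : ∀ t ≥ (0:ℝ), bb t = b t := fun t ht => by rw [hbb]; simp [max_eq_left ht]
  have hzbe : ∀ t ≥ (0:ℝ), zb t = z t := fun t ht => by rw [hzb]; simp [max_eq_left ht]
  -- μ and its derivative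
  set Ia : ℝ → ℝ := fun t => ∫ s in (0:ℝ)..t, ab s with hIadef
  have hIa : ∀ t : ℝ, HasDerivAt Ia (ab t) t := fun t =>
    (habc.integral_hasStrictDerivAt 0 t).hasDerivAt
  have hIae : ∀ t ≥ (0:ℝ), Ia t = ∫ s in (0:ℝ)..t, a s := by
    intro t ht
    apply intervalIntegral.integral_congr
    intro s hs
    rw [Set.uIcc_of_le ht] at hs
    exact habe s hs.1
  set μ : ℝ → ℝ := fun t => Real.exp (Ia t) with hμdef
  have hIac : Continuous Ia := continuous_iff_continuousAt.mpr fun t => (hIa t).continuousAt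
  have hμc : Continuous μ := Real.continuous_exp.comp hIac
  have hμ : ∀ t : ℝ, HasDerivAt μ (ab t * μ t) t := by
    intro t
    have := (hIa t).exp
    simpa [hμdef, mul_comm] using this
  have hμpos : ∀ t : ℝ, 0 < μ t := fun t => Real.exp_pos _
  have hμ0 : μ 0 = 1 := by simp [hμdef, hIadef]
  -- G = ∫ b μ
  set g : ℝ → ℝ := fun t => bb t * μ t with hgdef
  have hgc : Continuous g := hbbc.mul hμc
  have hgpos : ∀ t : ℝ, 0 < g t := fun t =>
    mul_pos (lt_trans hb₁ (hbB _ (hmem t)).1) (hμpos t)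
  set G : ℝ → ℝ := fun t => ∫ s in (0:ℝ)..t, g s with hGdef
  have hG : ∀ t : ℝ, HasDerivAt G (g t) t := fun t =>
    (hgc.integral_hasStrictDerivAt 0 t).hasDerivAt
  have hGc : Continuous G := continuous_iff_continuousAt.mpr fun t => (hG t).continuousAt
  have hG0 : G 0 = 0 := by simp [hGdef]
  have hGnn : ∀ t ≥ (0:ℝ), 0 ≤ G t := by
    intro t ht
    exact intervalIntegral.integral_nonneg ht fun u _ => (hgpos u).le
  -- positivity of z on [0, ∞)
  set c : ℝ → ℝ := fun s => ab s - bb s * zb s with hcdef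
  have hcc : Continuous c := habc.sub (hbbc.mul hzbc)
  set Ic : ℝ → ℝ := fun t => ∫ s in (0:ℝ)..t, c s with hIcdef
  have hIc : ∀ t : ℝ, HasDerivAt Ic (c t) t := fun t =>
    (hcc.integral_hasStrictDerivAt 0 t).hasDerivAt
  set E : ℝ → ℝ := fun t => Real.exp (-Ic t) with hEdef
  have hE : ∀ t : ℝ, HasDerivAt E (-c t * E t) t := by
    intro t
    have := ((hIc t).neg).exp
    simpa [hEdef, mul_comm] using this
  have hEpos : ∀ t : ℝ, 0 < E t := fun t => Real.exp_pos _
  have hEc : Continuous E := Real.continuous_exp.comp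
    (continuous_iff_continuousAt.mpr fun t => (hIc t).continuousAt).neg
  have hzE : ∀ t ∈ Set.Ici (0:ℝ), z t * E t = z 0 * E 0 := by
    apply constOn_Ici (hzc.mul hEc.continuousOn)
    intro x hx
    have hd : HasDerivWithinAt (fun t => z t * E t)
        ((a x * z x - b x * z x ^ 2) * E x + z x * (-c x * E x)) (Set.Ici 0) x :=
      (hz x hx).mul ((hE x).hasDerivWithinAt)
    have he : (a x * z x - b x * z x ^ 2) * E x + z x * (-c x * E x) = 0 := by
      rw [hcdef]
      simp only [habe x hx, hbbe x hx, hzbe x hx]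
      ring
    rwa [he] at hd
  have hE0 : E 0 = 1 := by simp [hEdef, hIcdef]
  have hzpos : ∀ t ∈ Set.Ici (0:ℝ), 0 < z t := by
    intro t ht
    have h := hzE t ht
    rw [hE0, mul_one] at h
    have := hEpos t
    nlinarith
  -- key identity: μ / z - G is constant on [0, ∞)
  set c₀ : ℝ := (z 0)⁻¹ with hc₀def
  have hc₀pos : 0 < c₀ := inv_pos.mpr hz0
  have hkey0 : ∀ t ∈ Set.Ici (0:ℝ), μ t / z t - G t = c₀ := by
    have hconst : ∀ t ∈ Set.Ici (0:ℝ), μ t / z t - G t = μ 0 / z 0 - G 0 := by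
      apply constOn_Ici
      · exact ((hμc.continuousOn.div hzc) (fun t ht => (hzpos t ht).ne')).sub hGc.continuousOn
      · intro x hx
        have hzx := (hzpos x hx).ne'
        have hdiv : HasDerivWithinAt (fun t => μ t / z t)
            ((ab x * μ x * z x - μ x * (a x * z x - b x * z x ^ 2)) / z x ^ 2)
            (Set.Ici 0) x := ((hμ x).hasDerivWithinAt).div (hz x hx) hzx
        have hval : (ab x * μ x * z x - μ x * (a x * z x - b x * z x ^ 2)) / z x ^ 2 = g x := by
          rw [hgdef]
          simp only [habe x hx, hbbe x hx]
          field_simp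
          ring
        rw [hval] at hdiv
        have := hdiv.sub ((hG x).hasDerivWithinAt)
        rwa [sub_self] at this
    intro t ht
    rw [hconst t ht, hG0, hμ0, sub_zero, one_div, hc₀def]
  set W : ℝ → ℝ := fun t => c₀ + G t with hWdef
  have hWpos : ∀ t ≥ (0:ℝ), 0 < W t := fun t ht => add_pos_of_pos_of_nonneg hc₀pos (hGnn t ht)
  have hkey : ∀ t ∈ Set.Ici (0:ℝ), z t = μ t / W t := by
    intro t ht
    have h := hkey0 t ht
    have hzx := (hzpos t ht).ne'
    have hWx := (hWpos t ht).ne'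
    rw [hWdef]
    field_simp at h ⊢
    rw [eq_div_iff hWx]; linear_combination -h
  -- boundedness of z
  set Iμ : ℝ → ℝ := fun t => ∫ s in (0:ℝ)..t, μ s with hIμdef
  have hIμnn : ∀ t ≥ (0:ℝ), 0 ≤ Iμ t := fun t ht =>
    intervalIntegral.integral_nonneg ht fun u _ => (hμpos u).le
  have hμeq : ∀ t : ℝ, μ t = 1 + ∫ s in (0:ℝ)..t, ab s * μ s := by
    have hd : ∀ x : ℝ, HasDerivAt (fun t => μ t - ∫ s in (0:ℝ)..t, ab s * μ s) 0 x := by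
      intro x
      have := (hμ x).sub (((habc.mul hμc).integral_hasStrictDerivAt 0 x).hasDerivAt)
      rwa [Pi.mul_apply, sub_self] at this
    have hq := is_const_of_deriv_eq_zero (fun x => (hd x).differentiableAt)
      (fun x => (hd x).deriv)
    intro t
    have := hq t 0
    simp only [intervalIntegral.integral_same, sub_zero, hμ0] at this
    linarith
  have hμle : ∀ t ≥ (0:ℝ), μ t ≤ 1 + A * Iμ t := by
    intro t ht
    have h1 : (∫ s in (0:ℝ)..t, ab s * μ s) ≤ ∫ s in (0:ℝ)..t, A * μ s := by
      apply intervalIntegral.integral_mono_on ht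
        ((habc.mul hμc).intervalIntegrable 0 t)
        ((continuous_const.mul hμc).intervalIntegrable 0 t)
      intro u hu
      exact mul_le_mul_of_nonneg_right
        (by rw [hab]; exact haA _ (hmem u)) (hμpos u).le
    rw [intervalIntegral.integral_const_mul] at h1
    rw [hμeq t]
    linarith [h1]
  have hGge : ∀ t ≥ (0:ℝ), b₁ * Iμ t ≤ G t := by
    intro t ht
    rw [hGdef, hIμdef]
    rw [← intervalIntegral.integral_const_mul]
    apply intervalIntegral.integral_mono_on ht
      ((continuous_const.mul hμc).intervalIntegrable 0 t)
      (hgc.intervalIntegrable 0 t)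
    intro u hu
    rw [hgdef]
    exact mul_le_mul_of_nonneg_right (by rw [hbb]; exact (hbB _ (hmem u)).1.le) (hμpos u).le
  set M : ℝ := max (z 0) (A / b₁) with hMdef
  have hMz : z 0 ≤ M := le_max_left _ _
  have hMA : A / b₁ ≤ M := le_max_right _ _
  have hMb : A ≤ M * b₁ := (div_le_iff₀ hb₁).mp hMA
  have hMc : 1 ≤ M * c₀ := by
    rw [hc₀def]
    calc (1:ℝ) = z 0 * (z 0)⁻¹ := (mul_inv_cancel₀ hz0.ne').symm
    _ ≤ M * (z 0)⁻¹ := mul_le_mul_of_nonneg_right (le_max_left _ _) (inv_pos.mpr hz0).le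
  have hbound : ∀ t ≥ (0:ℝ), |z t| ≤ M := by
    intro t ht
    rw [abs_of_pos (hzpos t ht), hkey t ht, div_le_iff₀ (hWpos t ht), hWdef]
    have h1 := hμle t ht
    have h2 := hGge t ht
    have h3 := hIμnn t ht
    have hM0 : 0 ≤ M := le_trans hz0.le hMz
    show μ t ≤ M * (c₀ + G t)
    nlinarith [mul_le_mul_of_nonneg_left h2 hM0, mul_le_mul_of_nonneg_right hMb h3]
  -- log function L = log (W)
  set L : ℝ → ℝ := fun T => Real.log (W T) with hLdef
  have hWc : Continuous W := continuous_const.add hGc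
  have hWd : ∀ t : ℝ, HasDerivAt W (g t) t := fun t => (hG t).const_add c₀
  have hLc : ContinuousOn L (Set.Ici 0) :=
    ContinuousOn.log hWc.continuousOn (fun t ht => (hWpos t ht).ne')
  have hL : ∀ t > (0:ℝ), HasDerivAt L ((W t)⁻¹ * g t) t := fun t ht =>
    (Real.hasDerivAt_log (hWpos t ht.le).ne').comp t (hWd t)
  -- Z = primitive of z
  set Z : ℝ → ℝ := fun T => ∫ t in (0:ℝ)..T, zb t with hZdef
  have hZ : ∀ t : ℝ, HasDerivAt Z (zb t) t := fun t =>
    (hzbc.integral_hasStrictDerivAt 0 t).hasDerivAt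
  have hZc : Continuous Z := continuous_iff_continuousAt.mpr fun t => (hZ t).continuousAt
  have hZ0 : Z 0 = 0 := by simp [hZdef]
  have hL0 : L 0 = Real.log c₀ := by rw [hLdef, hWdef]; simp [hG0]
  -- monotone comparisons
  have hmono₁ : MonotoneOn (fun T => b₁⁻¹ * L T - Z T) (Set.Ici 0) := by
    apply monotoneOn_of_hasDerivWithinAt_nonneg (convex_Ici 0)
      (f' := fun x => b₁⁻¹ * ((W x)⁻¹ * g x) - zb x)
      ((continuousOn_const.mul hLc).sub hZc.continuousOn)
    · intro x hx
      rw [interior_Ici] at hx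
      exact (((hL x hx).const_mul b₁⁻¹).sub (hZ x)).hasDerivWithinAt
    · intro x hx
      rw [interior_Ici] at hx
      have hgx : g x = b x * μ x := by rw [hgdef]; simp [hbbe x hx.le]
      have hzx : zb x = μ x / W x := by rw [hzbe x hx.le]; exact hkey x (Set.mem_Ici.mpr hx.le)
      rw [sub_nonneg, hzx, hgx]
      have heq : b₁⁻¹ * ((W x)⁻¹ * (b x * μ x)) = (b x / b₁) * (μ x / W x) := by
        field_simp
      rw [heq]
      have h2 : (1:ℝ) ≤ b x / b₁ := (one_le_div hb₁).mpr (hbB x hx.le).1.le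
      have h3 : 0 ≤ μ x / W x := div_nonneg (hμpos x).le (hWpos x hx.le).le
      nlinarith
  have hmono₂ : MonotoneOn (fun T => Z T - b₂⁻¹ * L T) (Set.Ici 0) := by
    apply monotoneOn_of_hasDerivWithinAt_nonneg (convex_Ici 0)
      (f' := fun x => zb x - b₂⁻¹ * ((W x)⁻¹ * g x))
      (hZc.continuousOn.sub (continuousOn_const.mul hLc))
    · intro x hx
      rw [interior_Ici] at hx
      exact ((hZ x).sub ((hL x hx).const_mul b₂⁻¹)).hasDerivWithinAt
    · intro x hx
      rw [interior_Ici] at hx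
      have hgx : g x = b x * μ x := by rw [hgdef]; simp [hbbe x hx.le]
      have hzx : zb x = μ x / W x := by rw [hzbe x hx.le]; exact hkey x (Set.mem_Ici.mpr hx.le)
      rw [sub_nonneg, hzx, hgx]
      have heq : b₂⁻¹ * ((W x)⁻¹ * (b x * μ x)) = (b x / b₂) * (μ x / W x) := by
        field_simp
      rw [heq]
      have h2 : b x / b₂ ≤ 1 := (div_le_one hb₂).mpr (hbB x hx.le).2.le
      have h3 : 0 ≤ μ x / W x := div_nonneg (hμpos x).le (hWpos x hx.le).le
      nlinarith
  have hineq₁ : ∀ T ≥ (0:ℝ), Z T ≤ b₁⁻¹ * (L T - L 0) := by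
    intro T hT
    have h := hmono₁ Set.self_mem_Ici hT hT
    simp only at h
    rw [mul_sub]
    linarith [h, hZ0]
  have hineq₂ : ∀ T ≥ (0:ℝ), b₂⁻¹ * (L T - L 0) ≤ Z T := by
    intro T hT
    have h := hmono₂ Set.self_mem_Ici hT hT
    simp only at h
    rw [mul_sub]
    linarith [h, hZ0]
  -- eventual equalities
  have hZeq : (fun T => ∫ t in (0:ℝ)..T, z t) =ᶠ[atTop] Z := by
    filter_upwards [eventually_ge_atTop (0:ℝ)] with T hT
    rw [hZdef]
    apply intervalIntegral.integral_congr
    intro s hs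
    rw [Set.uIcc_of_le hT] at hs
    exact (hzbe s hs.1).symm
  have hGeq : (fun T => ∫ t in (0:ℝ)..T, b t * Real.exp (∫ s in (0:ℝ)..t, a s)) =ᶠ[atTop] G := by
    filter_upwards [eventually_ge_atTop (0:ℝ)] with T hT
    rw [hGdef]
    apply intervalIntegral.integral_congr
    intro s hs
    rw [Set.uIcc_of_le hT] at hs
    show b s * Real.exp (∫ u in (0:ℝ)..s, a u) = g s
    rw [hgdef]
    show b s * Real.exp (∫ u in (0:ℝ)..s, a u) = bb s * μ s
    rw [hbbe s hs.1, hμdef]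
    show b s * Real.exp (∫ u in (0:ℝ)..s, a u) = b s * Real.exp (Ia s)
    rw [hIae s hs.1]
  rw [tendsto_congr' hZeq, tendsto_congr' hGeq]
  constructor
  · rintro ⟨-, hT⟩
    have h1 : Tendsto (fun T => b₁ * Z T + L 0) atTop atTop :=
      tendsto_atTop_add_const_right _ _ (hT.const_mul_atTop hb₁)
    have hLtend : Tendsto L atTop atTop := by
      apply tendsto_atTop_mono' atTop _ h1
      filter_upwards [eventually_ge_atTop (0:ℝ)] with T hTa
      have h2 := hineq₁ T hTa
      have h3 : b₁ * b₁⁻¹ = 1 := mul_inv_cancel₀ hb₁.ne'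
      have h4 : b₁ * Z T ≤ L T - L 0 := by
        calc b₁ * Z T ≤ b₁ * (b₁⁻¹ * (L T - L 0)) := mul_le_mul_of_nonneg_left h2 hb₁.le
        _ = L T - L 0 := by rw [← mul_assoc, h3, one_mul]
      show b₁ * Z T + L 0 ≤ L T
      linarith
    have hWtend : Tendsto W atTop atTop := by
      apply Tendsto.congr' _ (Real.tendsto_exp_atTop.comp hLtend)
      filter_upwards [eventually_ge_atTop (0:ℝ)] with T hTa
      exact Real.exp_log (hWpos T hTa)
    have h4 : Tendsto (fun T => W T + -c₀) atTop atTop :=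
      tendsto_atTop_add_const_right _ _ hWtend
    apply h4.congr
    intro T
    rw [hWdef]
    ring
  · intro hGt
    refine ⟨⟨M, hbound⟩, ?_⟩
    have hWt : Tendsto W atTop atTop := by
      rw [hWdef]
      exact tendsto_atTop_add_const_left _ _ hGt
    have hLt : Tendsto L atTop atTop := Real.tendsto_log_atTop.comp hWt
    have h1 : Tendsto (fun T => b₂⁻¹ * ((L T + -L 0))) atTop atTop :=
      (tendsto_atTop_add_const_right _ _ hLt).const_mul_atTop (inv_pos.mpr hb₂)
    apply tendsto_atTop_mono' atTop _ h1
    filter_upwards [eventually_ge_atTop (0:ℝ)] with T hTa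
    have := hineq₂ T hTa
    simp only [← sub_eq_add_neg]
    exact this
end

section
/- Let a, b : [0,∞) → ℝ be continuous with a(t) ≤ A and 0 < b₁ < b(t) < b₂ for all t ≥ 0, where A, b₁, b₂ are positive constants. Assume J := ∫₀^∞ b(t) exp(∫₀^t a(s) ds) dt < ∞, and that there exists t₀ ≥ 0 with a(t) ≤ 0 for all t ≥ t₀. Then every differentiable z : [0,∞) → ℝ with z'(t) = a(t)z(t) − b(t)z(t)² for all t ≥ 0 and z(0) > 0 satisfies z(t) → 0 as t → ∞. -/
open Real Filter MeasureTheory Set intervalIntegral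

lemma ftc_Ici {f : ℝ → ℝ} (hf : ContinuousOn f (Set.Ici 0)) {t : ℝ} (ht : 0 ≤ t) :
    HasDerivWithinAt (fun u => ∫ x in (0:ℝ)..u, f x) (f t) (Set.Ici 0) t := by
  have hint : IntervalIntegrable f volume 0 t :=
    (hf.mono (by rw [Set.uIcc_of_le ht]; exact fun x hx => hx.1)).intervalIntegrable
  rcases eq_or_lt_of_le ht with rfl | ht'
  · exact intervalIntegral.integral_hasDerivWithinAt_right (t := Set.Ioi 0) hint
      ⟨Set.Ici 0, Filter.mem_of_superset self_mem_nhdsWithin Set.Ioi_subset_Ici_self,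
        hf.aestronglyMeasurable measurableSet_Ici⟩
      ((hf.continuousWithinAt Set.self_mem_Ici).mono Set.Ioi_subset_Ici_self)
  · have hnb : Set.Ici (0:ℝ) ∈ nhds t := Ici_mem_nhds ht'
    exact (intervalIntegral.integral_hasDerivAt_right hint
      ⟨Set.Ici 0, hnb, hf.aestronglyMeasurable measurableSet_Ici⟩
      ((hf.continuousAt hnb))).hasDerivWithinAt

theorem stmt2 (a b : ℝ → ℝ) (A b₁ b₂ : ℝ)
    (hA : 0 < A) (hb₁ : 0 < b₁) (hb₂ : 0 < b₂)
    (ha : ContinuousOn a (Set.Ici (0:ℝ)))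
    (hb : ContinuousOn b (Set.Ici (0:ℝ)))
    (haA : ∀ t ≥ (0:ℝ), a t ≤ A)
    (hbB : ∀ t ≥ (0:ℝ), b₁ < b t ∧ b t < b₂)
    (hJ : IntegrableOn (fun t => b t * Real.exp (∫ s in (0:ℝ)..t, a s)) (Set.Ioi (0:ℝ)))
    (ht₀ : ∃ t₀ ≥ (0:ℝ), ∀ t ≥ t₀, a t ≤ 0) :
    ∀ z : ℝ → ℝ,
      (∀ t ≥ (0:ℝ), HasDerivWithinAt z (a t * z t - b t * z t ^ 2) (Set.Ici (0:ℝ)) t) →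
      z 0 > 0 →
      Tendsto z atTop (nhds 0) := by
  intro z hz hz0
  set M : ℝ → ℝ := fun t => Real.exp (∫ s in (0:ℝ)..t, a s) with hM
  set c : ℝ := (z 0)⁻¹ with hcdef
  have hc : 0 < c := inv_pos.mpr hz0
  have hMpos : ∀ t, 0 < M t := fun t => Real.exp_pos _
  -- derivative of M
  have hMd : ∀ t ≥ (0:ℝ), HasDerivWithinAt M (a t * M t) (Set.Ici 0) t := by
    intro t ht
    have := (ftc_Ici ha ht).exp
    simpa [hM, mul_comm] using this
  have hMcont : ContinuousOn M (Set.Ici 0) := fun t ht => (hMd t ht).continuousWithinAt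
  have hbMcont : ContinuousOn (fun t => b t * M t) (Set.Ici 0) := hb.mul hMcont
  set F : ℝ → ℝ := fun t => ∫ s in (0:ℝ)..t, b s * M s with hF
  have hFd : ∀ t ≥ (0:ℝ), HasDerivWithinAt F (b t * M t) (Set.Ici 0) t :=
    fun t ht => ftc_Ici hbMcont ht
  have hFcont : ContinuousOn F (Set.Ici 0) := fun t ht => (hFd t ht).continuousWithinAt
  have hFnonneg : ∀ t ≥ (0:ℝ), 0 ≤ F t := by
    intro t ht
    apply intervalIntegral.integral_nonneg ht
    intro u hu
    exact le_of_lt (mul_pos (lt_trans hb₁ (hbB u hu.1).1) (hMpos u))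
  have hden : ∀ t ≥ (0:ℝ), 0 < c + F t := fun t ht => by
    have := hFnonneg t ht; linarith
  set φ : ℝ → ℝ := fun t => M t / (c + F t) with hφ
  have hφcont : ContinuousOn φ (Set.Ici 0) :=
    hMcont.div (continuousOn_const.add hFcont) (fun t ht => (hden t ht).ne')
  have hφd : ∀ t ≥ (0:ℝ), HasDerivWithinAt φ (a t * φ t - b t * φ t ^ 2) (Set.Ici 0) t := by
    intro t ht
    have h := (hMd t ht).div ((hasDerivWithinAt_const t _ c).add (hFd t ht)) (hden t ht).ne'
    refine (h : HasDerivWithinAt φ _ _ _).congr_deriv ?_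
    have h1 : c + F t ≠ 0 := (hden t ht).ne'
    show (a t * M t * (c + F t) - M t * (0 + b t * M t)) / (c + F t) ^ 2 = a t * (M t / (c + F t)) - b t * (M t / (c + F t)) ^ 2
    field_simp [hφ]
    ring
  have hzcont : ContinuousOn z (Set.Ici 0) := fun t ht => (hz t ht).continuousWithinAt
  -- uniqueness: z = φ on Ici 0
  set q : ℝ → ℝ := fun t => a t - b t * (z t + φ t) with hq
  have hqcont : ContinuousOn q (Set.Ici 0) := ha.sub (hb.mul (hzcont.add hφcont))
  set P : ℝ → ℝ := fun t => ∫ s in (0:ℝ)..t, q s with hP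
  have hPd : ∀ t ≥ (0:ℝ), HasDerivWithinAt P (q t) (Set.Ici 0) t :=
    fun t ht => ftc_Ici hqcont ht
  set χ : ℝ → ℝ := fun t => (z t - φ t) * Real.exp (-P t) with hχ
  have hχd : ∀ t ≥ (0:ℝ), HasDerivWithinAt χ 0 (Set.Ici 0) t := by
    intro t ht
    have h := ((hz t ht).sub (hφd t ht)).mul ((hPd t ht).neg.exp)
    refine (h : HasDerivWithinAt χ _ _ _).congr_deriv ?_
    simp only [hq, Pi.sub_apply]
    ring
  have hχ0 : χ 0 = 0 := by
    have hM0 : M 0 = 1 := by simp [hM]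
    have hF0 : F 0 = 0 := by simp [hF]
    have hφ0 : φ 0 = z 0 := by
      simp [hφ, hM0, hF0, hcdef, inv_inv]
    simp [hχ, hφ0]
  have hzφ : ∀ t ≥ (0:ℝ), z t = φ t := by
    intro t ht
    have hconst := constant_of_has_deriv_right_zero
      (f := χ) (a := 0) (b := t)
      (fun u hu => (hχd u hu.1).continuousWithinAt.mono (fun x hx => hx.1))
      (fun u hu => (hχd u hu.1).mono (Set.Ici_subset_Ici.mpr hu.1))
    have := hconst t ⟨ht, le_refl t⟩
    rw [hχ0] at this
    have hexp : Real.exp (-P t) ≠ 0 := (Real.exp_pos _).ne'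
    have : z t - φ t = 0 := by
      by_contra hne
      exact hne (by
        have := mul_eq_zero.mp this
        tauto)
    linarith
  -- integrability of M
  have hMint : IntegrableOn M (Set.Ioi 0) := by
    have hmeas : AEStronglyMeasurable M (volume.restrict (Set.Ioi 0)) :=
      (hMcont.mono Set.Ioi_subset_Ici_self).aestronglyMeasurable measurableSet_Ioi
    apply Integrable.mono' (hJ.const_mul b₁⁻¹) hmeas
    rw [ae_restrict_iff' measurableSet_Ioi]
    filter_upwards with t ht
    have hbt := (hbB t ht.le).1
    have hMt := hMpos t
    rw [Real.norm_of_nonneg hMt.le]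
    show M t ≤ b₁⁻¹ * (b t * M t)
    rw [inv_mul_eq_div, le_div_iff₀ hb₁]
    nlinarith
  obtain ⟨t₀, ht₀0, ht₀a⟩ := ht₀
  -- M is antitone on Ici t₀
  have hAnti : AntitoneOn M (Set.Ici t₀) := by
    apply antitoneOn_of_hasDerivWithinAt_nonpos (convex_Ici t₀)
      (hMcont.mono (Set.Ici_subset_Ici.mpr ht₀0)) (f' := fun x => a x * M x)
    · intro x hx
      rw [interior_Ici] at hx
      exact (hMd x (le_trans ht₀0 hx.le)).mono
        (by rw [interior_Ici]; exact fun y hy => le_trans ht₀0 hy.le)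
    · intro x hx
      rw [interior_Ici] at hx
      exact mul_nonpos_of_nonpos_of_nonneg (ht₀a x hx.le) (hMpos x).le
  set K : ℝ := ∫ s in Set.Ioi (0:ℝ), M s with hK
  -- bound M t ≤ K / (t - t₀) for t > t₀
  have hMbound : ∀ t > t₀, M t * (t - t₀) ≤ K := by
    intro t ht
    have hMi : IntervalIntegrable M volume t₀ t :=
      (hMcont.mono (by rw [Set.uIcc_of_le ht.le]; exact fun x hx => le_trans ht₀0 hx.1)).intervalIntegrable
    have h1 : (t - t₀) * M t ≤ ∫ s in t₀..t, M s := by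
      have := intervalIntegral.integral_mono_on ht.le (intervalIntegrable_const) hMi
        (fun x hx => hAnti hx.1 (le_trans hx.1 hx.2) hx.2)
      simpa using this
    have h2 : ∫ s in t₀..t, M s ≤ K := by
      rw [intervalIntegral.integral_of_le ht.le]
      apply setIntegral_mono_set hMint
      · filter_upwards with x; exact (hMpos x).le
      · exact HasSubset.Subset.eventuallyLE (fun x hx => lt_of_le_of_lt ht₀0 hx.1)
    linarith [h1, h2, mul_comm (M t) (t - t₀)]
  -- squeeze
  have hKc : 0 < c := hc
  apply squeeze_zero' (g := fun t => (K / c) * (t - t₀)⁻¹)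
  · filter_upwards [eventually_ge_atTop (0:ℝ)] with t ht
    rw [hzφ t ht]
    exact div_nonneg (hMpos t).le (hden t ht).le
  · filter_upwards [eventually_ge_atTop (max 0 (t₀ + 1))] with t ht
    have ht0 : (0:ℝ) ≤ t := le_trans (le_max_left _ _) ht
    have htt₀ : t₀ + 1 ≤ t := le_trans (le_max_right _ _) ht
    have htgt : t₀ < t := by linarith
    have hpos : (0:ℝ) < t - t₀ := by linarith
    rw [hzφ t ht0]
    have h1 : φ t ≤ M t / c :=
      div_le_div_of_nonneg_left (hMpos t).le hc (le_add_of_nonneg_right (hFnonneg t ht0))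
    have h2 : M t ≤ K / (t - t₀) := (le_div_iff₀ hpos).mpr (hMbound t htgt)
    have h3 : M t / c ≤ (K / (t - t₀)) / c := (div_le_div_iff_of_pos_right hc).mpr h2
    have h4 : (K / (t - t₀)) / c = (K / c) * (t - t₀)⁻¹ := by ring
    linarith [h1, h3, h4.le, h4.ge]
  · have h1 : Tendsto (fun t : ℝ => t - t₀) atTop atTop :=
      tendsto_atTop_add_const_right _ _ tendsto_id
    have h2 : Tendsto (fun t : ℝ => (t - t₀)⁻¹) atTop (nhds 0) :=
      tendsto_inv_atTop_zero.comp h1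
    have := h2.const_mul (K / c)
    simpa using this
end

section
/- Let a, b : [0,∞) → ℝ be continuous with a(t) ≤ A and 0 < b₁ < b(t) < b₂ for all t ≥ 0, where A, b₁, b₂ are positive constants, and assume ∫₀^∞ b(t) exp(∫₀^t a(s) ds) dt = ∞. Then there is no differentiable z : [0,∞) → ℝ with z'(t) = a(t)z(t) − b(t)z(t)² for all t ≥ 0 and z(0) < 0; that is, every solution with negative initial value goes to −∞ in finite time. -/
open Real Filter MeasureTheory Set intervalIntegral
open Topology

theorem stmt3 (a b : ℝ → ℝ) (A b₁ b₂ : ℝ)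
    (hA : 0 < A) (hb₁ : 0 < b₁) (hb₂ : 0 < b₂)
    (ha : ContinuousOn a (Set.Ici (0:ℝ)))
    (hb : ContinuousOn b (Set.Ici (0:ℝ)))
    (haA : ∀ t ≥ (0:ℝ), a t ≤ A)
    (hbB : ∀ t ≥ (0:ℝ), b₁ < b t ∧ b t < b₂)
    (hJ : Tendsto (fun T => ∫ t in (0:ℝ)..T, b t * Real.exp (∫ s in (0:ℝ)..t, a s))
      atTop atTop) :
    ¬ ∃ z : ℝ → ℝ,
      (∀ t ≥ (0:ℝ), HasDerivWithinAt z (a t * z t - b t * z t ^ 2) (Set.Ici (0:ℝ)) t) ∧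
      z 0 < 0 := by
  rintro ⟨z, hz, hz0⟩
  set I : ℝ → ℝ := fun t => ∫ s in (0:ℝ)..t, a s with hIdef
  set μ : ℝ → ℝ := fun t => Real.exp (I t) with hμdef
  set J : ℝ → ℝ := fun t => ∫ s in (0:ℝ)..t, b s * μ s with hJdef
  have hzc : ContinuousOn z (Ici 0) := fun t ht => (hz t ht).continuousWithinAt
  have hμpos : ∀ t, 0 < μ t := fun t => Real.exp_pos _
  have hμ0 : μ 0 = 1 := by simp [hμdef, hIdef]
  have hJ0 : J 0 = 0 := by simp [hJdef]
  -- continuity of I (hence μ) on any Icc 0 T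
  have haint : ∀ T ≥ (0:ℝ), IntervalIntegrable a volume 0 T := by
    intro T hT
    exact (ha.mono (by rw [uIcc_of_le hT]; exact fun x hx => hx.1)).intervalIntegrable
  have hIc : ∀ T ≥ (0:ℝ), ContinuousOn I (Icc 0 T) := by
    intro T hT
    have := continuousOn_primitive_interval' (haint T hT) (by rw [uIcc_of_le hT]; exact ⟨le_refl _, hT⟩)
    rwa [uIcc_of_le hT] at this
  have hμc : ∀ T ≥ (0:ℝ), ContinuousOn μ (Icc 0 T) := fun T hT =>
    Real.continuous_exp.comp_continuousOn (hIc T hT)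
  have hbμc : ContinuousOn (fun s => b s * μ s) (Ici 0) := by
    intro t ht
    have hIcw : ContinuousWithinAt I (Ici 0) t := by
      have h1 : ContinuousWithinAt I (Icc 0 (t+1)) t := hIc (t+1) (by have : (0:ℝ) ≤ t := ht; linarith) t ⟨ht, by have : (0:ℝ) ≤ t := ht; linarith⟩
      have : Icc (0:ℝ) (t+1) ∈ 𝓝[Ici 0] t := by
        apply mem_nhdsWithin.2
        exact ⟨Iio (t+1), isOpen_Iio, by simpa using lt_add_one t, fun x hx => ⟨hx.2, le_of_lt hx.1⟩⟩
      exact h1.mono_of_mem_nhdsWithin this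
    exact (hb t ht).mul (Real.continuous_exp.continuousAt.comp_continuousWithinAt hIcw)
  have hbμint : ∀ T ≥ (0:ℝ), IntervalIntegrable (fun s => b s * μ s) volume 0 T := by
    intro T hT
    exact (hbμc.mono (by rw [uIcc_of_le hT]; exact fun x hx => hx.1)).intervalIntegrable
  have hJc : ∀ T ≥ (0:ℝ), ContinuousOn J (Icc 0 T) := by
    intro T hT
    have := continuousOn_primitive_interval' (hbμint T hT) (by rw [uIcc_of_le hT]; exact ⟨le_refl _, hT⟩)
    rwa [uIcc_of_le hT] at this
  -- derivatives within Ici x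
  have hIci : ∀ x : ℝ, 0 ≤ x → Ici x ⊆ Ici (0:ℝ) := fun x hx => Ici_subset_Ici.2 hx
  have hI' : ∀ x ≥ (0:ℝ), HasDerivWithinAt I (a x) (Ici x) x := by
    intro x hx
    exact intervalIntegral.integral_hasDerivWithinAt_right (haint x hx)
      ((ha.mono (fun y hy => le_trans hx (le_of_lt hy) : Ioi x ⊆ Ici 0)).stronglyMeasurableAtFilter_nhdsWithin measurableSet_Ioi x)
      ((ha x hx).mono (fun y (hy : y ∈ Ioi x) => le_trans hx (le_of_lt hy) : Ioi x ⊆ Ici 0))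
  have hJ' : ∀ x ≥ (0:ℝ), HasDerivWithinAt J (b x * μ x) (Ici x) x := by
    intro x hx
    have hsub : Ioi x ⊆ Ici (0:ℝ) := fun y hy => le_trans hx (le_of_lt hy)
    exact intervalIntegral.integral_hasDerivWithinAt_right (hbμint x hx)
      ((hbμc.mono hsub).stronglyMeasurableAtFilter_nhdsWithin measurableSet_Ioi x)
      ((hbμc x hx).mono hsub)
  have hμ' : ∀ x ≥ (0:ℝ), HasDerivWithinAt μ (a x * μ x) (Ici x) x := by
    intro x hx
    have := (hI' x hx).exp
    simpa [hμdef, mul_comm] using this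
  set g : ℝ → ℝ := fun t => μ t * (z t)⁻¹ - J t with hgdef
  have hg' : ∀ x ≥ (0:ℝ), z x ≠ 0 → HasDerivWithinAt g 0 (Ici x) x := by
    intro x hx hzx
    have hzx' : HasDerivWithinAt z (a x * z x - b x * z x ^ 2) (Ici x) x :=
      (hz x hx).mono (hIci x hx)
    have hw : HasDerivWithinAt (fun t => (z t)⁻¹)
        (-(a x * z x - b x * z x ^ 2) / z x ^ 2) (Ici x) x := hzx'.inv hzx
    have h1 := ((hμ' x hx).mul hw).sub (hJ' x hx)
    have : a x * μ x * (z x)⁻¹ + μ x * (-(a x * z x - b x * z x ^ 2) / z x ^ 2)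
        - b x * μ x = 0 := by
      field_simp
      ring
    rwa [this] at h1
  -- if z is nonzero on [0,t], then it is negative at t
  have hneg : ∀ t ≥ (0:ℝ), (∀ s ∈ Icc (0:ℝ) t, z s ≠ 0) → z t < 0 := by
    intro t ht hne
    by_contra hge
    push_neg at hge
    have hgt : 0 < z t := lt_of_le_of_ne hge (Ne.symm (hne t ⟨ht, le_refl t⟩))
    have := intermediate_value_Icc ht (hzc.mono (fun s hs => hs.1))
    have h0 : (0:ℝ) ∈ Icc (z 0) (z t) := ⟨le_of_lt hz0, le_of_lt hgt⟩
    obtain ⟨s, hs, hzs⟩ := this h0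
    exact hne s hs hzs
  -- key identity as long as z stays nonzero
  have key : ∀ T ≥ (0:ℝ), (∀ s ∈ Icc (0:ℝ) T, z s ≠ 0) →
      μ T * (z T)⁻¹ = (z 0)⁻¹ + J T := by
    intro T hT hne
    have hgc : ContinuousOn g (Icc 0 T) := by
      apply ContinuousOn.sub _ (hJc T hT)
      exact (hμc T hT).mul ((hzc.mono (fun s hs => hs.1)).inv₀ hne)
    have := constant_of_has_deriv_right_zero hgc
      (fun x hx => hg' x hx.1 (hne x ⟨hx.1, le_of_lt hx.2⟩)) T ⟨hT, le_refl T⟩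
    simp only [hgdef, hμ0, hJ0, one_mul, sub_zero] at this
    linarith [this]
  by_cases hex : ∃ t ≥ (0:ℝ), z t = 0
  · -- z hits zero at some first time t₀; derive contradiction
    set S : Set ℝ := {t | 0 ≤ t ∧ z t = 0} with hSdef
    have hSne : S.Nonempty := by obtain ⟨t, ht, hzt⟩ := hex; exact ⟨t, ht, hzt⟩
    have hSbdd : BddBelow S := ⟨0, fun t ht => ht.1⟩
    have hSclosed : IsClosed S := by
      have : S = Ici 0 ∩ z ⁻¹' {0} := by ext t; simp [hSdef, and_comm]
      rw [this]
      exact hzc.preimage_isClosed_of_isClosed isClosed_Ici isClosed_singleton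
    set t₀ := sInf S with ht₀def
    have ht₀S : t₀ ∈ S := hSclosed.csInf_mem hSne hSbdd
    have ht₀pos : 0 < t₀ := by
      rcases lt_or_eq_of_le ht₀S.1 with h | h
      · exact h
      · exact absurd ht₀S.2 (by rw [← h]; exact ne_of_lt hz0)
    have hne : ∀ s ∈ Ico (0:ℝ) t₀, z s ≠ 0 := by
      intro s hs hzs
      exact absurd (csInf_le hSbdd ⟨hs.1, hzs⟩) (not_le.2 hs.2)
    have hzneg : ∀ s ∈ Ico (0:ℝ) t₀, z s < 0 := by
      intro s hs
      exact hneg s hs.1 (fun u hu => hne u ⟨hu.1, lt_of_le_of_lt hu.2 hs.2⟩)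
    -- minimum of μ on [0, t₀]
    obtain ⟨u, huI, humin⟩ := isCompact_Icc.exists_isMinOn
      (nonempty_Icc.2 (le_of_lt ht₀pos)) (hμc t₀ (le_of_lt ht₀pos))
    set m := μ u with hmdef
    have hmpos : 0 < m := hμpos u
    have hbound : ∀ t ∈ Ico (0:ℝ) t₀, z t ≤ m * z 0 := by
      intro t ht
      have hkey := key t ht.1 (fun u hu => hne u ⟨hu.1, lt_of_le_of_lt hu.2 ht.2⟩)
      have hJnn : 0 ≤ J t := by
        apply intervalIntegral.integral_nonneg ht.1
        intro s hs
        exact le_of_lt (mul_pos (lt_trans hb₁ (hbB s hs.1).1) (hμpos s))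
      have hμm : m ≤ μ t := humin ⟨ht.1, le_of_lt (lt_of_lt_of_le ht.2 (le_refl t₀))⟩
      have hzt : z t < 0 := hzneg t ht
      have h1 : (z 0)⁻¹ ≤ μ t * (z t)⁻¹ := by rw [hkey]; linarith
      have hp : 0 < z t * z 0 := mul_pos_of_neg_of_neg hzt hz0
      have e1 : (z 0)⁻¹ * (z t * z 0) = z t := by
        rw [mul_comm (z t), ← mul_assoc, inv_mul_cancel₀ (ne_of_lt hz0), one_mul]
      have e2 : μ t * (z t)⁻¹ * (z t * z 0) = μ t * z 0 := by
        rw [mul_assoc, ← mul_assoc (z t)⁻¹, inv_mul_cancel₀ (ne_of_lt hzt), one_mul]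
      have h3 := mul_le_mul_of_nonneg_right h1 hp.le
      rw [e1, e2] at h3
      have h4 : μ t * z 0 ≤ m * z 0 := mul_le_mul_of_nonpos_right hμm hz0.le
      linarith
    have hlim : Tendsto z (𝓝[Ico 0 t₀] t₀) (𝓝 (z t₀)) :=
      (hzc t₀ (le_of_lt ht₀pos)).mono (fun s hs => hs.1)
    have : z t₀ ≤ m * z 0 := by
      have hnb : (𝓝[Ico (0:ℝ) t₀] t₀).NeBot := right_nhdsWithin_Ico_neBot ht₀pos
      exact le_of_tendsto hlim (eventually_nhdsWithin_of_forall hbound)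
    rw [ht₀S.2] at this
    nlinarith
  · -- z never vanishes: J is bounded, contradiction with hJ
    push_neg at hex
    obtain ⟨T, hTJ, hT0⟩ := ((hJ.eventually (eventually_gt_atTop (-(z 0)⁻¹))).and
      (eventually_ge_atTop 0)).exists
    have hne : ∀ s ∈ Icc (0:ℝ) T, z s ≠ 0 := fun s hs => hex s hs.1
    have hkey := key T hT0 hne
    have hzT : z T < 0 := hneg T hT0 hne
    have : μ T * (z T)⁻¹ < 0 :=
      mul_neg_of_pos_of_neg (hμpos T) (inv_lt_zero.2 hzT)
    linarith
end

section
/- Let a, b : [0,∞) → ℝ be continuous with a(t) ≤ A and 0 < b₁ < b(t) < b₂ for all t ≥ 0, where A, b₁, b₂ are positive constants, and assume J := ∫₀^∞ b(t) exp(∫₀^t a(s) ds) dt < ∞. Then there is no differentiable z : [0,∞) → ℝ with z'(t) = a(t)z(t) − b(t)z(t)² for all t ≥ 0 and z(0) < −1/J. -/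
open Real Filter MeasureTheory Set intervalIntegral Topology

set_option maxHeartbeats 1000000 in
theorem stmt4 (a b : ℝ → ℝ) (A b₁ b₂ J : ℝ)
    (hA : 0 < A) (hb₁ : 0 < b₁) (hb₂ : 0 < b₂)
    (ha : ContinuousOn a (Set.Ici (0:ℝ)))
    (hb : ContinuousOn b (Set.Ici (0:ℝ)))
    (haA : ∀ t ≥ (0:ℝ), a t ≤ A)
    (hbB : ∀ t ≥ (0:ℝ), b₁ < b t ∧ b t < b₂)
    (hint : IntegrableOn (fun t => b t * Real.exp (∫ s in (0:ℝ)..t, a s)) (Set.Ioi (0:ℝ)))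
    (hJ : J = ∫ t in Set.Ioi (0:ℝ), b t * Real.exp (∫ s in (0:ℝ)..t, a s)) :
    ¬ ∃ z : ℝ → ℝ,
      (∀ t ≥ (0:ℝ), HasDerivWithinAt z (a t * z t - b t * z t ^ 2) (Set.Ici (0:ℝ)) t) ∧
      z 0 < -(1 / J) := by
  rintro ⟨z, hz, hz0⟩
  set μ : ℝ → ℝ := fun t => Real.exp (∫ s in (0:ℝ)..t, a s) with hμdef
  have hμpos : ∀ t, 0 < μ t := fun t => Real.exp_pos _
  -- nonnegativity a.e. of the integrand on Ioi 0
  have hbμpos : ∀ t ≥ (0:ℝ), 0 < b t * μ t := fun t ht =>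
    mul_pos (hb₁.trans (hbB t ht).1) (hμpos t)
  have hae : 0 ≤ᵐ[volume.restrict (Set.Ioi (0:ℝ))] fun t => b t * μ t :=
    (ae_restrict_mem measurableSet_Ioi).mono fun t ht => (hbμpos t (le_of_lt ht)).le
  -- J > 0
  have hJpos : 0 < J := by
    rw [hJ]
    rw [setIntegral_pos_iff_support_of_nonneg_ae hae hint]
    have hsupp : Set.Ioi (0:ℝ) ⊆ Function.support (fun t => b t * μ t) ∩ Set.Ioi 0 :=
      fun t ht => ⟨(hbμpos t (le_of_lt ht)).ne', ht⟩
    calc (0:ENNReal) < volume (Set.Ioi (0:ℝ)) := by simp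
      _ ≤ _ := measure_mono hsupp
  have hz0neg : z 0 < 0 := by
    have h01 : 0 < 1/J := by positivity
    have : -(1/J) < 0 := by linarith
    linarith
  have hzc : ContinuousOn z (Set.Ici 0) := fun t ht => (hz t ht).continuousWithinAt
  -- derivative of the primitive of a
  have haI : ∀ t ≥ (0:ℝ), HasDerivWithinAt (fun u => ∫ s in (0:ℝ)..u, a s) (a t) (Set.Ici 0) t := by
    intro t ht
    set a' : ℝ → ℝ := fun s => a (max s 0) with ha'def
    have hca' : Continuous a' :=
      ha.comp_continuous (continuous_id.max continuous_const) fun x => Set.mem_Ici.mpr (le_max_right _ _)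
    have heq : ∀ u ∈ Set.Ici (0:ℝ), (∫ s in (0:ℝ)..u, a s) = ∫ s in (0:ℝ)..u, a' s := by
      intro u hu
      apply intervalIntegral.integral_congr
      intro s hs
      rw [Set.uIcc_of_le hu] at hs
      simp [ha'def, max_eq_left hs.1]
    have hd : HasDerivAt (fun u => ∫ s in (0:ℝ)..u, a' s) (a' t) t :=
      intervalIntegral.integral_hasDerivAt_right (hca'.intervalIntegrable 0 t)
        hca'.aestronglyMeasurable.stronglyMeasurableAtFilter hca'.continuousAt
    have ha't : a' t = a t := by simp [ha'def, max_eq_left ht]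
    rw [ha't] at hd
    exact hd.hasDerivWithinAt.congr heq (heq t ht)
  have hμd : ∀ t ≥ (0:ℝ), HasDerivWithinAt μ (a t * μ t) (Set.Ici 0) t := by
    intro t ht
    simpa [hμdef, mul_comm] using (haI t ht).exp
  have hμc : ContinuousOn μ (Set.Ici 0) := fun t ht => (hμd t ht).continuousWithinAt
  -- derivative of μ / z
  have hφd : ∀ t ≥ (0:ℝ), z t ≠ 0 →
      HasDerivWithinAt (fun u => μ u / z u) (b t * μ t) (Set.Ici 0) t := by
    intro t ht hzt
    have h := (hμd t ht).div (hz t ht) hzt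
    refine h.congr_deriv ?_
    rw [div_eq_iff (pow_ne_zero 2 hzt)]
    ring
  -- FTC on intervals where z < 0
  have key : ∀ t ≥ (0:ℝ), (∀ s ∈ Set.Icc (0:ℝ) t, z s < 0) →
      μ t / z t - 1 / z 0 = ∫ s in (0:ℝ)..t, b s * μ s := by
    intro t ht hneg
    have hsub : Set.Icc (0:ℝ) t ⊆ Set.Ici 0 := fun s hs => hs.1
    have hcont : ContinuousOn (fun u => μ u / z u) (Set.Icc 0 t) :=
      (hμc.mono hsub).div (hzc.mono hsub) fun s hs => (hneg s hs).ne
    have hderiv : ∀ x ∈ Set.Ioo (0:ℝ) t,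
        HasDerivWithinAt (fun u => μ u / z u) (b x * μ x) (Set.Ioi x) x := fun x hx =>
      (hφd x hx.1.le (hneg x ⟨hx.1.le, hx.2.le⟩).ne).mono fun y hy =>
        le_trans hx.1.le (le_of_lt hy)
    have hii : IntervalIntegrable (fun s => b s * μ s) volume 0 t := by
      apply ContinuousOn.intervalIntegrable
      rw [Set.uIcc_of_le ht]
      exact (hb.mono hsub).mul (hμc.mono hsub)
    have hft := intervalIntegral.integral_eq_sub_of_hasDeriv_right_of_le ht hcont hderiv hii
    have hμ0 : μ 0 = 1 := by simp [hμdef]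
    rw [hft, hμ0]
  have hnonneg : ∀ t ≥ (0:ℝ), 0 ≤ ∫ s in (0:ℝ)..t, b s * μ s := fun t ht =>
    intervalIntegral.integral_nonneg ht fun s hs => (hbμpos s hs.1).le
  have hleJ : ∀ t ≥ (0:ℝ), (∫ s in (0:ℝ)..t, b s * μ s) ≤ J := by
    intro t ht
    rw [hJ, intervalIntegral.integral_of_le ht]
    exact setIntegral_mono_set hint hae Set.Ioc_subset_Ioi_self.eventuallyLE
  by_cases hcase : ∀ t ≥ (0:ℝ), z t < 0
  · -- z always negative: μ t / z t - 1/z0 = ∫₀^t b μ → J, but LHS < -1/z0 < J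
    have hlim : Tendsto (fun n : ℕ => ∫ s in Set.Ioc (0:ℝ) (n:ℝ), b s * μ s) atTop (𝓝 J) := by
      rw [hJ]
      have hU : (⋃ n : ℕ, Set.Ioc (0:ℝ) (n:ℝ)) = Set.Ioi 0 := by
        ext x
        simp only [Set.mem_iUnion, Set.mem_Ioc, Set.mem_Ioi]
        exact ⟨fun ⟨n, h1, _⟩ => h1, fun hx => (exists_nat_ge x).imp fun n hn => ⟨hx, hn⟩⟩
      have hint' : IntegrableOn (fun t => b t * μ t) (⋃ n : ℕ, Set.Ioc (0:ℝ) (n:ℝ)) := by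
        rw [hU]; exact hint
      have h := tendsto_setIntegral_of_monotone (fun n : ℕ => measurableSet_Ioc)
        (fun m n hmn => Set.Ioc_subset_Ioc_right (by exact_mod_cast hmn)) hint'
      rwa [hU] at h
    have hbnd : ∀ n : ℕ, (∫ s in Set.Ioc (0:ℝ) (n:ℝ), b s * μ s) ≤ -(1 / z 0) := by
      intro n
      have hn0 : (0:ℝ) ≤ n := Nat.cast_nonneg n
      have h := key n hn0 fun s hs => hcase s hs.1
      rw [← intervalIntegral.integral_of_le hn0, ← h]
      have : μ n / z n < 0 := div_neg_of_pos_of_neg (hμpos n) (hcase n hn0)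
      linarith
    have hJle : J ≤ -(1 / z 0) := le_of_tendsto hlim (Eventually.of_forall hbnd)
    have hlt : -(1 / z 0) < J := by
      have h1 : z 0 * J < -1 := by
        have := mul_lt_mul_of_pos_right hz0 hJpos
        rw [neg_mul, one_div, inv_mul_cancel₀ hJpos.ne'] at this
        linarith
      rw [neg_lt, lt_div_iff_of_neg hz0neg]
      nlinarith
    linarith
  · -- z vanishes somewhere
    push_neg at hcase
    obtain ⟨t₀, ht₀, hzt₀⟩ := hcase
    have hzero : ∃ s ∈ Set.Icc (0:ℝ) t₀, z s = 0 := by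
      have := intermediate_value_Icc ht₀ (hzc.mono fun s hs => hs.1)
      have h0 : (0:ℝ) ∈ Set.Icc (z 0) (z t₀) := ⟨hz0neg.le, hzt₀⟩
      obtain ⟨s, hs, hzs⟩ := this h0
      exact ⟨s, hs, hzs⟩
    obtain ⟨s₀, hs₀, hzs₀⟩ := hzero
    set S : Set ℝ := Set.Ici 0 ∩ z ⁻¹' {0} with hSdef
    have hSne : S.Nonempty := ⟨s₀, hs₀.1, hzs₀⟩
    have hSbd : BddBelow S := ⟨0, fun x hx => hx.1⟩
    have hSclosed : IsClosed S :=
      hzc.preimage_isClosed_of_isClosed isClosed_Ici isClosed_singleton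
    set T : ℝ := sInf S with hTdef
    have hTS : T ∈ S := hSclosed.csInf_mem hSne hSbd
    have hT0 : 0 ≤ T := hTS.1
    have hzT : z T = 0 := hTS.2
    have hTpos : 0 < T := by
      rcases eq_or_lt_of_le hT0 with h | h
      · rw [← h] at hzT; linarith
      · exact h
    have hnegT : ∀ t ∈ Set.Ico (0:ℝ) T, z t < 0 := by
      intro t ⟨ht0, htT⟩
      by_contra h
      push_neg at h
      have := intermediate_value_Icc ht0 (hzc.mono fun s hs => hs.1)
      obtain ⟨s, hs, hzs⟩ := this ⟨hz0neg.le, h⟩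
      have : T ≤ s := csInf_le hSbd ⟨hs.1, hzs⟩
      linarith [hs.2]
    obtain ⟨x₀, hx₀, hmin⟩ := (isCompact_Icc : IsCompact (Set.Icc (0:ℝ) T)).exists_isMinOn
      ⟨0, le_refl 0, hT0⟩ (hμc.mono fun s hs => hs.1)
    have hbound : ∀ t ∈ Set.Ico (0:ℝ) T, z t ≤ z 0 * μ x₀ := by
      intro t ⟨ht0, htT⟩
      have hneg' : ∀ s ∈ Set.Icc (0:ℝ) t, z s < 0 := fun s hs =>
        hnegT s ⟨hs.1, lt_of_le_of_lt hs.2 htT⟩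
      have hk := key t ht0 hneg'
      have hI0 := hnonneg t ht0
      have h1 : 1 / z 0 ≤ μ t / z t := by linarith
      have hzt : z t < 0 := hneg' t ⟨ht0, le_refl t⟩
      have h2 : μ t ≤ z t / z 0 := by
        have := mul_le_mul_of_nonpos_right h1 hzt.le
        rwa [div_mul_cancel₀ _ hzt.ne, one_div, inv_mul_eq_div] at this
      have h3 : z t ≤ z 0 * μ t := by
        have := mul_le_mul_of_nonpos_right h2 hz0neg.le
        rwa [div_mul_cancel₀ _ hz0neg.ne, mul_comm] at this
      have h4 : z 0 * μ t ≤ z 0 * μ x₀ :=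
        mul_le_mul_of_nonpos_left (hmin ⟨ht0, htT.le⟩) hz0neg.le
      linarith
    have hC : z 0 * μ x₀ < 0 := mul_neg_of_neg_of_pos hz0neg (hμpos x₀)
    have hclosed : IsClosed (Set.Icc (0:ℝ) T ∩ z ⁻¹' Set.Iic (z 0 * μ x₀)) :=
      (hzc.mono fun s hs => hs.1).preimage_isClosed_of_isClosed isClosed_Icc isClosed_Iic
    have hsub : Set.Ico (0:ℝ) T ⊆ Set.Icc (0:ℝ) T ∩ z ⁻¹' Set.Iic (z 0 * μ x₀) :=
      fun t ht => ⟨⟨ht.1, ht.2.le⟩, hbound t ht⟩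
    have hTcl : T ∈ closure (Set.Ico (0:ℝ) T) := by
      rw [closure_Ico hTpos.ne]
      exact ⟨hT0, le_refl T⟩
    have hTmem : T ∈ Set.Icc (0:ℝ) T ∩ z ⁻¹' Set.Iic (z 0 * μ x₀) :=
      hclosed.closure_subset ((closure_mono hsub) hTcl)
    have := hTmem.2
    simp only [Set.mem_preimage, Set.mem_Iic] at this
    linarith [hzT ▸ this]
end

section
/- Let a, b : [0,∞) → ℝ be continuous with a(t) ≤ A and 0 < b₁ < b(t) < b₂ for all t ≥ 0, where A, b₁, b₂ are positive constants, and assume J := ∫₀^∞ b(t) exp(∫₀^t a(s) ds) dt < ∞. Let z₀ ∈ [−1/J, 0) and set c = 1/z₀. Then c + ∫₀^t b(s)μ(s) ds < 0 for all t ≥ 0 (where μ(t) = exp(∫₀^t a(s) ds)), and the function z(t) = μ(t)/(c + ∫₀^t b(s)μ(s) ds) is a differentiable negative solution of z'(t) = a(t)z(t) − b(t)z(t)² on all of [0,∞) with z(0) = z₀. -/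
open Real Filter MeasureTheory Set intervalIntegral

private lemma primitive_hasDeriv {f : ℝ → ℝ} (hf : ContinuousOn f (Set.Ici 0))
    (hfi : ∀ t ≥ (0:ℝ), IntervalIntegrable f volume 0 t) :
    ∀ t ≥ (0:ℝ), HasDerivWithinAt (fun u => ∫ s in (0:ℝ)..u, f s) (f t) (Set.Ici 0) t := by
  intro t ht
  have hmeas : AEStronglyMeasurable f (volume.restrict (Set.Ioi 0)) :=
    (hf.mono Set.Ioi_subset_Ici_self).aestronglyMeasurable measurableSet_Ioi
  rcases eq_or_lt_of_le ht with h0 | h0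
  · subst h0
    exact intervalIntegral.integral_hasDerivWithinAt_right (hfi 0 le_rfl)
      ⟨Set.Ioi 0, self_mem_nhdsWithin, hmeas⟩
      ((hf 0 Set.self_mem_Ici).mono Set.Ioi_subset_Ici_self)
  · exact (intervalIntegral.integral_hasDerivAt_right (hfi t ht)
      ⟨Set.Ioi 0, Ioi_mem_nhds h0, hmeas⟩
      (hf.continuousAt (Ici_mem_nhds h0))).hasDerivWithinAt

theorem stmt5 (a b : ℝ → ℝ) (A b₁ b₂ J z₀ : ℝ)
    (hA : 0 < A) (hb₁ : 0 < b₁) (hb₂ : 0 < b₂)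
    (ha : ContinuousOn a (Set.Ici (0:ℝ)))
    (hb : ContinuousOn b (Set.Ici (0:ℝ)))
    (haA : ∀ t ≥ (0:ℝ), a t ≤ A)
    (hbB : ∀ t ≥ (0:ℝ), b₁ < b t ∧ b t < b₂)
    (hint : IntegrableOn (fun t => b t * Real.exp (∫ s in (0:ℝ)..t, a s)) (Set.Ioi (0:ℝ)))
    (hJ : J = ∫ t in Set.Ioi (0:ℝ), b t * Real.exp (∫ s in (0:ℝ)..t, a s))
    (hz₀ : z₀ ∈ Set.Ico (-(1 / J)) 0) :
    (∀ t ≥ (0:ℝ),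
      1 / z₀ + (∫ s in (0:ℝ)..t, b s * Real.exp (∫ u in (0:ℝ)..s, a u)) < 0) ∧
    (∀ t ≥ (0:ℝ),
      HasDerivWithinAt
        (fun t => Real.exp (∫ s in (0:ℝ)..t, a s) /
          (1 / z₀ + ∫ s in (0:ℝ)..t, b s * Real.exp (∫ u in (0:ℝ)..s, a u)))
        (a t * (Real.exp (∫ s in (0:ℝ)..t, a s) /
            (1 / z₀ + ∫ s in (0:ℝ)..t, b s * Real.exp (∫ u in (0:ℝ)..s, a u))) -
          b t * (Real.exp (∫ s in (0:ℝ)..t, a s) /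
            (1 / z₀ + ∫ s in (0:ℝ)..t, b s * Real.exp (∫ u in (0:ℝ)..s, a u))) ^ 2)
        (Set.Ici (0:ℝ)) t) ∧
    (∀ t ≥ (0:ℝ),
      Real.exp (∫ s in (0:ℝ)..t, a s) /
        (1 / z₀ + ∫ s in (0:ℝ)..t, b s * Real.exp (∫ u in (0:ℝ)..s, a u)) < 0) ∧
    Real.exp (∫ s in (0:ℝ)..(0:ℝ), a s) /
      (1 / z₀ + ∫ s in (0:ℝ)..(0:ℝ), b s * Real.exp (∫ u in (0:ℝ)..s, a u)) = z₀ := by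
  obtain ⟨hz₀1, hz₀2⟩ := hz₀
  set g : ℝ → ℝ := fun s => b s * Real.exp (∫ u in (0:ℝ)..s, a u) with hg
  set F : ℝ → ℝ := fun t => ∫ s in (0:ℝ)..t, g s with hF
  -- interval integrability of a and derivative of its primitive
  have ha_int : ∀ t ≥ (0:ℝ), IntervalIntegrable a volume 0 t := fun t ht =>
    (ha.mono (by rw [Set.uIcc_of_le ht]; exact Set.Icc_subset_Ici_self)).intervalIntegrable
  have hI := primitive_hasDeriv ha ha_int
  have hIcont : ContinuousOn (fun u => ∫ s in (0:ℝ)..u, a s) (Set.Ici 0) :=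
    fun t ht => (hI t ht).continuousWithinAt
  have hgcont : ContinuousOn g (Set.Ici 0) :=
    hb.mul (Real.continuous_exp.comp_continuousOn hIcont)
  have hg_int : ∀ t ≥ (0:ℝ), IntervalIntegrable g volume 0 t := fun t ht =>
    (hgcont.mono (by rw [Set.uIcc_of_le ht]; exact Set.Icc_subset_Ici_self)).intervalIntegrable
  have hFd := primitive_hasDeriv hgcont hg_int
  have hgpos : ∀ s > (0:ℝ), 0 < g s := fun s hs =>
    mul_pos (hb₁.trans (hbB s hs.le).1) (Real.exp_pos _)
  -- F t < J for all t ≥ 0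
  have hFJ : ∀ t ≥ (0:ℝ), F t < J := by
    intro t ht
    have h1 : IntegrableOn g (Set.Ioc 0 t) := hint.mono_set Set.Ioc_subset_Ioi_self
    have h2 : IntegrableOn g (Set.Ioi t) := hint.mono_set (Set.Ioi_subset_Ioi ht)
    have hsplit : J = (∫ s in Set.Ioc 0 t, g s) + ∫ s in Set.Ioi t, g s := by
      rw [hJ, ← MeasureTheory.setIntegral_union (Set.Ioc_disjoint_Ioi le_rfl)
        measurableSet_Ioi h1 h2, Set.Ioc_union_Ioi_eq_Ioi ht]
    have htail : 0 < ∫ s in Set.Ioi t, g s := by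
      rw [MeasureTheory.setIntegral_pos_iff_support_of_nonneg_ae ?_ h2]
      · have hsub : Set.Ioi t ⊆ Function.support g ∩ Set.Ioi t := fun s hs =>
          ⟨(hgpos s (lt_of_le_of_lt ht hs)).ne', hs⟩
        calc (0:ENNReal) < volume (Set.Ioi t) := by
              rw [Real.volume_Ioi]; exact ENNReal.zero_lt_top
          _ ≤ _ := measure_mono hsub
      · filter_upwards [ae_restrict_mem measurableSet_Ioi] with s hs
        exact (hgpos s (lt_of_le_of_lt ht hs)).le
    have : F t = ∫ s in Set.Ioc 0 t, g s := intervalIntegral.integral_of_le ht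
    rw [this, hsplit]
    linarith
  have hF0 : F 0 = 0 := intervalIntegral.integral_same
  have hJpos : 0 < J := hF0 ▸ hFJ 0 le_rfl
  have hcJ : 1 / z₀ ≤ -J := by
    have h := one_div_le_one_div_of_neg_of_le hz₀2 hz₀1
    rwa [one_div_neg_eq_neg_one_div, one_div_one_div] at h
  have hneg : ∀ t ≥ (0:ℝ), 1 / z₀ + F t < 0 := by
    intro t ht
    have := hFJ t ht
    linarith
  refine ⟨hneg, ?_, ?_, ?_⟩
  · intro t ht
    have hD : 1 / z₀ + F t ≠ 0 := (hneg t ht).ne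
    have hμd : HasDerivWithinAt (fun u => Real.exp (∫ s in (0:ℝ)..u, a s))
        (Real.exp (∫ s in (0:ℝ)..t, a s) * a t) (Set.Ici 0) t :=
      (Real.hasDerivAt_exp _).comp_hasDerivWithinAt t (hI t ht)
    have hDd : HasDerivWithinAt (fun u => 1 / z₀ + F u) (g t) (Set.Ici 0) t :=
      (hFd t ht).const_add _
    have hq := hμd.div hDd hD
    refine hq.congr_deriv ?_
    simp only [hF, hg] at hD ⊢
    field_simp
  · intro t ht
    exact div_neg_of_pos_of_neg (Real.exp_pos _) (hneg t ht)
  · have : F 0 = 0 := hF0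
    rw [intervalIntegral.integral_same, Real.exp_zero]
    change (1:ℝ) / (1 / z₀ + F 0) = z₀
    rw [hF0, add_zero, one_div_one_div]
end

section
/- Let a, b : [0,∞) → ℝ be continuous with a(t) ≤ A and 0 < b₁ < b(t) < b₂ for all t ≥ 0, where A, b₁, b₂ are positive constants, and assume J := ∫₀^∞ b(t) exp(∫₀^t a(s) ds) dt < ∞. Then the solution z(t) = μ(t)/(−J + ∫₀^t b(s)μ(s) ds) of z'(t) = a(t)z(t) − b(t)z(t)², with z(0) = −1/J and μ(t) = exp(∫₀^t a(s) ds), satisfies ∫₀^∞ z(t) dt = −∞; in particular this solution is separated from the zero solution. -/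
open Real Filter MeasureTheory Set intervalIntegral

open Topology

theorem stmt6 (a b : ℝ → ℝ) (A b₁ b₂ J : ℝ)
    (hA : 0 < A) (hb₁ : 0 < b₁) (hb₂ : 0 < b₂)
    (ha : ContinuousOn a (Set.Ici (0:ℝ)))
    (hb : ContinuousOn b (Set.Ici (0:ℝ)))
    (haA : ∀ t ≥ (0:ℝ), a t ≤ A)
    (hbB : ∀ t ≥ (0:ℝ), b₁ < b t ∧ b t < b₂)
    (hint : IntegrableOn (fun t => b t * Real.exp (∫ s in (0:ℝ)..t, a s)) (Set.Ioi (0:ℝ)))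
    (hJ : J = ∫ t in Set.Ioi (0:ℝ), b t * Real.exp (∫ s in (0:ℝ)..t, a s))
    (z : ℝ → ℝ)
    (hz : ∀ t ≥ (0:ℝ), z t = Real.exp (∫ s in (0:ℝ)..t, a s) /
      (-J + ∫ s in (0:ℝ)..t, b s * Real.exp (∫ u in (0:ℝ)..s, a u))) :
    Tendsto (fun T => ∫ t in (0:ℝ)..T, z t) atTop atBot := by
  set m : ℝ → ℝ := fun t => Real.exp (∫ s in (0:ℝ)..t, a s) with hm
  set g : ℝ → ℝ := fun t => b t * m t with hgdef
  set F : ℝ → ℝ := fun T => ∫ s in (0:ℝ)..T, g s with hFdef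
  have hmpos : ∀ t, 0 < m t := fun t => Real.exp_pos _
  -- interval integrability of g on [0, x] for x ≥ 0
  have hgii : ∀ x : ℝ, 0 ≤ x → IntervalIntegrable g volume 0 x := by
    intro x hx
    rw [intervalIntegrable_iff_integrableOn_Ioc_of_le hx]
    exact hint.mono_set Ioc_subset_Ioi_self
  -- continuity of m on Ici 0
  have haint : ∀ x : ℝ, 0 ≤ x → IntervalIntegrable a volume 0 x := by
    intro x hx
    exact (ha.mono (by rw [uIcc_of_le hx]; exact Icc_subset_Ici_self)).intervalIntegrable
  have hmcont : ContinuousOn m (Ici 0) := by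
    apply Real.continuous_exp.comp_continuousOn
    intro x hx
    have hx0 : (0:ℝ) ≤ x := hx
    -- continuity within Ici 0 at x: use continuity on Icc 0 (x+1)
    have h1 : ContinuousOn (fun t => ∫ s in (0:ℝ)..t, a s) (Icc 0 (x+1)) := by
      have := continuousOn_primitive_interval (f := a) (μ := volume) (a := 0) (b := x+1)
        (by
          rw [uIcc_of_le (by linarith)]
          exact (ha.mono Icc_subset_Ici_self).integrableOn_compact isCompact_Icc)
      rwa [uIcc_of_le (by linarith)] at this
    have hxmem : x ∈ Icc (0:ℝ) (x+1) := ⟨hx0, by linarith⟩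
    refine (h1 x hxmem).mono_of_mem_nhdsWithin ?_
    rw [← Ici_inter_Iic]
    exact inter_mem self_mem_nhdsWithin
      (mem_nhdsWithin_of_mem_nhds (Iic_mem_nhds (by linarith)))
  have hint' : IntegrableOn g (Ioi 0) := hint
  have hJ' : J = ∫ t in Ioi (0:ℝ), g t := hJ
  have hz' : ∀ t ≥ (0:ℝ), z t = m t / (-J + F t) := hz
  have hgpos : ∀ t, 0 ≤ t → 0 < g t := fun t ht =>
    mul_pos (hb₁.trans (hbB t ht).1) (hmpos t)
  -- continuity of F on Ici 0
  have hFcont : ContinuousOn F (Ici 0) := by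
    intro x hx
    have hx0 : (0:ℝ) ≤ x := hx
    have h1 : ContinuousOn F (Icc 0 (x+1)) := by
      have := continuousOn_primitive_interval' (hgii (x+1) (by linarith)) left_mem_uIcc
      rwa [uIcc_of_le (by linarith : (0:ℝ) ≤ x+1)] at this
    refine (h1 x ⟨hx0, by linarith⟩).mono_of_mem_nhdsWithin ?_
    rw [← Ici_inter_Iic]
    exact inter_mem self_mem_nhdsWithin
      (mem_nhdsWithin_of_mem_nhds (Iic_mem_nhds (by linarith)))
  -- positivity of tails
  have htail : ∀ T : ℝ, 0 ≤ T → 0 < ∫ t in Ioi T, g t := by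
    intro T hT
    have hi : IntegrableOn g (Ioi T) := hint'.mono_set (Ioi_subset_Ioi hT)
    refine (setIntegral_pos_iff_support_of_nonneg_ae ?_ hi).mpr ?_
    · filter_upwards [self_mem_ae_restrict measurableSet_Ioi] with x hx
      exact (hgpos x (hT.trans hx.le)).le
    · have hsub : Ioi T ⊆ Function.support g ∩ Ioi T := fun x hx =>
        ⟨ne_of_gt (hgpos x (hT.trans hx.le)), hx⟩
      have : volume (Ioi T) ≤ volume (Function.support g ∩ Ioi T) := measure_mono hsub
      rw [Real.volume_Ioi] at this
      exact lt_of_lt_of_le (by simp) this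
  -- split of J
  have hsplit : ∀ T, 0 ≤ T → J = F T + ∫ t in Ioi T, g t := by
    intro T hT
    have hu : Ioc 0 T ∪ Ioi T = Ioi (0:ℝ) := Ioc_union_Ioi_eq_Ioi hT
    rw [hJ', ← hu, setIntegral_union (Ioc_disjoint_Ioi le_rfl) measurableSet_Ioi
      (hint'.mono_set (by rw [← hu]; exact subset_union_left))
      (hint'.mono_set (by rw [← hu]; exact subset_union_right))]
    rw [hFdef]
    simp [intervalIntegral.integral_of_le hT]
  have hFJ : ∀ T, 0 ≤ T → F T < J := by
    intro T hT
    have h1 := htail T hT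
    have h2 := hsplit T hT
    linarith
  -- continuity of z-formula, hence integrability of z
  have hzfcont : ContinuousOn (fun t => m t / (-J + F t)) (Ici 0) := by
    refine hmcont.div (continuousOn_const.add hFcont) ?_
    intro x hx
    have := hFJ x hx
    intro h
    linarith [neg_add_eq_iff_eq_add.mp h]
  have hzcont : ∀ T : ℝ, 0 ≤ T → ContinuousOn z (Icc 0 T) := by
    intro T hT
    exact (hzfcont.mono Icc_subset_Ici_self).congr fun x hx => hz' x hx.1
  have hzii : ∀ T : ℝ, 0 ≤ T → IntervalIntegrable z volume 0 T := by
    intro T hT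
    apply ContinuousOn.intervalIntegrable
    rw [uIcc_of_le hT]
    exact hzcont T hT
  have hbzii : ∀ T : ℝ, 0 ≤ T → IntervalIntegrable (fun t => b t * z t) volume 0 T := by
    intro T hT
    apply ContinuousOn.intervalIntegrable
    rw [uIcc_of_le hT]
    exact (hb.mono Icc_subset_Ici_self).mul (hzcont T hT)
  -- derivative of F
  have hFderiv : ∀ x : ℝ, 0 < x → HasDerivAt F (g x) x := by
    intro x hx
    have hgcont : ContinuousOn g (Ioi 0) := fun y hy =>
      (((hb y (mem_Ici.2 hy.le)).mul (hmcont y (mem_Ici.2 hy.le))).mono (Ioi_subset_Ici_self))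
    have hcg : ContinuousAt g x :=
      (hgcont x hx).continuousAt (Ioi_mem_nhds hx)
    exact intervalIntegral.integral_hasDerivAt_right (hgii x hx.le)
      (hgcont.stronglyMeasurableAtFilter isOpen_Ioi x hx) hcg
  -- fundamental identity
  have key : ∀ T : ℝ, 0 ≤ T →
      (∫ t in (0:ℝ)..T, b t * z t) = Real.log (J - F T) - Real.log J := by
    intro T hT
    have hF0 : F 0 = 0 := intervalIntegral.integral_same
    have hcont : ContinuousOn (fun t => Real.log (J - F t)) (Icc 0 T) := by
      refine ContinuousOn.log (continuousOn_const.sub (hFcont.mono Icc_subset_Ici_self)) ?_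
      intro x hx
      exact ne_of_gt (sub_pos.2 (hFJ x hx.1))
    have hderiv : ∀ x ∈ Ioo (0:ℝ) T,
        HasDerivWithinAt (fun t => Real.log (J - F t)) (b x * z x) (Ioi x) x := by
      intro x hx
      have hd : HasDerivAt (fun t => J - F t) (-(g x)) x := (hFderiv x hx.1).const_sub J
      have hne : J - F x ≠ 0 := ne_of_gt (sub_pos.2 (hFJ x hx.1.le))
      have hlog := hd.log hne
      have heq : -(g x) / (J - F x) = b x * z x := by
        rw [hz' x hx.1.le, hgdef]
        have h2 : -J + F x ≠ 0 := by
          intro h; apply hne; linarith [neg_add_eq_iff_eq_add.mp h]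
        field_simp
        ring
      rw [heq] at hlog
      exact hlog.hasDerivWithinAt
    have := intervalIntegral.integral_eq_sub_of_hasDeriv_right_of_le hT hcont hderiv
      (hbzii T hT)
    rw [this, hF0, sub_zero]
  -- the inequality
  have hineq : ∀ T : ℝ, 0 ≤ T →
      (∫ t in (0:ℝ)..T, z t) ≤ b₂⁻¹ * (Real.log (J - F T) - Real.log J) := by
    intro T hT
    rw [← key T hT, ← intervalIntegral.integral_const_mul]
    refine intervalIntegral.integral_mono_on hT (hzii T hT)
      ((hbzii T hT).const_mul b₂⁻¹) ?_
    intro x hx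
    have hzneg : z x < 0 := by
      rw [hz' x hx.1]
      apply div_neg_of_pos_of_neg (hmpos x)
      have := hFJ x hx.1
      linarith
    have hbx : b x < b₂ := (hbB x hx.1).2
    rw [inv_mul_eq_div, le_div_iff₀ hb₂]
    nlinarith
  -- limits
  have hFlim : Tendsto F atTop (𝓝 J) := by
    rw [hJ']
    exact intervalIntegral_tendsto_integral_Ioi 0 hint' tendsto_id
  have h1 : Tendsto (fun T => J - F T) atTop (𝓝[>] 0) := by
    apply tendsto_nhdsWithin_of_tendsto_nhds_of_eventually_within
    · have hc : Tendsto (fun T => J - F T) atTop (𝓝 (J - J)) :=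
        tendsto_const_nhds.sub hFlim
      simpa using hc
    · filter_upwards [eventually_ge_atTop (0:ℝ)] with T hT
      exact sub_pos.2 (hFJ T hT)
  have h2 : Tendsto (fun T => Real.log (J - F T)) atTop atBot :=
    Real.tendsto_log_nhdsGT_zero.comp h1
  have h3 : Tendsto (fun T => b₂⁻¹ * (Real.log (J - F T) - Real.log J)) atTop atBot := by
    apply Tendsto.const_mul_atBot (inv_pos.2 hb₂)
    simpa [sub_eq_add_neg] using tendsto_atBot_add_const_right atTop (-Real.log J) h2
  refine tendsto_atBot_mono' atTop ?_ h3
  filter_upwards [eventually_ge_atTop (0:ℝ)] with T hT using hineq T hT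
end

section
/- Let a, b : [0,∞) → ℝ be continuous with a(t) ≤ A and 0 < b₁ < b(t) < b₂ for all t ≥ 0, where A, b₁, b₂ are positive constants. Assume J := ∫₀^∞ b(t) exp(∫₀^t a(s) ds) dt < ∞, that a(t) ≤ 0 for all sufficiently large t, and that a(t) → 0 as t → ∞. Then every differentiable z : [0,∞) → ℝ with z'(t) = a(t)z(t) − b(t)z(t)² for all t ≥ 0 and z(0) ∈ [−1/J, 0) satisfies z(t) → 0 as t → ∞. -/
open Real Filter MeasureTheory Set intervalIntegral

theorem my_gronwall {f f' : ℝ → ℝ} {δ K ε : ℝ} {a b : ℝ}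
    (hf : ContinuousOn f (Icc a b))
    (hf' : ∀ x ∈ Ico a b, HasDerivWithinAt f (f' x) (Ici x) x)
    (ha : f a ≤ δ) (bound : ∀ x ∈ Ico a b, f' x ≤ K * f x + ε) :
    ∀ x ∈ Icc a b, f x ≤ gronwallBound δ K ε (x - a) :=
  le_gronwallBound_of_liminf_deriv_right_le hf
    (fun x hx r hr => ((hf' x hx).liminf_right_slope_le hr).mono
      (fun z hz => by rwa [slope_def_field, div_eq_inv_mul] at hz)) ha bound

theorem step1 (a b : ℝ → ℝ) (A b₁ : ℝ) (hb₁ : 0 < b₁)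
    (haA : ∀ t ≥ (0:ℝ), a t ≤ A)
    (hbB : ∀ t ≥ (0:ℝ), b₁ < b t)
    (z : ℝ → ℝ)
    (hz : ∀ t ≥ (0:ℝ), HasDerivWithinAt z (a t * z t - b t * z t ^ 2) (Set.Ici (0:ℝ)) t)
    (hz0 : z 0 < 0) : ∀ t ≥ (0:ℝ), z t ≤ 0 := by
  have hzc : ContinuousOn z (Ici (0:ℝ)) := fun t ht => (hz t ht).continuousWithinAt
  intro t₁ ht₁
  by_contra hpos
  push_neg at hpos
  have h0t₁ : 0 < t₁ := by
    rcases lt_or_eq_of_le ht₁ with h | h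
    · exact h
    · exact absurd hpos (by rw [← h]; linarith)
  set S : Set ℝ := {t | t ∈ Icc 0 t₁ ∧ z t ≤ 0} with hS
  have hSclosed : IsClosed S := by
    have : S = Icc 0 t₁ ∩ z ⁻¹' (Iic 0) := by
      ext t; constructor <;> (intro h; exact ⟨h.1, h.2⟩)
    rw [this]
    exact (hzc.mono (Icc_subset_Ici_self)).preimage_isClosed_of_isClosed isClosed_Icc isClosed_Iic
  have hSne : S.Nonempty := ⟨0, ⟨le_refl 0, le_of_lt h0t₁⟩, le_of_lt hz0⟩
  have hSbdd : BddAbove S := ⟨t₁, fun t ht => ht.1.2⟩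
  set s := sSup S with hs
  have hsS : s ∈ S := hSclosed.csSup_mem hSne hSbdd
  have hs0 : 0 ≤ s := hsS.1.1
  have hst₁ : s < t₁ := lt_of_le_of_ne hsS.1.2 (fun h => by
    have := hsS.2; rw [h] at this; linarith)
  have hzpos : ∀ t ∈ Ioc s t₁, 0 < z t := by
    intro t ht
    by_contra h
    push_neg at h
    have : t ∈ S := ⟨⟨le_trans hs0 (le_of_lt ht.1), ht.2⟩, h⟩
    exact absurd (le_csSup hSbdd this) (not_le.mpr ht.1)
  have hzs_le : z s ≤ 0 := hsS.2
  have hzs_ge : 0 ≤ z s := by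
    have htend : Tendsto z (nhdsWithin s (Ioi s)) (nhds (z s)) :=
      (hzc s hs0).mono_left (nhdsWithin_mono _ (fun x hx => le_trans hs0 (le_of_lt hx)))
    have : ∀ᶠ t in nhdsWithin s (Ioi s), 0 ≤ z t := by
      filter_upwards [Ioc_mem_nhdsGT_of_mem ⟨le_refl s, hst₁⟩] with t ht
      exact (hzpos t ht).le
    exact ge_of_tendsto htend this
  have hzs : z s = 0 := le_antisymm hzs_le hzs_ge
  have key := my_gronwall (f := z) (f' := fun t => a t * z t - b t * z t ^ 2)
      (δ := 0) (K := A) (ε := 0)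
      (hzc.mono (fun x hx => le_trans hs0 hx.1))
      (fun t ht => (hz t (le_trans hs0 ht.1)).mono (fun x hx => le_trans hs0 (le_trans ht.1 hx)))
      (by rw [hzs])
      ?_ t₁ ⟨le_of_lt hst₁, le_refl t₁⟩
  · rw [gronwallBound_ε0, zero_mul] at key
    linarith
  · intro t ht
    show a t * z t - b t * z t ^ 2 ≤ A * z t + 0
    have ht0 : (0:ℝ) ≤ t := le_trans hs0 ht.1
    rcases eq_or_lt_of_le ht.1 with h | h
    · have hzt : z t = 0 := h ▸ hzs
      simp [hzt]
    · have hzt : 0 < z t := hzpos t ⟨h, le_of_lt ht.2⟩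
      have h1 : a t * z t ≤ A * z t := mul_le_mul_of_nonneg_right (haA t ht0) hzt.le
      have h2 : 0 ≤ b t * z t ^ 2 := mul_nonneg (le_trans hb₁.le (hbB t ht0).le) (sq_nonneg _)
      linarith

theorem stmt7 (a b : ℝ → ℝ) (A b₁ b₂ J : ℝ)
    (hA : 0 < A) (hb₁ : 0 < b₁) (hb₂ : 0 < b₂)
    (ha : ContinuousOn a (Set.Ici (0:ℝ)))
    (hb : ContinuousOn b (Set.Ici (0:ℝ)))
    (haA : ∀ t ≥ (0:ℝ), a t ≤ A)
    (hbB : ∀ t ≥ (0:ℝ), b₁ < b t ∧ b t < b₂)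
    (hint : IntegrableOn (fun t => b t * Real.exp (∫ s in (0:ℝ)..t, a s)) (Set.Ioi (0:ℝ)))
    (hJ : J = ∫ t in Set.Ioi (0:ℝ), b t * Real.exp (∫ s in (0:ℝ)..t, a s))
    (haneg : ∃ t₀ ≥ (0:ℝ), ∀ t ≥ t₀, a t ≤ 0)
    (halim : Tendsto a atTop (nhds 0)) :
    ∀ z : ℝ → ℝ,
      (∀ t ≥ (0:ℝ), HasDerivWithinAt z (a t * z t - b t * z t ^ 2) (Set.Ici (0:ℝ)) t) →
      z 0 ∈ Set.Ico (-(1 / J)) 0 →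
      Tendsto z atTop (nhds 0) := by
  intro z hz hz0
  have hz0u : z 0 < 0 := hz0.2
  have hzc : ContinuousOn z (Ici (0:ℝ)) := fun t ht => (hz t ht).continuousWithinAt
  have hneg : ∀ t ≥ (0:ℝ), z t ≤ 0 :=
    step1 a b A b₁ hb₁ haA (fun t ht => (hbB t ht).1) z hz hz0u
  rw [Metric.tendsto_atTop]
  intro ε hε
  by_contra hcon
  push_neg at hcon
  -- a is eventually small
  obtain ⟨Ta, hTa⟩ := Metric.tendsto_atTop.mp halim (b₁ * ε / 2) (by positivity)
  have hTa' : ∀ t ≥ Ta, |a t| < b₁ * ε / 2 := by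
    intro t ht
    have := hTa t ht
    rwa [Real.dist_eq, sub_zero] at this
  -- find a bad point t₀
  obtain ⟨t₀, ht₀N, hd⟩ := hcon (max Ta 0)
  have ht₀Ta : Ta ≤ t₀ := le_trans (le_max_left _ _) ht₀N
  have ht₀0 : (0:ℝ) ≤ t₀ := le_trans (le_max_right _ _) ht₀N
  have hzt₀ : z t₀ ≤ -ε := by
    have h1 : ε ≤ |z t₀| := by rwa [Real.dist_eq, sub_zero] at hd
    have h2 : |z t₀| = -z t₀ := abs_of_nonpos (hneg t₀ ht₀0)
    linarith [h1.trans_eq h2]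
  -- persistence: z t ≤ -ε for all t ≥ t₀
  have hpers : ∀ t ≥ t₀, z t ≤ -ε := by
    intro t₁ ht₁
    have key := my_gronwall (f := fun t => z t + ε)
        (f' := fun t => a t * z t - b t * z t ^ 2)
        (δ := 0) (K := b₁ * ε) (ε := 0) (a := t₀) (b := t₁)
        (ContinuousOn.add (hzc.mono (fun x hx => le_trans ht₀0 hx.1)) continuousOn_const)
        (fun t ht => ((hz t (le_trans ht₀0 ht.1)).mono
          (fun x hx => le_trans ht₀0 (le_trans ht.1 hx))).add_const ε)
        (by show z t₀ + ε ≤ 0; linarith)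
        ?_ t₁ ⟨ht₁, le_refl t₁⟩
    · rw [gronwallBound_ε0_δ0] at key
      linarith
    · intro t ht
      show a t * z t - b t * z t ^ 2 ≤ b₁ * ε * (z t + ε) + 0
      have ht0 : (0:ℝ) ≤ t := le_trans ht₀0 ht.1
      have hat := abs_lt.mp (hTa' t (le_trans ht₀Ta ht.1))
      have hzt0 : z t ≤ 0 := hneg t ht0
      have hbt := (hbB t ht0).1
      nlinarith [mul_nonneg (by linarith : (0:ℝ) ≤ a t + b₁ * ε / 2)
          (by linarith : (0:ℝ) ≤ -z t),
        mul_nonneg (by linarith : (0:ℝ) ≤ b t - b₁) (sq_nonneg (z t)),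
        mul_nonneg hb₁.le (sq_nonneg (z t + (3/4) * ε))]
  -- blow-up of u = -1/z
  set T : ℝ := t₀ + 2 / (b₁ * ε) + 1 with hT
  have hb₁ε : 0 < b₁ * ε := by positivity
  have ht₀T : t₀ ≤ T := by
    have : 0 < 2 / (b₁ * ε) := by positivity
    simp only [hT]; linarith
  have hzneg : ∀ t ∈ Icc t₀ T, z t < 0 := fun t ht => lt_of_le_of_lt (hpers t ht.1) (by linarith)
  have hzne : ∀ t ∈ Icc t₀ T, z t ≠ 0 := fun t ht => ne_of_lt (hzneg t ht)
  have key2 := my_gronwall (f := fun t => -(z t)⁻¹)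
      (f' := fun t => (a t * z t - b t * z t ^ 2) / z t ^ 2)
      (δ := 1 / ε) (K := 0) (ε := -(b₁ / 2)) (a := t₀) (b := T)
      (((hzc.mono (fun x hx => le_trans ht₀0 hx.1)).inv₀ hzne).neg)
      ?_ ?_ ?_ T ⟨ht₀T, le_refl T⟩
  · rw [gronwallBound_K0] at key2
    simp only at key2
    have huT : 0 < -(z T)⁻¹ := by
      have h1 : z T < 0 := hzneg T ⟨ht₀T, le_refl T⟩
      have : (z T)⁻¹ < 0 := inv_lt_zero.mpr h1
      linarith
    have harith : 1 / ε + -(b₁ / 2) * (T - t₀) < 0 := by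
      have hTt : T - t₀ = 2 / (b₁ * ε) + 1 := by simp only [hT]; ring
      rw [hTt]
      have h2 : (b₁ / 2) * (2 / (b₁ * ε)) = 1 / ε := by
        field_simp
      nlinarith
    linarith
  · intro t ht
    have ht0 : (0:ℝ) ≤ t := le_trans ht₀0 ht.1
    have hztne : z t ≠ 0 := hzne t ⟨ht.1, ht.2.le⟩
    have h := (((hz t ht0).mono (fun x hx => le_trans ht0 hx)).inv hztne).neg
    exact h.congr_deriv (by rw [neg_div, neg_neg])
  · show -(z t₀)⁻¹ ≤ 1 / ε
    have h1 : ε ≤ -z t₀ := by linarith [hpers t₀ (le_refl t₀)]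
    have h2 : (-z t₀)⁻¹ ≤ ε⁻¹ := inv_anti₀ hε h1
    rw [inv_neg] at h2
    rw [one_div]
    linarith
  · intro t ht
    show (a t * z t - b t * z t ^ 2) / z t ^ 2 ≤ 0 * -(z t)⁻¹ + -(b₁ / 2)
    have ht0 : (0:ℝ) ≤ t := le_trans ht₀0 ht.1
    have hzt : z t ≤ -ε := hpers t ht.1
    have hat := abs_lt.mp (hTa' t (le_trans ht₀Ta ht.1))
    have hbt := (hbB t ht0).1
    have hz2 : 0 < z t ^ 2 := by nlinarith
    rw [zero_mul, zero_add, div_le_iff₀ hz2]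
    nlinarith [mul_nonneg (by linarith : (0:ℝ) ≤ a t + b₁ * ε / 2)
        (by linarith : (0:ℝ) ≤ -z t),
      mul_nonneg (by linarith : (0:ℝ) ≤ -z t - ε) (by linarith : (0:ℝ) ≤ -z t),
      mul_nonneg (by linarith : (0:ℝ) ≤ b t - b₁) (sq_nonneg (z t))]
end

section
/- Let a, γ : ℝ → ℝ be continuous, T-periodic (T > 0), and bounded above and below by positive constants, and let k̄ > 0 be such that the equation z'(t) = a(t)z(t) − z(t)² − k̄γ(t) has exactly one positive T-periodic solution p, while for every k > k̄ the equation z'(t) = a(t)z(t) − z(t)² − kγ(t) has no T-periodic solution. Then every differentiable solution z : [0,∞) → ℝ of z'(t) = a(t)z(t) − z(t)² − k̄γ(t) with z(0) > p(0) is bounded on [0,∞) and is separated from p, i.e., z(t) > p(t) for all t ≥ 0 and ∫₀^∞ (z(t) − p(t)) dt = ∞. -/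
open Real Filter MeasureTheory Set intervalIntegral Topology

section helpers
lemma aux_const (f : ℝ → ℝ) (hf : ∀ t ≥ (0:ℝ), HasDerivWithinAt f 0 (Set.Ici (0:ℝ)) t) :
    ∀ t ≥ (0:ℝ), f t = f 0 := by
  intro t ht
  have hcont : ContinuousOn f (Icc 0 t) := fun x hx =>
    ((hf x hx.1).continuousWithinAt).mono (Icc_subset_Ici_self.trans (by simp))
  have := constant_of_has_deriv_right_zero (a := 0) (b := t) hcont (fun x hx =>
    (hf x hx.1).mono (Ici_subset_Ici.2 hx.1))
  exact this t ⟨ht, le_refl t⟩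

lemma aux_trap (f d : ℝ → ℝ) (hf : ∀ t, HasDerivAt f (d t) t)
    (hd : ∀ t, f t ≤ 0 → d t < 0) (T : ℝ) (hT : 0 < T)
    (hper : ∀ t, f (t + T) = f t) (t0 : ℝ) (h0 : f t0 ≤ 0) : False := by
  have fc : Continuous f := by
    rw [continuous_iff_continuousAt]; exact fun t => (hf t).continuousAt
  have step1 : ∀ t ≥ t0, f t ≤ 0 := by
    by_contra hcon
    push_neg at hcon
    obtain ⟨t1, ht1, hft1⟩ := hcon
    set Sset : Set ℝ := Icc t0 t1 ∩ f ⁻¹' (Iic 0) with hSset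
    have hne : Sset.Nonempty := ⟨t0, ⟨le_refl _, ht1⟩, h0⟩
    have hclosed : IsClosed Sset := isClosed_Icc.inter (isClosed_Iic.preimage fc)
    have hcpt : IsCompact Sset := (isCompact_Icc.inter_right (isClosed_Iic.preimage fc))
    set s := sSup Sset with hs
    have hsmem : s ∈ Sset := hcpt.sSup_mem hne
    have hfs : f s ≤ 0 := hsmem.2
    have hst1 : s < t1 := lt_of_le_of_ne hsmem.1.2 (fun h => absurd (h ▸ hfs) (not_le.2 hft1))
    -- slope eventually negative to the right of s
    have hslope : Tendsto (slope f s) (𝓝[≠] s) (𝓝 (d s)) :=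
      hasDerivAt_iff_tendsto_slope.1 (hf s)
    have hds : d s < 0 := hd s hfs
    have hev0 : ∀ᶠ x in 𝓝[≠] s, slope f s x < 0 :=
      hslope.eventually (eventually_of_mem (Iio_mem_nhds hds) (fun y hy => hy))
    have hev : ∀ᶠ x in 𝓝[>] s, slope f s x < 0 :=
      hev0.filter_mono (nhdsWithin_mono _ (fun x hx => ne_of_gt hx))
    have hIoc : Ioc s t1 ∈ 𝓝[>] s := Ioc_mem_nhdsGT_of_mem ⟨le_refl s, hst1⟩
    obtain ⟨x, hslx, hxgt, hxIoc⟩ := (hev.and (eventually_mem_nhdsWithin.and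
      (eventually_of_mem hIoc (fun y hy => hy)))).exists
    have hfx : f x < f s := by
      have hpos : 0 < x - s := sub_pos.2 hxgt
      rw [slope_def_field] at hslx
      rcases div_neg_iff.mp hslx with ⟨h1, h2⟩ | ⟨h1, h2⟩
      · linarith
      · linarith
    have hxS : x ∈ Sset := ⟨⟨hsmem.1.1.trans hxIoc.1.le, hxIoc.2⟩, le_trans hfx.le hfs⟩
    exact absurd (le_csSup hcpt.bddAbove hxS) (not_le.2 hxgt)
  have hanti : StrictAntiOn f (Ici t0) := by
    apply strictAntiOn_of_deriv_neg (convex_Ici t0) fc.continuousOn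
    intro x hx
    rw [interior_Ici] at hx
    rw [(hf x).deriv]
    exact hd x (step1 x hx.le)
  have := hanti (le_refl t0 : t0 ∈ Ici t0) (by simp [hT.le] : t0 + T ∈ Ici t0)
    (by linarith : t0 < t0 + T)
  rw [hper t0] at this
  exact lt_irrefl _ this

lemma aux_perb (f : ℝ → ℝ) (hf : Continuous f) (T : ℝ) (hT : 0 < T)
    (hper : ∀ t, f (t + T) = f t) : ∃ C : ℝ, ∀ t, |f t| ≤ C := by
  obtain ⟨x0, _, hx0⟩ := isCompact_Icc.exists_isMaxOn (nonempty_Icc.2 hT.le)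
    ((hf.abs).continuousOn : ContinuousOn (fun t => |f t|) (Icc 0 T))
  refine ⟨|f x0|, fun t => ?_⟩
  have hper' : Function.Periodic f T := hper
  obtain ⟨y, hy, hty⟩ := hper'.exists_mem_Ico₀ hT t
  rw [hty]
  exact hx0 ⟨hy.1, hy.2.le⟩

lemma aux_intDeriv (g : ℝ → ℝ) (hg : Continuous g) (t : ℝ) :
    HasDerivAt (fun u => ∫ s in (0:ℝ)..u, g s) (g t) t :=
  intervalIntegral.integral_hasDerivAt_right (hg.intervalIntegrable _ _)
    (hg.stronglyMeasurable.stronglyMeasurableAtFilter) hg.continuousAt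

lemma aux_intDerivWithin (g : ℝ → ℝ) (hg : ContinuousOn g (Set.Ici 0)) (t : ℝ) (ht : 0 ≤ t) :
    HasDerivWithinAt (fun u => ∫ s in (0:ℝ)..u, g s) (g t) (Set.Ici 0) t := by
  have hint : IntervalIntegrable g volume 0 t := by
    apply ContinuousOn.intervalIntegrable
    apply hg.mono
    rw [uIcc_of_le ht]
    exact Icc_subset_Ici_self
  rcases eq_or_lt_of_le ht with rfl | ht'
  · have hmeas : StronglyMeasurableAtFilter g (𝓝[>] (0:ℝ)) volume := by
      obtain ⟨s, hs, hsm⟩ := hg.stronglyMeasurableAtFilter_nhdsWithin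
        (μ := volume) measurableSet_Ici (0:ℝ)
      exact ⟨s, nhdsWithin_mono _ Ioi_subset_Ici_self hs, hsm⟩
    exact intervalIntegral.integral_hasDerivWithinAt_right hint hmeas
      ((hg 0 (by simp)).mono Ioi_subset_Ici_self)
  · have hca : ContinuousAt g t := (hg t ht'.le).continuousAt (Ici_mem_nhds ht')
    exact (intervalIntegral.integral_hasDerivAt_right hint
      ⟨Set.Ici 0, Ici_mem_nhds ht', (hg.aestronglyMeasurable measurableSet_Ici)⟩ hca).hasDerivWithinAt

lemma aux_An (A : ℝ → ℝ) (T c : ℝ) (hshift : ∀ t, A (t + T) = A t + c) :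
    ∀ (n : ℕ) (t : ℝ), A (t + n * T) = A t + n * c := by
  intro n
  induction n with
  | zero => simp
  | succ m ih =>
    intro t
    have : t + (m + 1 : ℕ) * T = (t + m * T) + T := by push_cast; ring
    rw [this, hshift, ih]
    push_cast
    ring

lemma aux_decomp (T : ℝ) (hT : 0 < T) (t : ℝ) (ht : 0 ≤ t) :
    ∃ (n : ℕ) (s : ℝ), s ∈ Set.Icc 0 T ∧ t = s + n * T ∧ (t / T - 1 : ℝ) ≤ n := by
  have hfl : (0:ℤ) ≤ ⌊t / T⌋ := Int.floor_nonneg.2 (div_nonneg ht hT.le)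
  refine ⟨(⌊t / T⌋).toNat, t - ⌊t / T⌋ * T, ⟨?_, ?_⟩, ?_, ?_⟩
  · exact Int.sub_floor_div_mul_nonneg t hT
  · exact (Int.sub_floor_div_mul_lt t hT).le
  · have hcast : ((⌊t / T⌋.toNat : ℕ) : ℝ) = ((⌊t / T⌋ : ℤ) : ℝ) := by
      exact_mod_cast congrArg (fun z : ℤ => (z : ℝ)) (Int.toNat_of_nonneg hfl)
    rw [hcast]; ring
  · have hcast : ((⌊t / T⌋.toNat : ℕ) : ℝ) = ((⌊t / T⌋ : ℤ) : ℝ) := by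
      exact_mod_cast congrArg (fun z : ℤ => (z : ℝ)) (Int.toNat_of_nonneg hfl)
    rw [hcast]
    have := Int.sub_one_lt_floor (t / T)
    linarith

lemma aux_Ashift (g : ℝ → ℝ) (hg : Continuous g) (T : ℝ) (hper : ∀ t, g (t + T) = g t) (t : ℝ) :
    (∫ s in (0:ℝ)..(t+T), g s) = (∫ s in (0:ℝ)..t, g s) + ∫ s in (0:ℝ)..T, g s := by
  rw [← intervalIntegral.integral_add_adjacent_intervals (a := (0:ℝ)) (b := t) (c := t + T)
    (hg.intervalIntegrable _ _) (hg.intervalIntegrable _ _)]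
  congr 1
  have hper' : Function.Periodic g T := hper
  have := hper'.intervalIntegral_add_eq t 0
  simpa using this

end helpers

set_option maxHeartbeats 1600000 in
theorem stmt11 (a γ p : ℝ → ℝ) (T kbar a₁ a₂ γ₁ γ₂ : ℝ)
    (hT : 0 < T)
    (ha : Continuous a) (hγ : Continuous γ)
    (haper : ∀ t : ℝ, a (t + T) = a t) (hγper : ∀ t : ℝ, γ (t + T) = γ t)
    (ha₁ : 0 < a₁) (hγ₁ : 0 < γ₁)
    (haB : ∀ t : ℝ, a₁ ≤ a t ∧ a t ≤ a₂)
    (hγB : ∀ t : ℝ, γ₁ ≤ γ t ∧ γ t ≤ γ₂)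
    (hkbar : 0 < kbar)
    (hp : ∀ t : ℝ, HasDerivAt p (a t * p t - p t ^ 2 - kbar * γ t) t)
    (hppos : ∀ t : ℝ, 0 < p t)
    (hpper : ∀ t : ℝ, p (t + T) = p t)
    (hpunique : ∀ q : ℝ → ℝ,
      (∀ t : ℝ, HasDerivAt q (a t * q t - q t ^ 2 - kbar * γ t) t) →
      (∀ t : ℝ, 0 < q t) → (∀ t : ℝ, q (t + T) = q t) → q = p)
    (hnone : ∀ k > kbar, ¬ ∃ q : ℝ → ℝ,
      (∀ t : ℝ, HasDerivAt q (a t * q t - q t ^ 2 - k * γ t) t) ∧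
      (∀ t : ℝ, q (t + T) = q t)) :
    ∀ z : ℝ → ℝ,
      (∀ t ≥ (0:ℝ), HasDerivWithinAt z (a t * z t - z t ^ 2 - kbar * γ t) (Set.Ici (0:ℝ)) t) →
      z 0 > p 0 →
      (∃ M : ℝ, ∀ t ≥ (0:ℝ), |z t| ≤ M) ∧
      (∀ t ≥ (0:ℝ), z t > p t) ∧
      Tendsto (fun S => ∫ t in (0:ℝ)..S, z t - p t) atTop atTop := by
  intro z hz hz0
  -- continuity of p
  have hpc : Continuous p := continuous_iff_continuousAt.2 fun t => (hp t).continuousAt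
  -- the linearization coefficient g = a - 2p and its primitive A
  set g : ℝ → ℝ := fun t => a t - 2 * p t with hgdef
  have hgc : Continuous g := ha.sub (continuous_const.mul hpc)
  have hgper : ∀ t, g (t + T) = g t := fun t => by simp [hgdef, haper t, hpper t]
  set A : ℝ → ℝ := fun t => ∫ s in (0:ℝ)..t, g s with hAdef
  have hA : ∀ t, HasDerivAt A (g t) t := aux_intDeriv g hgc
  have hAc : Continuous A := continuous_iff_continuousAt.2 fun t => (hA t).continuousAt
  have hA0 : A 0 = 0 := intervalIntegral.integral_same
  set c : ℝ := A T with hcdef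
  have hAshift : ∀ t, A (t + T) = A t + c := fun t => by
    have := aux_Ashift g hgc T hgper t
    simpa [hAdef, hA0] using this
  have hAn : ∀ (n : ℕ) (t : ℝ), A (t + n * T) = A t + n * c := aux_An A T c hAshift
  set E : ℝ → ℝ := fun t => Real.exp (A t) with hEdef
  have hEc : Continuous E := Real.continuous_exp.comp hAc
  have hEpos : ∀ t, 0 < E t := fun t => Real.exp_pos _
  have hE' : ∀ t, HasDerivAt E (E t * g t) t := fun t => (hA t).exp
  have hE0 : E 0 = 1 := by simp [hEdef, hA0]
  set H : ℝ → ℝ := fun t => ∫ s in (0:ℝ)..t, E s with hHdef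
  have hHd : ∀ t, HasDerivAt H (E t) t := aux_intDeriv E hEc
  have hH0 : H 0 = 0 := intervalIntegral.integral_same
  have hEshift : ∀ t, E (t + T) = Real.exp c * E t := fun t => by
    simp [hEdef, hAshift t, Real.exp_add, mul_comm]
  -- bound on p and on g
  obtain ⟨Pm, hPm⟩ := aux_perb p hpc T hT hpper
  have hPm0 : 0 ≤ Pm := (abs_nonneg _).trans (hPm 0)
  set C : ℝ := a₂ + 2 * Pm with hCdef
  have hCpos : 0 < C := by
    have := (haB 0).1; have := (haB 0).2; linarith
  have hgB : ∀ t, |g t| ≤ C := fun t => by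
    have h1 : |a t| ≤ a₂ := by
      have := (haB t).1; have := (haB t).2
      rw [abs_of_pos (by linarith)]; linarith
    calc |g t| ≤ |a t| + |2 * p t| := abs_sub _ _
    _ ≤ a₂ + 2 * Pm := by
        rw [abs_mul]
        have := hPm t
        simp only [abs_two]
        nlinarith [hPm t]
  have hAgap : ∀ s t : ℝ, s ≤ t → A t - A s ≤ C * (t - s) := by
    intro s t hst
    have hadj : A t - A s = ∫ x in s..t, g x := by
      have h := intervalIntegral.integral_add_adjacent_intervals
        (a := (0:ℝ)) (b := s) (c := t) (μ := volume) (f := g)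
        (hgc.intervalIntegrable _ _) (hgc.intervalIntegrable _ _)
      simp only [hAdef]
      linarith
    have := intervalIntegral.norm_integral_le_of_norm_le_const
      (f := g) (a := s) (b := t) (C := C) (fun x _ => hgB x)
    rw [← hadj] at this
    have h2 : |t - s| = t - s := abs_of_nonneg (by linarith)
    calc A t - A s ≤ |A t - A s| := le_abs_self _
    _ ≤ C * |t - s| := by simpa using this
    _ = C * (t - s) := by rw [h2]
  -- main case split on the sign of c
  rcases lt_or_ge c 0 with hc | hc
  · -- c < 0 : contradiction with uniqueness of the periodic solution
    exfalso
    obtain ⟨x2, hx2mem, hx2⟩ := isCompact_Icc.exists_isMaxOn (nonempty_Icc.2 hT.le)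
      (hAc.continuousOn : ContinuousOn A (Icc 0 T))
    set MA := A x2 with hMAdef
    have hAup : ∀ s ≥ (0:ℝ), A s ≤ MA - c + (c / T) * s := by
      intro s hs
      obtain ⟨n, r, hrmem, rfl, hn⟩ := aux_decomp T hT s hs
      rw [hAn n r]
      have h1 : A r ≤ MA := hx2 hrmem
      have h2 : (n:ℝ) * c ≤ ((r + n * T) / T - 1) * c :=
        mul_le_mul_of_nonpos_right hn hc.le
      have h3 : ((r + n * T) / T - 1) * c = (c / T) * (r + n * T) - c := by
        field_simp
      linarith
    set b : ℝ := -(c / T) with hbdef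
    have hbpos : 0 < b := by
      have : c / T < 0 := div_neg_of_neg_of_pos hc hT
      rw [hbdef]; linarith
    set K : ℝ := Real.exp (MA - c) with hKdef
    have hEbound : ∀ s ≥ (0:ℝ), E s ≤ K * Real.exp (-b * s) := by
      intro s hs
      rw [hKdef, ← Real.exp_add]
      apply Real.exp_le_exp.2
      have h := hAup s hs
      have h3 : MA - c + -b * s = MA - c + c / T * s := by rw [hbdef]; ring
      rw [h3]
      exact h
    have hEint : IntegrableOn E (Ioi (0:ℝ)) volume := by
      apply Integrable.mono' ((exp_neg_integrableOn_Ioi 0 hbpos).const_mul K)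
      · exact (hEc.aestronglyMeasurable).restrict
      · rw [ae_restrict_iff' measurableSet_Ioi]
        exact Filter.Eventually.of_forall fun s hs => by
          rw [Real.norm_eq_abs, abs_of_pos (hEpos s)]
          exact hEbound s (le_of_lt hs)
    set L : ℝ := ∫ s in Ioi (0:ℝ), E s with hLdef
    have hHL : Tendsto H atTop (𝓝 L) :=
      intervalIntegral_tendsto_integral_Ioi 0 hEint tendsto_id
    have hHgap : ∀ t S : ℝ, H S - H t = ∫ s in t..S, E s := by
      intro t S
      have h := intervalIntegral.integral_add_adjacent_intervals (a := (0:ℝ)) (b := t) (c := S)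
        (μ := volume) (f := E) (hEc.intervalIntegrable _ _) (hEc.intervalIntegrable _ _)
      simp only [hHdef]
      linarith
    set G : ℝ → ℝ := fun t => L - H t with hGdef
    have hGpos : ∀ t, 0 < G t := by
      intro t
      have hδ : 0 < ∫ s in t..(t+1), E s :=
        intervalIntegral.intervalIntegral_pos_of_pos_on (hEc.intervalIntegrable _ _)
          (fun x _ => hEpos x) (by linarith)
      have htend : Tendsto (fun S => H S - H t) atTop (𝓝 (L - H t)) := hHL.sub_const _
      have hev : ∀ᶠ S in atTop, (∫ s in t..(t+1), E s) ≤ H S - H t := by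
        filter_upwards [eventually_ge_atTop (t+1)] with S hS
        rw [hHgap t S, ← intervalIntegral.integral_add_adjacent_intervals (a := t) (b := t+1)
          (c := S) (μ := volume) (f := E) (hEc.intervalIntegrable _ _) (hEc.intervalIntegrable _ _)]
        have h9 : (0:ℝ) ≤ ∫ s in (t+1)..S, E s :=
          intervalIntegral.integral_nonneg hS (fun x _ => (hEpos x).le)
        linarith
      have := ge_of_tendsto htend hev
      simp only [hGdef]
      linarith
    have hGd : ∀ t, HasDerivAt G (-(E t)) t := fun t => by
      exact ((hasDerivAt_const t L).sub (hHd t)).congr_deriv (zero_sub _)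
    have hHshift : ∀ t, H (t + T) = H T + Real.exp c * H t := by
      intro t
      have h1 : (∫ x in (0:ℝ)..t, E (x + T)) = ∫ x in T..(t+T), E x := by
        simpa [zero_add] using
          intervalIntegral.integral_comp_add_right (a := (0:ℝ)) (b := t) (f := E) T
      have h2 : (∫ x in (0:ℝ)..t, E (x + T)) = Real.exp c * H t := by
        rw [intervalIntegral.integral_congr (g := fun x => Real.exp c * E x)
          (fun x _ => hEshift x), intervalIntegral.integral_const_mul]
      have h3 := intervalIntegral.integral_add_adjacent_intervals (a := (0:ℝ)) (b := T)
        (c := t + T) (μ := volume) (f := E) (hEc.intervalIntegrable _ _) (hEc.intervalIntegrable _ _)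
      have h4 : H (t + T) = H T + ∫ x in T..(t+T), E x := by
        simp only [hHdef]
        linarith
      rw [h4, ← h1, h2]
    have hLeq : L = H T + Real.exp c * L := by
      have t1 : Tendsto (fun S => H (S + T)) atTop (𝓝 L) :=
        hHL.comp (tendsto_atTop_add_const_right atTop T tendsto_id)
      have t2 : Tendsto (fun S => H T + Real.exp c * H S) atTop
          (𝓝 (H T + Real.exp c * L)) := (hHL.const_mul _).const_add _
      have heq : (fun S => H (S + T)) = fun S => H T + Real.exp c * H S := funext hHshift
      rw [heq] at t1
      exact tendsto_nhds_unique t1 t2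
    have hGshift : ∀ t, G (t + T) = Real.exp c * G t := by
      intro t
      simp only [hGdef]
      rw [hHshift t, mul_sub]
      linarith [hLeq]
    set q : ℝ → ℝ := fun t => p t - E t / G t with hqdef
    have hqd : ∀ t, HasDerivAt q (a t * q t - q t ^ 2 - kbar * γ t) t := by
      intro t
      have hGne : G t ≠ 0 := (hGpos t).ne'
      have hdiv := (hE' t).div (hGd t) hGne
      have h := (hp t).sub hdiv
      refine h.congr_deriv ?_
      simp only [hqdef, hgdef]
      field_simp
      ring
    have hqper : ∀ t, q (t + T) = q t := by
      intro t
      simp only [hqdef]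
      rw [hEshift t, hGshift t, hpper t, mul_div_mul_left _ _ (Real.exp_ne_zero c)]
    have hqpos : ∀ t, 0 < q t := by
      by_contra hcon
      push_neg at hcon
      obtain ⟨t0, ht0⟩ := hcon
      apply aux_trap q (fun t => a t * q t - q t ^ 2 - kbar * γ t) hqd ?_ T hT hqper t0 ht0
      intro t hqt
      have h1 : a t * q t ≤ 0 := mul_nonpos_of_nonneg_of_nonpos (by linarith [(haB t).1]) hqt
      have h2 : 0 ≤ q t ^ 2 := sq_nonneg _
      have h3 : 0 < kbar * γ t := mul_pos hkbar (by linarith [(hγB t).1])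
      show a t * q t - q t ^ 2 - kbar * γ t < 0
      linarith
    have hqp := hpunique q hqd hqpos hqper
    have h0 := congrFun hqp 0
    simp only [hqdef] at h0
    rw [hE0] at h0
    have hG0 := hGpos 0
    have hpos : 0 < 1 / G 0 := div_pos one_pos hG0
    linarith
  · -- c ≥ 0 : the actual proof
    have hzc : ContinuousOn z (Ici 0) := fun t ht => (hz t ht).continuousWithinAt
    set w : ℝ → ℝ := fun t => z t - p t with hwdef
    have hw0 : 0 < w 0 := sub_pos.2 hz0
    have hwd : ∀ t ≥ (0:ℝ), HasDerivWithinAt w ((a t - z t - p t) * w t) (Ici 0) t := by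
      intro t ht
      have h1 := (hz t ht).sub (hp t).hasDerivWithinAt
      refine h1.congr_deriv ?_
      simp only [hwdef]; ring
    set ψ : ℝ → ℝ := fun t => ∫ s in (0:ℝ)..t, (a s - z s - p s) with hψdef
    have hψcont : ContinuousOn (fun s : ℝ => a s - z s - p s) (Ici 0) :=
      (ha.continuousOn.sub hzc).sub hpc.continuousOn
    have hψd : ∀ t ≥ (0:ℝ), HasDerivWithinAt ψ (a t - z t - p t) (Ici 0) t := fun t ht =>
      aux_intDerivWithin _ hψcont t ht
    have hψ0 : ψ 0 = 0 := intervalIntegral.integral_same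
    have hwpos : ∀ t ≥ (0:ℝ), 0 < w t := by
      have hderiv0 : ∀ t ≥ (0:ℝ), HasDerivWithinAt (fun t => w t * Real.exp (-ψ t)) 0 (Ici 0) t := by
        intro t ht
        have hexp : HasDerivWithinAt (fun t => Real.exp (-ψ t))
            (Real.exp (-ψ t) * (-(a t - z t - p t))) (Ici 0) t := ((hψd t ht).neg).exp
        have h5 := (hwd t ht).mul hexp
        refine h5.congr_deriv ?_
        ring
      have hconst := aux_const _ hderiv0
      intro t ht
      have h2 := hconst t ht
      simp only [hψ0, neg_zero, Real.exp_zero, mul_one] at h2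
      by_contra hcon
      push_neg at hcon
      have h4 : w t * Real.exp (-ψ t) ≤ 0 :=
        mul_nonpos_of_nonpos_of_nonneg hcon (Real.exp_pos _).le
      linarith
    have hzp : ∀ t ≥ (0:ℝ), z t > p t := fun t ht => sub_pos.1 (hwpos t ht)
    set u0 : ℝ := 1 / w 0 with hu0def
    have hu0pos : 0 < u0 := by rw [hu0def]; positivity
    have hFd : ∀ t ≥ (0:ℝ), HasDerivWithinAt (fun t => E t / w t) (E t) (Ici 0) t := by
      intro t ht
      have hdiv := ((hE' t).hasDerivWithinAt.div (hwd t ht) (hwpos t ht).ne')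
      refine hdiv.congr_deriv ?_
      have hwne := (hwpos t ht).ne'
      simp only [hgdef, hwdef] at *
      field_simp
      ring
    have hFH : ∀ t ≥ (0:ℝ), E t / w t = u0 + H t := by
      have hderiv0 : ∀ t ≥ (0:ℝ), HasDerivWithinAt (fun t => E t / w t - H t) 0 (Ici 0) t := by
        intro t ht
        have h5 := (hFd t ht).sub (hHd t).hasDerivWithinAt
        exact h5.congr_deriv (sub_self _)
      have hconst := aux_const _ hderiv0
      intro t ht
      have h3 := hconst t ht
      simp only [hH0, hE0, sub_zero] at h3
      rw [hu0def]
      linarith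
    have hdenpos : ∀ t ≥ (0:ℝ), 0 < u0 + H t := fun t ht =>
      (hFH t ht) ▸ div_pos (hEpos t) (hwpos t ht)
    have hwformula : ∀ t ≥ (0:ℝ), w t = E t / (u0 + H t) := by
      intro t ht
      rw [← hFH t ht]
      field_simp
      rw [mul_div_cancel_right₀ _ (hEpos t).ne']
    have hHnonneg : ∀ t ≥ (0:ℝ), 0 ≤ H t := by
      intro t ht
      have : (0:ℝ) ≤ ∫ s in (0:ℝ)..t, E s :=
        intervalIntegral.integral_nonneg ht (fun x _ => (hEpos x).le)
      exact this
    -- the integral formula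
    have hInt : ∀ S ≥ (0:ℝ), (∫ t in (0:ℝ)..S, (z t - p t))
        = Real.log (u0 + H S) - Real.log u0 := by
      intro S hS
      have hderiv : ∀ x ∈ uIcc (0:ℝ) S,
          HasDerivAt (fun t => Real.log (u0 + H t)) (z x - p x) x := by
        intro x hx
        rw [uIcc_of_le hS] at hx
        have hxpos := hdenpos x hx.1
        have hlog := (((hHd x).const_add u0)).log hxpos.ne'
        have heq : E x / (u0 + H x) = z x - p x := (hwformula x hx.1).symm
        rw [heq] at hlog
        exact hlog
      have hint2 : IntervalIntegrable (fun t => z t - p t) volume 0 S :=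
        ((hzc.sub hpc.continuousOn).mono
          (by rw [uIcc_of_le hS]; exact Icc_subset_Ici_self)).intervalIntegrable
      rw [intervalIntegral.integral_eq_sub_of_hasDerivAt hderiv hint2]
      simp [hH0]
    -- minimum of A on a period and growth of H
    obtain ⟨x1, hx1mem, hx1⟩ := isCompact_Icc.exists_isMinOn (nonempty_Icc.2 hT.le)
      (hAc.continuousOn : ContinuousOn A (Icc 0 T))
    set mA := A x1 with hmAdef
    have hAlow : ∀ t ≥ (0:ℝ), mA ≤ A t := by
      intro t ht
      obtain ⟨n, s, hsmem, rfl, -⟩ := aux_decomp T hT t ht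
      rw [hAn n s]
      have h1 : mA ≤ A s := hx1 hsmem
      have h2 : (0:ℝ) ≤ (n:ℝ) * c := mul_nonneg (Nat.cast_nonneg n) hc
      linarith
    have hHgrow : ∀ S ≥ (0:ℝ), Real.exp mA * S ≤ H S := by
      intro S hS
      have hmono := intervalIntegral.integral_mono_on hS
        (intervalIntegrable_const (μ := volume) (c := Real.exp mA)) (hEc.intervalIntegrable _ _)
        (fun x hx => Real.exp_le_exp.2 (hAlow x hx.1))
      simpa [mul_comm] using hmono
    have hHtop : Tendsto (fun S => u0 + H S) atTop atTop := by
      apply tendsto_atTop_mono' atTop ?_ ?_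
      · exact fun S => u0 + Real.exp mA * S
      · filter_upwards [eventually_ge_atTop (0:ℝ)] with S hS
        have := hHgrow S hS
        linarith
      · apply tendsto_atTop_add_const_left
        exact Tendsto.const_mul_atTop (Real.exp_pos mA) tendsto_id
    have hlogtop : Tendsto (fun S => Real.log (u0 + H S) - Real.log u0) atTop atTop := by
      have h6 := tendsto_atTop_add_const_right atTop (-Real.log u0)
        (Real.tendsto_log_atTop.comp hHtop)
      simpa [sub_eq_add_neg] using h6
    -- boundedness
    have hAub : ∀ t ≥ (0:ℝ), A t ≤ C * t := by
      intro t ht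
      have h7 := hAgap 0 t ht
      rw [hA0] at h7
      simpa using h7
    have hExpInt : ∀ t ≥ (0:ℝ), (∫ s in (0:ℝ)..t, Real.exp (C * s - C * t))
        = (1 - Real.exp (-(C * t))) / C := by
      intro t ht
      have hder : ∀ x ∈ uIcc (0:ℝ) t, HasDerivAt (fun s => Real.exp (C * s - C * t) / C)
          (Real.exp (C * x - C * t)) x := by
        intro x hx
        have h1 : HasDerivAt (fun s : ℝ => C * s - C * t) C x := by
          simpa using ((hasDerivAt_id x).const_mul C).sub_const (C * t)
        have h2 := (h1.exp).div_const C
        refine h2.congr_deriv ?_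
        exact mul_div_cancel_right₀ _ hCpos.ne'
      have hcont2 : Continuous (fun s : ℝ => Real.exp (C * s - C * t)) :=
        Real.continuous_exp.comp ((continuous_const.mul continuous_id).sub continuous_const)
      rw [intervalIntegral.integral_eq_sub_of_hasDerivAt hder
        (hcont2.intervalIntegrable _ _)]
      rw [mul_comm C t]
      field_simp
      simp only [sub_self, mul_zero, Real.exp_zero, zero_sub, mul_neg, mul_comm C t]
    have hHlowE : ∀ t ≥ (0:ℝ), E t * ((1 - Real.exp (-(C * t))) / C) ≤ H t := by
      intro t ht
      have hptwise : ∀ x ∈ Icc (0:ℝ) t, E t * Real.exp (C * x - C * t) ≤ E x := by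
        intro x hx
        have h8 := hAgap x t hx.2
        have h9 : A t + (C * x - C * t) ≤ A x := by linarith
        calc E t * Real.exp (C * x - C * t) = Real.exp (A t + (C * x - C * t)) := by
              rw [Real.exp_add]
        _ ≤ Real.exp (A x) := Real.exp_le_exp.2 h9
        _ = E x := rfl
      have hcont3 : Continuous (fun x : ℝ => E t * Real.exp (C * x - C * t)) :=
        continuous_const.mul
          (Real.continuous_exp.comp ((continuous_const.mul continuous_id).sub continuous_const))
      have hmono := intervalIntegral.integral_mono_on (μ := volume) ht
        (hcont3.intervalIntegrable _ _) (hEc.intervalIntegrable _ _)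
        hptwise
      rw [intervalIntegral.integral_const_mul, hExpInt t ht] at hmono
      exact hmono
    set B1 : ℝ := max (Real.exp C / u0) (C / (1 - Real.exp (-C))) with hB1def
    have hexpC : Real.exp (-C) < 1 := by
      rw [Real.exp_lt_one_iff]
      linarith
    have hwB : ∀ t ≥ (0:ℝ), w t ≤ B1 := by
      intro t ht
      rw [hwformula t ht]
      rcases le_total t 1 with h1 | h1
      · have hle1 : E t ≤ Real.exp C := by
          rw [hEdef]
          apply Real.exp_le_exp.2
          calc A t ≤ C * t := hAub t ht
          _ ≤ C * 1 := by nlinarith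
          _ = C := mul_one C
        have h2 : u0 ≤ u0 + H t := by linarith [hHnonneg t ht]
        calc E t / (u0 + H t) ≤ Real.exp C / u0 :=
              div_le_div₀ (Real.exp_pos C).le hle1 hu0pos h2
        _ ≤ B1 := le_max_left _ _
      · have hEt := hEpos t
        have hee : Real.exp (-(C * t)) ≤ Real.exp (-C) := by
          apply Real.exp_le_exp.2
          nlinarith
        have hlow := hHlowE t ht
        have hlow2 : E t * (1 - Real.exp (-(C * t))) ≤ H t * C := by
          rw [← mul_div_assoc] at hlow
          exact (div_le_iff₀ hCpos).1 hlow
        have hstep : E t * (1 - Real.exp (-C)) ≤ E t * (1 - Real.exp (-(C * t))) :=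
          mul_le_mul_of_nonneg_left (by linarith) hEt.le
        have hcomm : H t * C = C * H t := mul_comm _ _
        have hcu : 0 < C * u0 := mul_pos hCpos hu0pos
        have hkey : E t * (1 - Real.exp (-C)) ≤ C * (u0 + H t) := by
          have hma := mul_add C u0 (H t)
          linarith
        calc E t / (u0 + H t) ≤ C / (1 - Real.exp (-C)) := by
              rw [div_le_div_iff₀ (hdenpos t ht) (by linarith : (0:ℝ) < 1 - Real.exp (-C))]
              linarith
        _ ≤ B1 := le_max_right _ _
    refine ⟨⟨Pm + B1, ?_⟩, hzp, ?_⟩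
    · intro t ht
      have h1 := hzp t ht
      have h2 := hppos t
      rw [abs_of_pos (lt_trans h2 h1)]
      have h3 := hwB t ht
      have h4 : p t ≤ Pm := (le_abs_self _).trans (hPm t)
      have h5 : z t = p t + w t := by simp [hwdef]
      linarith
    · apply Tendsto.congr' ?_ hlogtop
      filter_upwards [eventually_ge_atTop (0:ℝ)] with S hS
      exact (hInt S hS).symm
end

section
/- Let a, γ : [0,∞) → ℝ be continuous and bounded above and below by positive constants, let k > 0, and let p : [0,∞) → ℝ be a positive bounded differentiable solution of z'(t) = a(t)z(t) − z(t)² − kγ(t). Assume I := ∫₀^∞ exp(∫₀^t (a(s) − 2p(s)) ds) dt = ∞. Then every differentiable solution z : [0,∞) → ℝ of the same equation with z(0) > p(0) is bounded on [0,∞) and separated from p: z(t) > p(t) for all t ≥ 0 and ∫₀^∞ (z(t) − p(t)) dt = ∞. -/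
open Real Filter MeasureTheory Set intervalIntegral

private lemma my_intable {f : ℝ → ℝ} (hf : ContinuousOn f (Set.Ici 0)) {x y : ℝ}
    (hx : 0 ≤ x) (hy : 0 ≤ y) : IntervalIntegrable f MeasureTheory.volume x y := by
  apply ContinuousOn.intervalIntegrable
  apply hf.mono
  intro u hu
  rcases le_total x y with h | h
  · rw [Set.uIcc_of_le h] at hu; exact le_trans hx hu.1
  · rw [Set.uIcc_of_ge h] at hu; exact le_trans hy hu.1

private lemma my_ftc {f : ℝ → ℝ} (hf : ContinuousOn f (Set.Ici 0)) {x : ℝ} (hx : 0 ≤ x) :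
    HasDerivWithinAt (fun t => ∫ s in (0:ℝ)..t, f s) (f x) (Set.Ici x) x := by
  have hsub : Set.Ici x ⊆ Set.Ici (0:ℝ) := Set.Ici_subset_Ici.2 hx
  refine intervalIntegral.integral_hasDerivWithinAt_right (my_intable hf le_rfl hx)
    ⟨Set.Ici 0, ?_, hf.aestronglyMeasurable measurableSet_Ici⟩
    ((hf x hx).mono (Set.Ioi_subset_Ici_self.trans hsub))
  · exact Filter.mem_of_superset self_mem_nhdsWithin (Set.Ioi_subset_Ici_self.trans hsub)

private lemma my_primitive_cont {f : ℝ → ℝ} (hf : ContinuousOn f (Set.Ici 0)) :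
    ContinuousOn (fun t => ∫ s in (0:ℝ)..t, f s) (Set.Ici 0) := by
  intro x hx
  have h1 : ContinuousOn (fun t => ∫ s in (0:ℝ)..t, f s) (Set.uIcc 0 (x + 1)) := by
    apply intervalIntegral.continuousOn_primitive_interval
    apply (hf.mono ?_).integrableOn_compact isCompact_uIcc
    intro u hu
    rw [Set.uIcc_of_le (by linarith [hx.out] : (0:ℝ) ≤ x + 1)] at hu
    exact hu.1
  have hmem : Set.uIcc 0 (x + 1) ∈ nhdsWithin x (Set.Ici 0) := by
    rw [Set.uIcc_of_le (by linarith [hx.out] : (0:ℝ) ≤ x + 1)]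
    rw [← Set.Ici_inter_Iic]
    exact Filter.inter_mem self_mem_nhdsWithin
      (mem_nhdsWithin_of_mem_nhds (Iic_mem_nhds (by linarith)))
  have hx1 : x ∈ Set.uIcc 0 (x+1) := by
    rw [Set.uIcc_of_le (by linarith [hx.out] : (0:ℝ) ≤ x + 1)]
    exact ⟨hx.out, by linarith⟩
  exact (h1 x hx1).mono_of_mem_nhdsWithin hmem

private lemma my_const {g : ℝ → ℝ} (hgc : ContinuousOn g (Set.Ici 0))
    (hg : ∀ x ≥ (0:ℝ), HasDerivWithinAt g 0 (Set.Ici x) x) {t : ℝ} (ht : 0 ≤ t) :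
    g t = g 0 :=
  constant_of_has_deriv_right_zero (hgc.mono Set.Icc_subset_Ici_self)
    (fun x hx => hg x hx.1) t ⟨ht, le_rfl⟩

theorem stmt12 (a γ p : ℝ → ℝ) (k a₁ a₂ γ₁ γ₂ : ℝ)
    (ha : ContinuousOn a (Set.Ici (0:ℝ)))
    (hγ : ContinuousOn γ (Set.Ici (0:ℝ)))
    (ha₁ : 0 < a₁) (hγ₁ : 0 < γ₁)
    (haB : ∀ t ≥ (0:ℝ), a₁ ≤ a t ∧ a t ≤ a₂)
    (hγB : ∀ t ≥ (0:ℝ), γ₁ ≤ γ t ∧ γ t ≤ γ₂)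
    (hk : 0 < k)
    (hp : ∀ t ≥ (0:ℝ), HasDerivWithinAt p (a t * p t - p t ^ 2 - k * γ t) (Set.Ici (0:ℝ)) t)
    (hppos : ∀ t ≥ (0:ℝ), 0 < p t)
    (hpbd : ∃ M : ℝ, ∀ t ≥ (0:ℝ), |p t| ≤ M)
    (hI : Tendsto (fun S => ∫ t in (0:ℝ)..S, Real.exp (∫ s in (0:ℝ)..t, a s - 2 * p s))
      atTop atTop) :
    ∀ z : ℝ → ℝ,
      (∀ t ≥ (0:ℝ), HasDerivWithinAt z (a t * z t - z t ^ 2 - k * γ t) (Set.Ici (0:ℝ)) t) →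
      z 0 > p 0 →
      (∃ M : ℝ, ∀ t ≥ (0:ℝ), |z t| ≤ M) ∧
      (∀ t ≥ (0:ℝ), z t > p t) ∧
      Tendsto (fun S => ∫ t in (0:ℝ)..S, z t - p t) atTop atTop := by
  intro z hz hz0
  -- basic continuity
  have hpc : ContinuousOn p (Set.Ici 0) := fun t ht => (hp t ht).continuousWithinAt
  have hzc : ContinuousOn z (Set.Ici 0) := fun t ht => (hz t ht).continuousWithinAt
  set w : ℝ → ℝ := fun t => z t - p t with hw_def
  set c : ℝ → ℝ := fun t => a t - z t - p t with hc_def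
  set b : ℝ → ℝ := fun t => a t - 2 * p t with hb_def
  have hwc : ContinuousOn w (Set.Ici 0) := hzc.sub hpc
  have hcc : ContinuousOn c (Set.Ici 0) := (ha.sub hzc).sub hpc
  have hbc : ContinuousOn b (Set.Ici 0) := ha.sub (continuousOn_const.mul hpc)
  have hw0 : 0 < w 0 := sub_pos.2 hz0
  -- derivative of w within Ici x
  have hw' : ∀ x ≥ (0:ℝ), HasDerivWithinAt w (c x * w x) (Set.Ici x) x := by
    intro x hx
    have h := ((hz x hx).sub (hp x hx)).mono (Set.Ici_subset_Ici.2 hx)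
    refine h.congr_deriv ?_
    simp only [hw_def, hc_def]
    ring
  set A : ℝ → ℝ := fun t => ∫ s in (0:ℝ)..t, c s with hA_def
  set Bi : ℝ → ℝ := fun t => ∫ s in (0:ℝ)..t, b s with hBi_def
  set E : ℝ → ℝ := fun t => Real.exp (Bi t) with hE_def
  have hAc : ContinuousOn A (Set.Ici 0) := my_primitive_cont hcc
  have hBic : ContinuousOn Bi (Set.Ici 0) := my_primitive_cont hbc
  have hEc : ContinuousOn E (Set.Ici 0) := Real.continuous_exp.comp_continuousOn hBic
  have hEpos : ∀ t, 0 < E t := fun t => Real.exp_pos _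
  -- Step 1: w t = w 0 * exp (A t)
  have hstep1 : ∀ t ≥ (0:ℝ), w t = w 0 * Real.exp (A t) := by
    intro t ht
    have hconst : w t * Real.exp (-(A t)) = w 0 * Real.exp (-(A 0)) := by
      apply my_const (g := fun t => w t * Real.exp (-(A t)))
        (hwc.mul (Real.continuous_exp.comp_continuousOn hAc.neg)) _ ht
      intro x hx
      have hA' : HasDerivWithinAt (fun t => Real.exp (-(A t))) (Real.exp (-(A x)) * (-(c x)))
          (Set.Ici x) x := ((my_ftc hcc hx).neg).exp
      have h := (hw' x hx).mul hA'
      refine h.congr_deriv ?_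
      ring
    have hA0 : A 0 = 0 := intervalIntegral.integral_same
    rw [hA0] at hconst
    simp only [neg_zero, Real.exp_zero, mul_one] at hconst
    have : w t = w 0 * Real.exp (A t) := by
      have he : Real.exp (-(A t)) ≠ 0 := Real.exp_ne_zero _
      calc w t = w t * Real.exp (-(A t)) * Real.exp (A t) := by
            rw [mul_assoc, ← Real.exp_add, neg_add_cancel, Real.exp_zero, mul_one]
        _ = w 0 * Real.exp (A t) := by rw [hconst]
    exact this
  have hwpos : ∀ t ≥ (0:ℝ), 0 < w t := by
    intro t ht
    rw [hstep1 t ht]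
    exact mul_pos hw0 (Real.exp_pos _)
  -- Step 2: E t / w t = F t, i.e. w t = E t / F t
  set F : ℝ → ℝ := fun t => 1 / w 0 + ∫ s in (0:ℝ)..t, E s with hF_def
  have hE' : ∀ x ≥ (0:ℝ), HasDerivWithinAt E (Real.exp (Bi x) * b x) (Set.Ici x) x :=
    fun x hx => (my_ftc hbc hx).exp
  have hF' : ∀ x ≥ (0:ℝ), HasDerivWithinAt F (E x) (Set.Ici x) x :=
    fun x hx => (my_ftc hEc hx).const_add (1 / w 0)
  have hFc : ContinuousOn F (Set.Ici 0) := continuousOn_const.add (my_primitive_cont hEc)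
  have hstep2 : ∀ t ≥ (0:ℝ), E t / w t = F t := by
    intro t ht
    have hconst : E t / w t - (∫ s in (0:ℝ)..t, E s) = E 0 / w 0 - ∫ s in (0:ℝ)..(0:ℝ), E s := by
      apply my_const (g := fun t => E t / w t - ∫ s in (0:ℝ)..t, E s) ?_ ?_ ht
      · exact (hEc.div hwc (fun x hx => ne_of_gt (hwpos x hx))).sub (my_primitive_cont hEc)
      · intro x hx
        have h := ((hE' x hx).div (hw' x hx) (ne_of_gt (hwpos x hx))).sub (my_ftc hEc hx)
        refine h.congr_deriv ?_
        have hwne : w x ≠ 0 := ne_of_gt (hwpos x hx)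
        rw [hE_def]
        field_simp
        simp only [hb_def, hc_def, hw_def]
        ring
    have hBi0 : Bi 0 = 0 := intervalIntegral.integral_same
    have hE0 : E 0 = 1 := by rw [hE_def]; simp [hBi0]
    rw [intervalIntegral.integral_same, hE0, sub_zero] at hconst
    rw [hF_def]
    simp only []
    linarith [hconst]
  have hFpos : ∀ t ≥ (0:ℝ), 0 < F t := by
    intro t ht
    rw [← hstep2 t ht]
    exact div_pos (hEpos t) (hwpos t ht)
  have hwF : ∀ t ≥ (0:ℝ), w t = E t / F t := by
    intro t ht
    rw [← hstep2 t ht]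
    field_simp
    exact (mul_div_cancel_right₀ _ (ne_of_gt (hEpos t))).symm
  -- Step 3: ∫₀^t w = log (F t) - log (F 0)
  have hstep3 : ∀ t ≥ (0:ℝ), (∫ s in (0:ℝ)..t, w s) = Real.log (F t) - Real.log (F 0) := by
    intro t ht
    have hconst : Real.log (F t) - (∫ s in (0:ℝ)..t, w s)
        = Real.log (F 0) - ∫ s in (0:ℝ)..(0:ℝ), w s := by
      apply my_const (g := fun t => Real.log (F t) - ∫ s in (0:ℝ)..t, w s) ?_ ?_ ht
      · exact (Real.continuousOn_log.comp hFc
          (fun x hx => ne_of_gt (hFpos x hx))).sub (my_primitive_cont hwc)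
      · intro x hx
        have h := ((hF' x hx).log (ne_of_gt (hFpos x hx))).sub (my_ftc hwc hx)
        refine h.congr_deriv ?_
        rw [hwF x hx]
        ring
    rw [intervalIntegral.integral_same, sub_zero] at hconst
    linarith [hconst]
  -- Step 4: bounds
  have ha₂ : 0 < a₂ := lt_of_lt_of_le ha₁ ((haB 0 le_rfl).1.trans (haB 0 le_rfl).2)
  have hBile : ∀ t ≥ (0:ℝ), Bi t ≤ a₂ * t := by
    intro t ht
    have h := intervalIntegral.integral_mono_on (μ := MeasureTheory.volume)
      (f := b) (g := fun _ => a₂) ht (my_intable hbc le_rfl ht)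
      intervalIntegrable_const
      (fun x hx => by
        have h1 := (haB x hx.1).2
        have h2 := hppos x hx.1
        simp only [hb_def]
        linarith)
    rw [intervalIntegral.integral_const] at h
    simp only [smul_eq_mul, sub_zero] at h
    rw [hBi_def]
    simp only []
    linarith
  have hEexp : ∀ t ≥ (0:ℝ), ∀ s ∈ Set.Icc (0:ℝ) t, E t * Real.exp (a₂ * s - a₂ * t) ≤ E s := by
    intro t ht s hs
    have hint1 : (∫ u in (0:ℝ)..s, b u) + (∫ u in s..t, b u) = ∫ u in (0:ℝ)..t, b u :=
      intervalIntegral.integral_add_adjacent_intervals (my_intable hbc le_rfl hs.1)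
        (my_intable hbc hs.1 ht)
    have hmono : (∫ u in s..t, b u) ≤ a₂ * (t - s) := by
      have h := intervalIntegral.integral_mono_on (μ := MeasureTheory.volume)
        (f := b) (g := fun _ => a₂) hs.2 (my_intable hbc hs.1 ht)
        intervalIntegrable_const
        (fun x hx => by
          have h1 := (haB x (hs.1.trans hx.1)).2
          have h2 := hppos x (hs.1.trans hx.1)
          simp only [hb_def]
          linarith)
      rw [intervalIntegral.integral_const] at h
      simp only [smul_eq_mul] at h
      linarith
    have hkey : Bi t + (a₂ * s - a₂ * t) ≤ Bi s := by
      simp only [hBi_def]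
      linarith
    calc E t * Real.exp (a₂ * s - a₂ * t) = Real.exp (Bi t + (a₂ * s - a₂ * t)) := by
          rw [hE_def]; simp only []; rw [← Real.exp_add]
      _ ≤ Real.exp (Bi s) := Real.exp_le_exp.2 hkey
      _ = E s := rfl
  have hintE : ∀ t ≥ (0:ℝ), E t * ((1 - Real.exp (-(a₂ * t))) / a₂) ≤ ∫ s in (0:ℝ)..t, E s := by
    intro t ht
    have hcont0 : Continuous (fun s : ℝ => Real.exp (a₂ * s - a₂ * t)) :=
      Real.continuous_exp.comp ((continuous_const.mul continuous_id).sub continuous_const)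
    have hcont : Continuous (fun s : ℝ => E t * Real.exp (a₂ * s - a₂ * t)) :=
      continuous_const.mul hcont0
    have hJ : (∫ s in (0:ℝ)..t, Real.exp (a₂ * s - a₂ * t))
        = Real.exp (a₂ * t - a₂ * t) / a₂ - Real.exp (a₂ * 0 - a₂ * t) / a₂ := by
      refine intervalIntegral.integral_eq_sub_of_hasDerivAt
        (f := fun y => Real.exp (a₂ * y - a₂ * t) / a₂) (fun x hx => ?_)
        (hcont0.intervalIntegrable _ _)
      have h1 : HasDerivAt (fun y : ℝ => a₂ * y - a₂ * t) (a₂ * 1) x :=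
        ((hasDerivAt_id x).const_mul a₂).sub_const (a₂ * t)
      have h2 := (h1.exp).div_const a₂
      refine h2.congr_deriv ?_
      field_simp
    have hm := intervalIntegral.integral_mono_on (μ := MeasureTheory.volume)
      (f := fun s => E t * Real.exp (a₂ * s - a₂ * t)) (g := E) ht
      (hcont.intervalIntegrable _ _)
      (my_intable hEc le_rfl ht)
      (hEexp t ht)
    rw [intervalIntegral.integral_const_mul, hJ] at hm
    have he1 : Real.exp (a₂ * t - a₂ * t) = 1 := by rw [sub_self, Real.exp_zero]
    have he2 : a₂ * 0 - a₂ * t = -(a₂ * t) := by ring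
    rw [he1, he2] at hm
    calc E t * ((1 - Real.exp (-(a₂ * t))) / a₂)
        = E t * (1 / a₂ - Real.exp (-(a₂ * t)) / a₂) := by ring
      _ ≤ ∫ s in (0:ℝ)..t, E s := hm
  set m : ℝ := min (1 / w 0) (1 / a₂) with hm_def
  have hmpos : 0 < m := lt_min (by positivity) (by positivity)
  have hFm : ∀ t ≥ (0:ℝ), m * E t ≤ F t := by
    intro t ht
    set e : ℝ := Real.exp (-(a₂ * t)) with he_def
    have hepos : 0 < e := Real.exp_pos _
    have hele : e ≤ 1 := by
      rw [he_def, ← Real.exp_zero]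
      exact Real.exp_le_exp.2 (by nlinarith)
    have hEe : E t * e ≤ 1 := by
      rw [hE_def, he_def, ← Real.exp_add, ← Real.exp_zero]
      exact Real.exp_le_exp.2 (by linarith [hBile t ht])
    have h1 : m * (E t * e) ≤ 1 / w 0 := by
      calc m * (E t * e) ≤ m * 1 := by nlinarith [hEpos t]
        _ = m := mul_one m
        _ ≤ 1 / w 0 := min_le_left _ _
    have h2 : m * (E t * (1 - e)) ≤ E t * ((1 - e) / a₂) := by
      have hX : 0 ≤ E t * (1 - e) := mul_nonneg (le_of_lt (hEpos t)) (by linarith)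
      calc m * (E t * (1 - e)) ≤ (1 / a₂) * (E t * (1 - e)) :=
            mul_le_mul_of_nonneg_right (min_le_right _ _) hX
        _ = E t * ((1 - e) / a₂) := by ring
    have hid : m * E t = m * (E t * e) + m * (E t * (1 - e)) := by ring
    have h3 := hintE t ht
    rw [hF_def]
    simp only []
    rw [← he_def] at h3
    linarith
  have hwle : ∀ t ≥ (0:ℝ), w t ≤ 1 / m := by
    intro t ht
    rw [hwF t ht]
    have h1 : E t / F t ≤ E t / (m * E t) :=
      div_le_div_of_nonneg_left (le_of_lt (hEpos t)) (by positivity) (hFm t ht)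
    have h2 : E t / (m * E t) = 1 / m := by
      rw [mul_comm, div_mul_eq_div_div, div_self (ne_of_gt (hEpos t))]
    rw [h2] at h1
    exact h1
  -- assemble
  obtain ⟨Mp, hMp⟩ := hpbd
  refine ⟨⟨Mp + 1 / m, ?_⟩, ?_, ?_⟩
  · intro t ht
    have hzp : p t < z t := sub_pos.1 (hwpos t ht)
    have hzt : 0 < z t := lt_trans (hppos t ht) hzp
    rw [abs_of_pos hzt]
    have : z t = p t + w t := by simp only [hw_def]; ring
    rw [this]
    have := le_trans (le_abs_self (p t)) (hMp t ht)
    linarith [hwle t ht]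
  · intro t ht
    exact sub_pos.1 (hwpos t ht)
  · have htendF : Tendsto F atTop atTop := by
      rw [hF_def]
      exact tendsto_atTop_add_const_left atTop (1 / w 0) hI
    have hlog : Tendsto (fun S => Real.log (F S) - Real.log (F 0)) atTop atTop := by
      apply tendsto_atTop_add_const_right atTop (-(Real.log (F 0)))
      exact Real.tendsto_log_atTop.comp htendF
    apply hlog.congr'
    filter_upwards [eventually_ge_atTop (0:ℝ)] with S hS
    exact (hstep3 S hS).symm
end

section
/- Let a, γ : [0,∞) → ℝ be continuous and bounded above and below by positive constants, let k > 0, and let p : [0,∞) → ℝ be a positive bounded differentiable solution of z'(t) = a(t)z(t) − z(t)² − kγ(t). Assume I := ∫₀^∞ exp(∫₀^t (a(s) − 2p(s)) ds) dt = ∞. Then there is no differentiable solution z : [0,∞) → ℝ of the same equation with z(0) < p(0); that is, every solution starting below p goes to −∞ in finite time. -/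
open Real Filter MeasureTheory Set intervalIntegral

/-- FTC helper: derivative within `Ici t` of the primitive of a function continuous on `Ici 0`. -/
lemma ftc_helper (f : ℝ → ℝ) (hf : ContinuousOn f (Set.Ici (0:ℝ))) {t : ℝ} (ht : 0 ≤ t) :
    HasDerivWithinAt (fun u => ∫ x in (0:ℝ)..u, f x) (f t) (Set.Ici t) t := by
  have hsub : Set.Ici t ⊆ Set.Ici (0:ℝ) := Set.Ici_subset_Ici.2 ht
  have hint : IntervalIntegrable f volume 0 t := by
    apply ContinuousOn.intervalIntegrable
    apply hf.mono
    rw [Set.uIcc_of_le ht]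
    exact Set.Icc_subset_Ici_self
  have hsub' : Set.Ioi t ⊆ Set.Ici (0:ℝ) := fun x hx => le_of_lt (lt_of_le_of_lt ht hx)
  exact intervalIntegral.integral_hasDerivWithinAt_right hint
    ((hf.mono hsub').stronglyMeasurableAtFilter_nhdsWithin measurableSet_Ioi t)
    ((hf.continuousWithinAt ht).mono hsub')

/-- The primitive of a function continuous on `Ici 0` is continuous on `Ici 0`. -/
lemma primitive_contOn (f : ℝ → ℝ) (hf : ContinuousOn f (Set.Ici (0:ℝ))) :
    ContinuousOn (fun u => ∫ x in (0:ℝ)..u, f x) (Set.Ici (0:ℝ)) := by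
  intro t ht
  have hIcc : Set.Icc (0:ℝ) (t+1) ⊆ Set.Ici 0 := Set.Icc_subset_Ici_self
  have h1 : ContinuousOn (fun u => ∫ x in (0:ℝ)..u, f x) (Set.uIcc 0 (t+1)) := by
    apply intervalIntegral.continuousOn_primitive_interval
    rw [Set.uIcc_of_le (by linarith [ht.out] : (0:ℝ) ≤ t+1)]
    exact (hf.mono hIcc).integrableOn_Icc
  have ht' : t ∈ Set.uIcc (0:ℝ) (t+1) := by
    rw [Set.uIcc_of_le (by linarith [ht.out] : (0:ℝ) ≤ t+1)]
    exact ⟨ht.out, by linarith⟩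
  refine (h1.continuousWithinAt ht').mono_of_mem_nhdsWithin ?_
  rw [Set.uIcc_of_le (by linarith [ht.out] : (0:ℝ) ≤ t+1)]
  have : Set.Icc (0:ℝ) (t+1) = Set.Ici 0 ∩ Set.Iic (t+1) := (Set.Ici_inter_Iic).symm
  rw [this]
  exact Filter.inter_mem self_mem_nhdsWithin
    (mem_nhdsWithin_of_mem_nhds (Iic_mem_nhds (by linarith)))

theorem stmt13 (a γ p : ℝ → ℝ) (k a₁ a₂ γ₁ γ₂ : ℝ)
    (ha : ContinuousOn a (Set.Ici (0:ℝ)))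
    (hγ : ContinuousOn γ (Set.Ici (0:ℝ)))
    (ha₁ : 0 < a₁) (hγ₁ : 0 < γ₁)
    (haB : ∀ t ≥ (0:ℝ), a₁ ≤ a t ∧ a t ≤ a₂)
    (hγB : ∀ t ≥ (0:ℝ), γ₁ ≤ γ t ∧ γ t ≤ γ₂)
    (hk : 0 < k)
    (hp : ∀ t ≥ (0:ℝ), HasDerivWithinAt p (a t * p t - p t ^ 2 - k * γ t) (Set.Ici (0:ℝ)) t)
    (hppos : ∀ t ≥ (0:ℝ), 0 < p t)
    (hpbd : ∃ M : ℝ, ∀ t ≥ (0:ℝ), |p t| ≤ M)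
    (hI : Tendsto (fun S => ∫ t in (0:ℝ)..S, Real.exp (∫ s in (0:ℝ)..t, a s - 2 * p s))
      atTop atTop) :
    ¬ ∃ z : ℝ → ℝ,
      (∀ t ≥ (0:ℝ), HasDerivWithinAt z (a t * z t - z t ^ 2 - k * γ t) (Set.Ici (0:ℝ)) t) ∧
      z 0 < p 0 := by
  rintro ⟨z, hz, hz0⟩
  set w : ℝ → ℝ := fun t => p t - z t with hw
  have hw0 : 0 < w 0 := sub_pos.2 hz0
  have hpc : ContinuousOn p (Set.Ici (0:ℝ)) := fun t ht => (hp t ht).continuousWithinAt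
  have hzc : ContinuousOn z (Set.Ici (0:ℝ)) := fun t ht => (hz t ht).continuousWithinAt
  have hwc : ContinuousOn w (Set.Ici (0:ℝ)) := hpc.sub hzc
  set q : ℝ → ℝ := fun t => a t - 2 * p t with hq
  have hqc : ContinuousOn q (Set.Ici (0:ℝ)) := ha.sub (continuousOn_const.mul hpc)
  -- derivative of w within Ici t
  have hwd : ∀ t ≥ (0:ℝ), HasDerivWithinAt w ((q t + w t) * w t) (Set.Ici t) t := by
    intro t ht
    have h := ((hp t ht).sub (hz t ht)).mono (Set.Ici_subset_Ici.2 ht)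
    refine h.congr_deriv ?_
    simp only [hw, hq]; ring
  -- Step 1 : w stays positive
  have hwpos : ∀ t ≥ (0:ℝ), 0 < w t := by
    intro T hT
    set g : ℝ → ℝ := fun t => q t + w t with hg
    have hgc : ContinuousOn g (Set.Ici (0:ℝ)) := hqc.add hwc
    set F : ℝ → ℝ := fun t => ∫ s in (0:ℝ)..t, g s with hF
    have hFc : ContinuousOn F (Set.Ici (0:ℝ)) := primitive_contOn g hgc
    set G : ℝ → ℝ := fun t => w t * Real.exp (-(F t)) with hG
    have hGc : ContinuousOn G (Set.Icc (0:ℝ) T) := by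
      apply ContinuousOn.mul (hwc.mono Set.Icc_subset_Ici_self)
      exact (Real.continuous_exp.comp_continuousOn
        ((hFc.mono Set.Icc_subset_Ici_self).neg))
    have hGd : ∀ x ∈ Set.Ico (0:ℝ) T, HasDerivWithinAt G 0 (Set.Ici x) x := by
      intro x hx
      have hFd : HasDerivWithinAt (fun t => -(F t)) (-(g x)) (Set.Ici x) x :=
        (ftc_helper g hgc hx.1).neg
      have hEd : HasDerivWithinAt (fun t => Real.exp (-(F t)))
          (Real.exp (-(F x)) * (-(g x))) (Set.Ici x) x := hFd.exp
      have h := (hwd x hx.1).mul hEd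
      refine h.congr_deriv ?_
      simp only [hg]; ring
    have hcon := constant_of_has_deriv_right_zero hGc hGd T (Set.right_mem_Icc.2 hT)
    have hG0 : G 0 = w 0 := by
      simp only [hG, hF, intervalIntegral.integral_same, neg_zero, Real.exp_zero, mul_one]
    rw [hG0] at hcon
    have hepos : 0 < Real.exp (-(F T)) := Real.exp_pos _
    have hconT : w T * Real.exp (-(F T)) = w 0 := hcon
    nlinarith [hconT, hepos, hw0]
  -- Step 2 : the key identity and contradiction
  set E : ℝ → ℝ := fun t => Real.exp (∫ s in (0:ℝ)..t, q s) with hE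
  have hQc : ContinuousOn (fun t => ∫ s in (0:ℝ)..t, q s) (Set.Ici (0:ℝ)) :=
    primitive_contOn q hqc
  have hEc : ContinuousOn E (Set.Ici (0:ℝ)) := Real.continuous_exp.comp_continuousOn hQc
  set Φ : ℝ → ℝ := fun t => E t * (w t)⁻¹ + ∫ s in (0:ℝ)..t, E s with hΦ
  have key : ∀ T ≥ (0:ℝ), (∫ s in (0:ℝ)..T, E s) ≤ (w 0)⁻¹ := by
    intro T hT
    have hΦc : ContinuousOn Φ (Set.Icc (0:ℝ) T) := by
      apply ContinuousOn.add
      · exact (hEc.mono Set.Icc_subset_Ici_self).mul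
          ((hwc.mono Set.Icc_subset_Ici_self).inv₀
            (fun x hx => ne_of_gt (hwpos x hx.1)))
      · exact (primitive_contOn E hEc).mono Set.Icc_subset_Ici_self
    have hΦd : ∀ x ∈ Set.Ico (0:ℝ) T, HasDerivWithinAt Φ 0 (Set.Ici x) x := by
      intro x hx
      have hwne : w x ≠ 0 := ne_of_gt (hwpos x hx.1)
      have hEd : HasDerivWithinAt E (E x * q x) (Set.Ici x) x :=
        (ftc_helper q hqc hx.1).exp
      have hWid : HasDerivWithinAt (fun t => (w t)⁻¹)
          (-((q x + w x) * w x) / (w x) ^ 2) (Set.Ici x) x := (hwd x hx.1).inv hwne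
      have hPd : HasDerivWithinAt (fun t => ∫ s in (0:ℝ)..t, E s) (E x) (Set.Ici x) x :=
        ftc_helper E hEc hx.1
      have h := (hEd.mul hWid).add hPd
      refine h.congr_deriv ?_
      field_simp
      ring
    have hcon := constant_of_has_deriv_right_zero hΦc hΦd T (Set.right_mem_Icc.2 hT)
    have hΦ0 : Φ 0 = (w 0)⁻¹ := by
      simp only [hΦ, hE, intervalIntegral.integral_same, Real.exp_zero, one_mul, add_zero]
    rw [hΦ0] at hcon
    have h1 : 0 < E T * (w T)⁻¹ :=
      mul_pos (Real.exp_pos _) (inv_pos.2 (hwpos T hT))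
    simp only [hΦ] at hcon
    linarith
  -- contradiction with hI
  have hI' : Tendsto (fun S => ∫ s in (0:ℝ)..S, E s) atTop atTop := hI
  obtain ⟨S, hS1, hS2⟩ := ((hI'.eventually_gt_atTop ((w 0)⁻¹)).and
    (eventually_ge_atTop (0:ℝ))).exists
  exact absurd (key S hS2) (not_le.2 hS1)
end

section
/- Let a, γ : [0,∞) → ℝ be continuous and bounded above and below by positive constants, let k > 0, and let p : [0,∞) → ℝ be a positive bounded differentiable solution of z'(t) = a(t)z(t) − z(t)² − kγ(t). Assume I := ∫₀^∞ exp(∫₀^t (a(s) − 2p(s)) ds) dt < ∞, that a(t) − 2p(t) ≤ 0 for all sufficiently large t, and that a(t) − 2p(t) → 0 as t → ∞. Then every differentiable solution z : [0,∞) → ℝ of the same equation with z(0) ≥ p(0) − 1/I satisfies z(t) − p(t) → 0 as t → ∞. -/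
open Real Filter MeasureTheory Set intervalIntegral

private lemma myFTC (f : ℝ → ℝ) (hf : ContinuousOn f (Set.Ici (0:ℝ))) {t : ℝ} (ht : 0 ≤ t) :
    HasDerivWithinAt (fun x => ∫ s in (0:ℝ)..x, f s) (f t) (Set.Ici (0:ℝ)) t := by
  have hii : IntervalIntegrable f volume 0 t :=
    (hf.mono (by rw [Set.uIcc_of_le ht]; exact Set.Icc_subset_Ici_self)).intervalIntegrable
  rcases eq_or_lt_of_le ht with h0 | h0
  · subst h0
    have hmeas : StronglyMeasurableAtFilter f (nhdsWithin 0 (Set.Ioi (0:ℝ))) volume := by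
      refine ⟨Set.Ici (0:ℝ), ?_, hf.aestronglyMeasurable measurableSet_Ici⟩
      exact Filter.mem_of_superset self_mem_nhdsWithin Set.Ioi_subset_Ici_self
    have hcw : ContinuousWithinAt f (Set.Ioi (0:ℝ)) 0 :=
      (hf 0 Set.self_mem_Ici).mono Set.Ioi_subset_Ici_self
    exact intervalIntegral.integral_hasDerivWithinAt_right
      (s := Set.Ici (0:ℝ)) (t := Set.Ioi (0:ℝ)) hii hmeas hcw
  · have hmem : Set.Ioi (0:ℝ) ∈ nhds t := Ioi_mem_nhds h0
    have hca : ContinuousAt f t :=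
      hf.continuousAt (Filter.mem_of_superset hmem Set.Ioi_subset_Ici_self)
    have hmeas : StronglyMeasurableAtFilter f (nhds t) volume :=
      ⟨Set.Ioi 0, hmem, (hf.mono Set.Ioi_subset_Ici_self).aestronglyMeasurable measurableSet_Ioi⟩
    exact (intervalIntegral.integral_hasDerivAt_right hii hmeas hca).hasDerivWithinAt

private lemma myConst (f : ℝ → ℝ)
    (hf : ∀ t ≥ (0:ℝ), HasDerivWithinAt f 0 (Set.Ici (0:ℝ)) t) {t : ℝ} (ht : 0 ≤ t) :
    f t = f 0 := by
  have hc : ContinuousOn f (Set.Icc 0 t) :=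
    fun s hs => ((hf s hs.1).continuousWithinAt).mono Set.Icc_subset_Ici_self
  exact constant_of_has_deriv_right_zero hc
    (fun s hs => (hf s hs.1).mono (Set.Ici_subset_Ici.mpr hs.1)) t ⟨ht, le_rfl⟩

private lemma expShift {ε : ℝ} (hε : 0 < ε) (t : ℝ) :
    ∫ s in Set.Ioi t, Real.exp (-(ε * (s - t))) = ε⁻¹ := by
  have hemb : MeasurableEmbedding (fun x : ℝ => x + t) :=
    (MeasurableEquiv.addRight t).measurableEmbedding
  have hmp : MeasurePreserving (fun x : ℝ => x + t) volume volume :=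
    measurePreserving_add_right volume t
  have hpre : (fun x : ℝ => x + t) ⁻¹' Set.Ioi t = Set.Ioi 0 := by
    ext x; simp
  have h1 := hmp.setIntegral_preimage_emb hemb
    (fun s => Real.exp (-(ε * (s - t)))) (Set.Ioi t)
  rw [hpre] at h1
  have h2 : ∀ x : ℝ, Real.exp (-(ε * (x + t - t))) = Real.exp (-(ε * x)) := by
    intro x; ring_nf
  simp only [h2] at h1
  rw [← h1]
  have h3 := MeasureTheory.integral_comp_mul_left_Ioi (fun x => Real.exp (-x)) 0 hε
  simp only [mul_zero] at h3
  rw [h3, integral_exp_neg_Ioi]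
  simp

private theorem tendsto_aux (q w : ℝ → ℝ) (I : ℝ)
    (hqc : ContinuousOn q (Set.Ici (0:ℝ)))
    (hw : ∀ t ≥ (0:ℝ), HasDerivWithinAt w (q t * w t - w t ^ 2) (Set.Ici (0:ℝ)) t)
    (hint : IntegrableOn (fun t => Real.exp (∫ s in (0:ℝ)..t, q s)) (Set.Ioi (0:ℝ)))
    (hI : I = ∫ t in Set.Ioi (0:ℝ), Real.exp (∫ s in (0:ℝ)..t, q s))
    (hlim : Tendsto q atTop (nhds 0))
    (hw0 : -(1/I) ≤ w 0) :
    Tendsto w atTop (nhds 0) := by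
  have hwc : ContinuousOn w (Set.Ici (0:ℝ)) := fun t ht => (hw t ht).continuousWithinAt
  set A : ℝ → ℝ := fun x => ∫ s in (0:ℝ)..x, q s with hA_def
  set E : ℝ → ℝ := fun x => Real.exp (A x) with hE_def
  set F : ℝ → ℝ := fun x => ∫ s in (0:ℝ)..x, E s with hF_def
  set R : ℝ → ℝ := fun x => ∫ s in (0:ℝ)..x, (q s - w s) with hR_def
  have hintE : IntegrableOn E (Set.Ioi (0:ℝ)) := hint
  have hIE : I = ∫ t in Set.Ioi (0:ℝ), E t := hI
  have hA : ∀ t ≥ (0:ℝ), HasDerivWithinAt A (q t) (Set.Ici (0:ℝ)) t :=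
    fun t ht => myFTC q hqc ht
  have hE : ∀ t ≥ (0:ℝ), HasDerivWithinAt E (E t * q t) (Set.Ici (0:ℝ)) t :=
    fun t ht => (hA t ht).exp
  have hEc : ContinuousOn E (Set.Ici (0:ℝ)) := fun t ht => (hE t ht).continuousWithinAt
  have hEpos : ∀ t, 0 < E t := fun t => Real.exp_pos _
  have hF : ∀ t ≥ (0:ℝ), HasDerivWithinAt F (E t) (Set.Ici (0:ℝ)) t :=
    fun t ht => myFTC E hEc ht
  have hrc : ContinuousOn (fun t => q t - w t) (Set.Ici (0:ℝ)) := hqc.sub hwc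
  have hR : ∀ t ≥ (0:ℝ), HasDerivWithinAt R (q t - w t) (Set.Ici (0:ℝ)) t :=
    fun t ht => myFTC _ hrc ht
  have hR0 : R 0 = 0 := intervalIntegral.integral_same
  have hA0 : A 0 = 0 := intervalIntegral.integral_same
  have hF0 : F 0 = 0 := intervalIntegral.integral_same
  have hE0 : E 0 = 1 := by rw [hE_def]; simp [hA0]
  have hEA : ∀ x, E x = Real.exp (A x) := fun x => rfl
  have hFIoc : ∀ t ≥ (0:ℝ), F t = ∫ s in Set.Ioc 0 t, E s :=
    fun t ht => intervalIntegral.integral_of_le ht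
  have hAadd : ∀ t s : ℝ, 0 ≤ t → t ≤ s → A s = A t + ∫ r in t..s, q r := by
    intro t s ht0 hts
    have hqcc : ContinuousOn q (Set.uIcc t s) := by
      apply hqc.mono
      rw [Set.uIcc_of_le hts]
      exact fun x hx => le_trans ht0 hx.1
    have hqcc0 : ContinuousOn q (Set.uIcc 0 t) := by
      apply hqc.mono
      rw [Set.uIcc_of_le ht0]
      exact Set.Icc_subset_Ici_self
    exact (intervalIntegral.integral_add_adjacent_intervals hqcc0.intervalIntegrable
      hqcc.intervalIntegrable).symm
  clear_value A E F R
  clear hA_def hE_def hF_def hR_def hint hI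
  -- sign preservation
  have hsign : ∀ t ≥ (0:ℝ), w t = w 0 * Real.exp (R t) := by
    intro t ht
    have hder : ∀ s ≥ (0:ℝ),
        HasDerivWithinAt (fun x => w x * Real.exp (-(R x))) 0 (Set.Ici (0:ℝ)) s := by
      intro s hs
      have h1 := (hw s hs).fun_mul (((hR s hs).neg).exp)
      exact h1.congr_deriv (by ring)
    have h0 := myConst _ hder ht
    rw [hR0, neg_zero, Real.exp_zero, mul_one] at h0
    have := Real.exp_ne_zero (R t)
    rw [Real.exp_neg] at h0
    field_simp at h0
    linarith [h0]
  rcases eq_or_ne (w 0) 0 with h0 | h0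
  · have hev : (fun _ : ℝ => (0:ℝ)) =ᶠ[atTop] w := by
      filter_upwards [eventually_ge_atTop (0:ℝ)] with t ht
      rw [hsign t ht, h0, zero_mul]
    exact Tendsto.congr' hev tendsto_const_nhds
  · have hwne : ∀ t ≥ (0:ℝ), w t ≠ 0 := fun t ht => by
      rw [hsign t ht]; exact mul_ne_zero h0 (Real.exp_ne_zero _)
    have hu : ∀ t ≥ (0:ℝ),
        HasDerivWithinAt (fun x => (w x)⁻¹) (1 - q t * (w t)⁻¹) (Set.Ici (0:ℝ)) t := by
      intro t ht
      have h1 := (hw t ht).inv (hwne t ht)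
      have hne := hwne t ht
      have heq : -(q t * w t - w t ^ 2) / w t ^ 2 = 1 - q t * (w t)⁻¹ := by
        rw [div_eq_iff (pow_ne_zero 2 hne)]
        field_simp
        ring
      exact heq ▸ h1
    have hkey : ∀ t ≥ (0:ℝ), (w t)⁻¹ * E t = (w 0)⁻¹ + F t := by
      intro t ht
      have hder : ∀ s ≥ (0:ℝ),
          HasDerivWithinAt (fun x => (w x)⁻¹ * E x - F x) 0 (Set.Ici (0:ℝ)) s := by
        intro s hs
        have h1 := ((hu s hs).fun_mul (hE s hs)).fun_sub (hF s hs)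
        exact h1.congr_deriv (by ring)
      have h0' := myConst _ hder ht
      rw [hF0, hE0, mul_one] at h0'
      linarith [h0']
    -- integral splitting
    have hsplitJ : ∀ t ≥ (0:ℝ), F t + (∫ s in Set.Ioi t, E s) = I := by
      intro t ht
      rw [hIE, hFIoc t ht,
        ← MeasureTheory.setIntegral_union (Set.Ioc_disjoint_Ioi le_rfl) measurableSet_Ioi
          (hintE.mono_set Set.Ioc_subset_Ioi_self) (hintE.mono_set (Set.Ioi_subset_Ioi ht)),
        Set.Ioc_union_Ioi_eq_Ioi ht]
    have hJpos : ∀ t ≥ (0:ℝ), 0 < ∫ s in Set.Ioi t, E s := by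
      intro t ht
      have hcc : ContinuousOn E (Set.uIcc t (t+1)) := by
        apply hEc.mono
        rw [Set.uIcc_of_le (by linarith : t ≤ t + 1)]
        exact fun x hx => le_trans ht hx.1
      have h1 : (0:ℝ) < ∫ s in t..(t+1), E s := by
        apply intervalIntegral.intervalIntegral_pos_of_pos_on hcc.intervalIntegrable
        · exact fun x _ => hEpos x
        · linarith
      have h2 : ∫ s in t..(t+1), E s = ∫ s in Set.Ioc t (t+1), E s :=
        intervalIntegral.integral_of_le (by linarith)
      have h3 : (∫ s in Set.Ioc t (t+1), E s) ≤ ∫ s in Set.Ioi t, E s := by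
        apply MeasureTheory.setIntegral_mono_set (hintE.mono_set (Set.Ioi_subset_Ioi ht))
        · exact Filter.Eventually.of_forall fun x => (hEpos x).le
        · exact HasSubset.Subset.eventuallyLE Set.Ioc_subset_Ioi_self
      linarith
    have hIpos : 0 < I := by
      have h1 := hsplitJ 0 le_rfl
      have h2 := hJpos 0 le_rfl
      linarith
    have hFnonneg : ∀ t ≥ (0:ℝ), 0 ≤ F t := by
      intro t ht
      rw [hFIoc t ht]
      exact setIntegral_nonneg measurableSet_Ioc fun x _ => (hEpos x).le
    -- key estimate
    have key2 : ∀ ε > (0:ℝ), ∃ T ≥ (0:ℝ), ∀ t ≥ T, E t ≤ ε * ∫ s in Set.Ioi t, E s := by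
      intro ε hε
      have h1 : ∀ᶠ s in atTop, q s ∈ Set.Ioi (-ε) :=
        hlim (Ioi_mem_nhds (by linarith : -ε < (0:ℝ)))
      obtain ⟨T₀, hT₀⟩ := eventually_atTop.mp h1
      refine ⟨max T₀ 0, le_max_right _ _, fun t htT => ?_⟩
      have ht0 : (0:ℝ) ≤ t := le_trans (le_max_right _ _) htT
      have htT0 : T₀ ≤ t := le_trans (le_max_left _ _) htT
      have hEbound : ∀ s ∈ Set.Ioi t, E t * Real.exp (-(ε * (s - t))) ≤ E s := by
        intro s hs
        have hts : t ≤ s := le_of_lt hs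
        have hqcc : ContinuousOn q (Set.uIcc t s) := by
          apply hqc.mono
          rw [Set.uIcc_of_le hts]
          exact fun x hx => le_trans ht0 hx.1
        have hqint : IntervalIntegrable q volume t s := hqcc.intervalIntegrable
        have hAdiff : A s = A t + ∫ r in t..s, q r := hAadd t s ht0 hts
        have hlow : -(ε * (s - t)) ≤ ∫ r in t..s, q r := by
          have hmono : (∫ _ in t..s, (-ε)) ≤ ∫ r in t..s, q r := by
            apply intervalIntegral.integral_mono_on hts intervalIntegrable_const hqint
            intro x hx
            exact le_of_lt (hT₀ x (le_trans htT0 hx.1))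
          rw [intervalIntegral.integral_const, smul_eq_mul] at hmono
          nlinarith [hmono]
        calc E t * Real.exp (-(ε * (s - t)))
            = Real.exp (A t + -(ε * (s - t))) := by rw [Real.exp_add, hEA]
          _ ≤ Real.exp (A s) := by
              rw [hAdiff]; exact Real.exp_le_exp.2 (by linarith)
          _ = E s := (hEA s).symm
      have hInt2 : IntegrableOn (fun s => E t * Real.exp (-(ε * (s - t)))) (Set.Ioi t) := by
        have base : IntegrableOn (fun s : ℝ => Real.exp (-ε * s)) (Set.Ioi t) :=
          exp_neg_integrableOn_Ioi t hε
        have b2 : IntegrableOn (fun s : ℝ => (E t * Real.exp (ε * t)) * Real.exp (-ε * s))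
            (Set.Ioi t) := base.const_mul _
        have heq : (fun s : ℝ => E t * Real.exp (-(ε * (s - t))))
            = fun s : ℝ => (E t * Real.exp (ε * t)) * Real.exp (-ε * s) := by
          funext s
          rw [mul_assoc, ← Real.exp_add]
          congr 1
          ring
        rw [heq]
        exact b2
      have hmono := MeasureTheory.setIntegral_mono_on hInt2
        (hintE.mono_set (Set.Ioi_subset_Ioi ht0)) measurableSet_Ioi hEbound
      rw [MeasureTheory.integral_const_mul, expShift hε t] at hmono
      have h2 := mul_le_mul_of_nonneg_left hmono hε.le
      calc E t = ε * (E t * ε⁻¹) := by field_simp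
        _ ≤ ε * ∫ s in Set.Ioi t, E s := h2
    -- formula for w
    have hformula : ∀ t ≥ (0:ℝ), w t * ((w 0)⁻¹ + F t) = E t := by
      intro t ht
      rw [← hkey t ht, ← mul_assoc, mul_inv_cancel₀ (hwne t ht), one_mul]
    -- conclude
    rw [NormedAddCommGroup.tendsto_nhds_zero]
    intro ε hε
    rcases lt_or_gt_of_ne h0 with hwneg | hwpos
    · -- w 0 < 0
      have hu0 : (w 0)⁻¹ ≤ -I := by
        have h1 : w 0 * (w 0)⁻¹ = 1 := mul_inv_cancel₀ h0
        have h2 : (w 0)⁻¹ < 0 := inv_lt_zero.2 hwneg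
        have h3 : -(1/I) * I = -1 := by field_simp
        nlinarith [mul_le_mul_of_nonneg_right hw0 hIpos.le]
      obtain ⟨T, hT0, hT⟩ := key2 (ε/2) (by linarith)
      filter_upwards [eventually_ge_atTop (max T 0)] with t ht
      have ht0 : (0:ℝ) ≤ t := le_trans (le_max_right _ _) ht
      have htT : T ≤ t := le_trans (le_max_left _ _) ht
      have hJ := hJpos t ht0
      have hsp := hsplitJ t ht0
      have hEe := hT t htT
      have hden : (w 0)⁻¹ + F t ≤ -(∫ s in Set.Ioi t, E s) := by linarith
      have hdenneg : (w 0)⁻¹ + F t < 0 := by linarith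
      have hwt : w t < 0 := by
        rw [hsign t ht0]
        exact mul_neg_of_neg_of_pos hwneg (Real.exp_pos _)
      have hf := hformula t ht0
      have hnwt : -w t ≤ ε/2 := by
        have h5 : (-w t) * (-((w 0)⁻¹ + F t)) = E t := by nlinarith [hf]
        have h6 : E t ≤ (ε/2) * (-((w 0)⁻¹ + F t)) := by
          calc E t ≤ (ε/2) * ∫ s in Set.Ioi t, E s := hEe
            _ ≤ (ε/2) * (-((w 0)⁻¹ + F t)) := by
                apply mul_le_mul_of_nonneg_left (by linarith) (by linarith)
        have h7 : 0 < -((w 0)⁻¹ + F t) := by linarith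
        nlinarith
      rw [Real.norm_eq_abs, abs_of_neg hwt]
      linarith
    · -- w 0 > 0
      have hu0 : 0 < (w 0)⁻¹ := inv_pos.2 hwpos
      have hεpos : 0 < ε * (w 0)⁻¹ / (2 * (I + 1)) := by positivity
      obtain ⟨T, hT0, hT⟩ := key2 _ hεpos
      filter_upwards [eventually_ge_atTop (max T 0)] with t ht
      have ht0 : (0:ℝ) ≤ t := le_trans (le_max_right _ _) ht
      have htT : T ≤ t := le_trans (le_max_left _ _) ht
      have hJ := hJpos t ht0
      have hsp := hsplitJ t ht0
      have hFn := hFnonneg t ht0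
      have hEe := hT t htT
      have hwt : 0 < w t := by
        rw [hsign t ht0]
        exact mul_pos hwpos (Real.exp_pos _)
      have hf := hformula t ht0
      have hJle : (∫ s in Set.Ioi t, E s) ≤ I := by linarith
      have hEleI : E t ≤ ε * (w 0)⁻¹ / (2 * (I + 1)) * I := by
        calc E t ≤ ε * (w 0)⁻¹ / (2 * (I + 1)) * ∫ s in Set.Ioi t, E s := hEe
          _ ≤ ε * (w 0)⁻¹ / (2 * (I + 1)) * I :=
              mul_le_mul_of_nonneg_left hJle hεpos.le
      have hineq : w t * (w 0)⁻¹ ≤ E t := by nlinarith [hf]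
      rw [Real.norm_eq_abs, abs_of_pos hwt]
      have hII : ε * (w 0)⁻¹ / (2 * (I + 1)) * I < ε * (w 0)⁻¹ := by
        rw [div_mul_eq_mul_div, div_lt_iff₀ (by linarith)]
        nlinarith [mul_pos (mul_pos hε hu0) (show (0:ℝ) < I + 2 by linarith)]
      have hlt : w t * (w 0)⁻¹ < ε * (w 0)⁻¹ := by linarith
      exact lt_of_mul_lt_mul_right hlt hu0.le

theorem stmt14 (a γ p : ℝ → ℝ) (k a₁ a₂ γ₁ γ₂ I : ℝ)
    (ha : ContinuousOn a (Set.Ici (0:ℝ)))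
    (hγ : ContinuousOn γ (Set.Ici (0:ℝ)))
    (ha₁ : 0 < a₁) (hγ₁ : 0 < γ₁)
    (haB : ∀ t ≥ (0:ℝ), a₁ ≤ a t ∧ a t ≤ a₂)
    (hγB : ∀ t ≥ (0:ℝ), γ₁ ≤ γ t ∧ γ t ≤ γ₂)
    (hk : 0 < k)
    (hp : ∀ t ≥ (0:ℝ), HasDerivWithinAt p (a t * p t - p t ^ 2 - k * γ t) (Set.Ici (0:ℝ)) t)
    (hppos : ∀ t ≥ (0:ℝ), 0 < p t)
    (hpbd : ∃ M : ℝ, ∀ t ≥ (0:ℝ), |p t| ≤ M)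
    (hint : IntegrableOn (fun t => Real.exp (∫ s in (0:ℝ)..t, a s - 2 * p s)) (Set.Ioi (0:ℝ)))
    (hI : I = ∫ t in Set.Ioi (0:ℝ), Real.exp (∫ s in (0:ℝ)..t, a s - 2 * p s))
    (hneg : ∃ t₀ ≥ (0:ℝ), ∀ t ≥ t₀, a t - 2 * p t ≤ 0)
    (hlim : Tendsto (fun t => a t - 2 * p t) atTop (nhds 0)) :
    ∀ z : ℝ → ℝ,
      (∀ t ≥ (0:ℝ), HasDerivWithinAt z (a t * z t - z t ^ 2 - k * γ t) (Set.Ici (0:ℝ)) t) →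
      z 0 ≥ p 0 - 1 / I →
      Tendsto (fun t => z t - p t) atTop (nhds 0) := by
  intro z hz hz0
  have hpc : ContinuousOn p (Set.Ici (0:ℝ)) := fun t ht => (hp t ht).continuousWithinAt
  have hqc : ContinuousOn (fun t => a t - 2 * p t) (Set.Ici (0:ℝ)) :=
    ha.sub (continuousOn_const.mul hpc)
  have hw : ∀ t ≥ (0:ℝ), HasDerivWithinAt (fun t => z t - p t)
      ((a t - 2 * p t) * (z t - p t) - (z t - p t) ^ 2) (Set.Ici (0:ℝ)) t := by
    intro t ht
    have h := (hz t ht).fun_sub (hp t ht)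
    exact h.congr_deriv (by ring)
  exact tendsto_aux (fun t => a t - 2 * p t) (fun t => z t - p t) I hqc hw hint hI hlim
    (by linarith)
end

section
/- Let a, γ : [0,∞) → ℝ be continuous and bounded above and below by positive constants, let k > 0, and let p : [0,∞) → ℝ be a positive bounded differentiable solution of z'(t) = a(t)z(t) − z(t)² − kγ(t). Assume I := ∫₀^∞ exp(∫₀^t (a(s) − 2p(s)) ds) dt < ∞. Set μ(t) = exp(∫₀^t (a(s) − 2p(s)) ds) and p₁(t) = p(t) + μ(t)/(−I + ∫₀^t μ(s) ds). Then p₁ is a differentiable solution of the same equation on [0,∞) with p₁(0) = p(0) − 1/I, p₁(t) > 0 for all t ≥ 0, p₁ is bounded, p₁(t) < p(t) for all t ≥ 0, and ∫₀^∞ (p(t) − p₁(t)) dt = ∞; that is, p₁ is a positive bounded solution separated from p. -/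
open Real Filter MeasureTheory Set intervalIntegral Topology

lemma ftc_aux (f : ℝ → ℝ) (hf : ContinuousOn f (Set.Ici (0:ℝ)))
    {b : ℝ} (hb : 0 ≤ b) :
    HasDerivWithinAt (fun u => ∫ x in (0:ℝ)..u, f x) (f b) (Set.Ici (0:ℝ)) b := by
  have hfi : IntervalIntegrable f volume 0 b :=
    (hf.mono (Set.ordConnected_Ici.uIcc_subset le_rfl hb)).intervalIntegrable
  rcases eq_or_lt_of_le hb with h | h
  · subst h
    exact intervalIntegral.integral_hasDerivWithinAt_right (t := Set.Ioi 0) hfi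
      ⟨Set.Ici 0, Filter.mem_of_superset self_mem_nhdsWithin (Set.Ioi_subset_Ici le_rfl),
        hf.aestronglyMeasurable measurableSet_Ici⟩
      ((hf 0 Set.self_mem_Ici).mono (Set.Ioi_subset_Ici le_rfl))
  · have hca : ContinuousAt f b := (hf b h.le).continuousAt (Ici_mem_nhds h)
    have hmeas : StronglyMeasurableAtFilter f (𝓝 b) volume :=
      ContinuousOn.stronglyMeasurableAtFilter isOpen_Ioi
        (hf.mono (Set.Ioi_subset_Ici le_rfl)) b h
    exact (intervalIntegral.integral_hasDerivAt_right hfi hmeas hca).hasDerivWithinAt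

theorem stmt15 (a γ p : ℝ → ℝ) (k a₁ a₂ γ₁ γ₂ I : ℝ)
    (ha : ContinuousOn a (Set.Ici (0:ℝ)))
    (hγ : ContinuousOn γ (Set.Ici (0:ℝ)))
    (ha₁ : 0 < a₁) (hγ₁ : 0 < γ₁)
    (haB : ∀ t ≥ (0:ℝ), a₁ ≤ a t ∧ a t ≤ a₂)
    (hγB : ∀ t ≥ (0:ℝ), γ₁ ≤ γ t ∧ γ t ≤ γ₂)
    (hk : 0 < k)
    (hp : ∀ t ≥ (0:ℝ), HasDerivWithinAt p (a t * p t - p t ^ 2 - k * γ t) (Set.Ici (0:ℝ)) t)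
    (hppos : ∀ t ≥ (0:ℝ), 0 < p t)
    (hpbd : ∃ M : ℝ, ∀ t ≥ (0:ℝ), |p t| ≤ M)
    (hint : IntegrableOn (fun t => Real.exp (∫ s in (0:ℝ)..t, a s - 2 * p s)) (Set.Ioi (0:ℝ)))
    (hI : I = ∫ t in Set.Ioi (0:ℝ), Real.exp (∫ s in (0:ℝ)..t, a s - 2 * p s))
    (p₁ : ℝ → ℝ)
    (hp₁def : ∀ t : ℝ, p₁ t = p t +
      Real.exp (∫ s in (0:ℝ)..t, a s - 2 * p s) /
        (-I + ∫ s in (0:ℝ)..t, Real.exp (∫ u in (0:ℝ)..s, a u - 2 * p u))) :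
    (∀ t ≥ (0:ℝ), HasDerivWithinAt p₁ (a t * p₁ t - p₁ t ^ 2 - k * γ t) (Set.Ici (0:ℝ)) t) ∧
    p₁ 0 = p 0 - 1 / I ∧
    (∀ t ≥ (0:ℝ), 0 < p₁ t) ∧
    (∃ M : ℝ, ∀ t ≥ (0:ℝ), |p₁ t| ≤ M) ∧
    (∀ t ≥ (0:ℝ), p₁ t < p t) ∧
    Tendsto (fun S => ∫ t in (0:ℝ)..S, p t - p₁ t) atTop atTop := by
  obtain ⟨M, hM⟩ := hpbd
  have hpC : ContinuousOn p (Set.Ici 0) := fun t ht => (hp t ht).continuousWithinAt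
  set f : ℝ → ℝ := fun s => a s - 2 * p s with hfdef
  have hfC : ContinuousOn f (Set.Ici 0) := ha.sub (continuousOn_const.mul hpC)
  set A : ℝ → ℝ := fun t => ∫ s in (0:ℝ)..t, f s with hAdef
  set μ : ℝ → ℝ := fun t => Real.exp (A t) with hmudef
  have hAD : ∀ t ∈ Set.Ici (0:ℝ), HasDerivWithinAt A (f t) (Set.Ici 0) t :=
    fun t ht => ftc_aux f hfC ht
  have hμD : ∀ t ∈ Set.Ici (0:ℝ), HasDerivWithinAt μ (f t * μ t) (Set.Ici 0) t := by
    intro t ht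
    simpa [hmudef, mul_comm] using (hAD t ht).exp
  have hμpos : ∀ t, 0 < μ t := fun t => Real.exp_pos _
  have hμC : ContinuousOn μ (Set.Ici 0) := fun t ht => (hμD t ht).continuousWithinAt
  have hμInt : ∀ u v : ℝ, 0 ≤ u → 0 ≤ v → IntervalIntegrable μ volume u v :=
    fun u v hu hv => (hμC.mono (Set.ordConnected_Ici.uIcc_subset hu hv)).intervalIntegrable
  have hfInt : ∀ u v : ℝ, 0 ≤ u → 0 ≤ v → IntervalIntegrable f volume u v :=
    fun u v hu hv => (hfC.mono (Set.ordConnected_Ici.uIcc_subset hu hv)).intervalIntegrable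
  set F : ℝ → ℝ := fun t => -I + ∫ s in (0:ℝ)..t, μ s with hFdef
  have hFD : ∀ t ∈ Set.Ici (0:ℝ), HasDerivWithinAt F (μ t) (Set.Ici 0) t :=
    fun t ht => (ftc_aux μ hμC ht).const_add (-I)
  have hFC : ContinuousOn F (Set.Ici 0) := fun t ht => (hFD t ht).continuousWithinAt
  have hintμ : IntegrableOn μ (Set.Ioi 0) volume := hint
  have hIμ : I = ∫ t in Set.Ioi (0:ℝ), μ t := hI
  have hP1 : ∀ t, p₁ t = p t + μ t / F t := fun t => hp₁def t
  have hIoi : ∀ t : ℝ, 0 ≤ t → IntegrableOn μ (Set.Ioi t) volume :=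
    fun t ht => hintμ.mono_set (Set.Ioi_subset_Ioi ht)
  have htail : ∀ t : ℝ, 0 ≤ t → F t = -(∫ x in Set.Ioi t, μ x) := by
    intro t ht
    have h1 : (∫ s in (0:ℝ)..t, μ s) = ∫ x in Set.Ioc 0 t, μ x :=
      intervalIntegral.integral_of_le ht
    have h2 : (∫ x in Set.Ioi (0:ℝ), μ x) = (∫ x in Set.Ioc 0 t, μ x) + ∫ x in Set.Ioi t, μ x := by
      rw [← MeasureTheory.setIntegral_union (Set.Ioc_disjoint_Ioi le_rfl) measurableSet_Ioi
        (hintμ.mono_set Set.Ioc_subset_Ioi_self) (hIoi t ht), Set.Ioc_union_Ioi_eq_Ioi ht]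
    have h3 : F t = -I + ∫ s in (0:ℝ)..t, μ s := by rw [hFdef]
    rw [h3, h1, hIμ, h2]; ring
  -- lower bound for tail integral
  set c₀ : ℝ := min (a₁ - 2 * M) 0 with hc0def
  have hc0np : c₀ ≤ 0 := min_le_right _ _
  have hfge : ∀ s : ℝ, 0 ≤ s → c₀ ≤ f s := by
    intro s hs
    have h1 := (haB s hs).1
    have h2 := abs_le.mp (hM s hs)
    have h3 : c₀ ≤ a₁ - 2 * M := min_le_left _ _
    have h4 : f s = a s - 2 * p s := by rw [hfdef]
    rw [h4]; linarith [h2.2]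
  have hμlow : ∀ t : ℝ, 0 ≤ t → ∀ s ∈ Set.Icc t (t+1), μ t * Real.exp c₀ ≤ μ s := by
    intro t ht s hs
    have hts : t ≤ s := hs.1
    have hs0 : (0:ℝ) ≤ s := le_trans ht hts
    have hadd : A t + ∫ x in t..s, f x = A s :=
      intervalIntegral.integral_add_adjacent_intervals (hfInt 0 t le_rfl ht) (hfInt t s ht hs0)
    have hmono : c₀ * (s - t) ≤ ∫ x in t..s, f x := by
      have := intervalIntegral.integral_mono_on hts intervalIntegrable_const
        (hfInt t s ht hs0) (fun x hx => hfge x (le_trans ht hx.1))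
      simpa [intervalIntegral.integral_const, smul_eq_mul, mul_comm] using this
    have h2 : c₀ ≤ ∫ x in t..s, f x := by nlinarith [hs.2]
    have h5 : μ t * Real.exp c₀ = Real.exp (A t + c₀) := by
      rw [Real.exp_add, hmudef]
    have h6 : μ s = Real.exp (A t + ∫ x in t..s, f x) := by rw [hadd, hmudef]
    rw [h5, h6]
    exact Real.exp_le_exp.mpr (by linarith)
  have htailbd : ∀ t : ℝ, 0 ≤ t → μ t * Real.exp c₀ ≤ ∫ x in Set.Ioi t, μ x := by
    intro t ht
    have h1 : μ t * Real.exp c₀ * (volume (Set.Ioc t (t+1))).toReal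
        ≤ ∫ x in Set.Ioc t (t+1), μ x := by
      have := MeasureTheory.setIntegral_ge_of_const_le measurableSet_Ioc (by simp)
        (fun x hx => hμlow t ht x ⟨le_of_lt hx.1, hx.2⟩)
        ((hIoi t ht).mono_set Set.Ioc_subset_Ioi_self)
      rw [smul_eq_mul, mul_comm] at this; exact this
    have h2 : (volume (Set.Ioc t (t+1))).toReal = 1 := by simp
    have h3 : (∫ x in Set.Ioc t (t+1), μ x) ≤ ∫ x in Set.Ioi t, μ x := by
      apply MeasureTheory.setIntegral_mono_set (hIoi t ht)
      · exact Filter.Eventually.of_forall (fun x => (hμpos x).le)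
      · exact HasSubset.Subset.eventuallyLE Set.Ioc_subset_Ioi_self
    rw [h2] at h1; linarith
  have hFneg : ∀ t : ℝ, 0 ≤ t → F t < 0 := by
    intro t ht
    rw [htail t ht]
    have h1 := htailbd t ht
    nlinarith [hμpos t, Real.exp_pos c₀]
  have hFne : ∀ t : ℝ, 0 ≤ t → F t ≠ 0 := fun t ht => (hFneg t ht).ne
  have hF0 : Tendsto F atTop (𝓝 0) := by
    have h1 := MeasureTheory.intervalIntegral_tendsto_integral_Ioi 0 hintμ tendsto_id
    have h2 : Tendsto F atTop (𝓝 (-I + ∫ x in Set.Ioi (0:ℝ), μ x)) := by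
      rw [hFdef]; exact tendsto_const_nhds.add h1
    rw [← hIμ] at h2; simpa using h2
  have hμ0 : Tendsto μ atTop (𝓝 0) := by
    have hub : ∀ t : ℝ, 0 ≤ t → μ t ≤ Real.exp (-c₀) * (-F t) := by
      intro t ht
      have h1 := htailbd t ht
      have h2 := htail t ht
      have h3 : μ t * Real.exp c₀ ≤ -F t := by rw [h2]; linarith
      have h4 : Real.exp (-c₀) * (μ t * Real.exp c₀) ≤ Real.exp (-c₀) * (-F t) :=
        mul_le_mul_of_nonneg_left h3 (Real.exp_pos _).le
      calc μ t = Real.exp (-c₀) * (μ t * Real.exp c₀) := by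
              rw [mul_comm (μ t), ← mul_assoc, ← Real.exp_add]; simp
        _ ≤ _ := h4
    have hlim : Tendsto (fun t => Real.exp (-c₀) * (-F t)) atTop (𝓝 0) := by
      have := (hF0.neg).const_mul (Real.exp (-c₀))
      simpa using this
    apply tendsto_of_tendsto_of_tendsto_of_le_of_le' tendsto_const_nhds hlim
    · exact Filter.Eventually.of_forall (fun t => (hμpos t).le)
    · filter_upwards [eventually_ge_atTop (0:ℝ)] with t ht using hub t ht
  -- the auxiliary function H
  set H : ℝ → ℝ := fun t => F t + μ t / p t with hHdef
  have hHD : ∀ t ∈ Set.Ici (0:ℝ), HasDerivWithinAt H (μ t * (k * γ t) / p t ^ 2) (Set.Ici 0) t := by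
    intro t ht
    have hpne : p t ≠ 0 := (hppos t ht).ne'
    have hd := (hFD t ht).add ((hμD t ht).div (hp t ht) hpne)
    have heq : μ t + ((f t * μ t) * p t - μ t * (a t * p t - p t ^ 2 - k * γ t)) / p t ^ 2
        = μ t * (k * γ t) / p t ^ 2 := by
      have h4 : f t = a t - 2 * p t := by rw [hfdef]
      rw [h4]; field_simp; ring
    rw [hHdef]; exact heq ▸ hd
  have hHC : ContinuousOn H (Set.Ici 0) := fun t ht => (hHD t ht).continuousWithinAt
  have hHmono : StrictMonoOn H (Set.Ici 0) := by
    apply strictMonoOn_of_deriv_pos (convex_Ici 0) hHC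
    intro x hx
    rw [interior_Ici] at hx
    have hx0 : (0:ℝ) ≤ x := hx.le
    have hda : HasDerivAt H (μ x * (k * γ x) / p x ^ 2) x :=
      (hHD x hx0).hasDerivAt (Ici_mem_nhds hx)
    rw [hda.deriv]
    have hγx : 0 < γ x := lt_of_lt_of_le hγ₁ (hγB x hx0).1
    have hpx := hppos x hx0
    have hμx := hμpos x
    positivity
  have hHneg : ∀ t : ℝ, 0 ≤ t → H t < 0 := by
    by_contra hcon
    push_neg at hcon
    obtain ⟨t₀, ht₀, hH0⟩ := hcon
    have ht₁ : (0:ℝ) ≤ t₀ + 1 := by linarith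
    have hε : 0 < H (t₀ + 1) :=
      lt_of_le_of_lt hH0 (hHmono ht₀ ht₁ (by linarith))
    have hple : ∀ t : ℝ, t₀ + 1 ≤ t → p t ≤ μ t / H (t₀ + 1) := by
      intro t ht
      have ht0 : (0:ℝ) ≤ t := le_trans ht₁ ht
      have h1 : H (t₀ + 1) ≤ H t := by
        rcases eq_or_lt_of_le ht with h | h
        · rw [h]
        · exact (hHmono ht₁ ht0 h).le
      have hFt := hFneg t ht0
      have h2 : H (t₀ + 1) ≤ μ t / p t := by
        have h3 : H t = F t + μ t / p t := by rw [hHdef]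
        linarith [h3 ▸ h1]
      have h3 : H (t₀ + 1) * p t ≤ μ t := (le_div_iff₀ (hppos t ht0)).mp h2
      rw [le_div_iff₀ hε]; linarith
    have hp0 : Tendsto p atTop (𝓝 0) := by
      have hlim : Tendsto (fun t => μ t / H (t₀ + 1)) atTop (𝓝 0) := by
        simpa using hμ0.div_const (H (t₀ + 1))
      apply tendsto_of_tendsto_of_tendsto_of_le_of_le' tendsto_const_nhds hlim
      · filter_upwards [eventually_ge_atTop (0:ℝ)] with t ht using (hppos t ht).le
      · filter_upwards [eventually_ge_atTop (t₀ + 1)] with t ht using hple t ht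
    have ha₂ : 0 < a₂ := lt_of_lt_of_le ha₁ (le_trans (haB 0 le_rfl).1 (haB 0 le_rfl).2)
    set δ : ℝ := k * γ₁ / (2 * a₂) with hδdef
    have hδ : 0 < δ := by positivity
    set c : ℝ := k * γ₁ / 2 with hcdef
    have hc : 0 < c := by positivity
    obtain ⟨T0, hT0⟩ := (hp0.eventually (gt_mem_nhds hδ)).exists_forall_of_atTop
    set T : ℝ := max T0 0 with hTdef
    have hT0' : ∀ t : ℝ, T ≤ t → p t < δ := fun t ht => hT0 t (le_trans (le_max_left _ _) ht)
    have hTnn : (0:ℝ) ≤ T := le_max_right _ _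
    have hderivbd : ∀ x : ℝ, T < x → a x * p x - p x ^ 2 - k * γ x ≤ -c := by
      intro x hx
      have hx0 : (0:ℝ) ≤ x := le_trans hTnn hx.le
      have h1 : a x * p x ≤ a₂ * p x :=
        mul_le_mul_of_nonneg_right (haB x hx0).2 (hppos x hx0).le
      have h2 : a₂ * p x ≤ a₂ * δ := mul_le_mul_of_nonneg_left (hT0' x hx.le).le ha₂.le
      have h3 : a₂ * δ = c := by rw [hδdef, hcdef]; field_simp
      have h4 : k * γ₁ ≤ k * γ x := mul_le_mul_of_nonneg_left (hγB x hx0).1 hk.le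
      have h5 : (0:ℝ) ≤ p x ^ 2 := sq_nonneg _
      have h6 : c = k * γ₁ - c := by rw [hcdef]; ring
      nlinarith
    have hanti : AntitoneOn (fun t => p t + c * t) (Set.Ici T) := by
      apply antitoneOn_of_deriv_nonpos (convex_Ici T)
      · exact ((hpC.mono (Set.Ici_subset_Ici.mpr hTnn)).add
          (continuousOn_const.mul continuousOn_id))
      · intro x hx
        rw [interior_Ici] at hx
        have hx0 : (0:ℝ) ≤ x := le_trans hTnn hx.le
        have hda : HasDerivAt (fun t => p t + c * t) ((a x * p x - p x ^ 2 - k * γ x) + c) x := by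
          have h1 : HasDerivAt p (a x * p x - p x ^ 2 - k * γ x) x :=
            (hp x hx0).hasDerivAt (Ici_mem_nhds (lt_of_le_of_lt hTnn hx))
          exact h1.add (by simpa using (hasDerivAt_id x).const_mul c)
        exact hda.differentiableAt.differentiableWithinAt
      · intro x hx
        rw [interior_Ici] at hx
        have hx0 : (0:ℝ) ≤ x := le_trans hTnn hx.le
        have hda : HasDerivAt (fun t => p t + c * t) ((a x * p x - p x ^ 2 - k * γ x) + c) x := by
          have h1 : HasDerivAt p (a x * p x - p x ^ 2 - k * γ x) x :=
            (hp x hx0).hasDerivAt (Ici_mem_nhds (lt_of_le_of_lt hTnn hx))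
          exact h1.add (by simpa using (hasDerivAt_id x).const_mul c)
        rw [hda.deriv]
        linarith [hderivbd x hx]
    set t₂ : ℝ := T + (p T + 1) / c with ht₂def
    have hpT : 0 < p T := hppos T hTnn
    have ht₂ : T ≤ t₂ := by
      rw [ht₂def]
      have : 0 ≤ (p T + 1) / c := by positivity
      linarith
    have h1 : p t₂ + c * t₂ ≤ p T + c * T :=
      hanti Set.self_mem_Ici ht₂ ht₂
    have h2 : c * t₂ = c * T + (p T + 1) := by
      rw [ht₂def]; field_simp
    have h3 : p t₂ ≤ -1 := by nlinarith
    have h4 := hppos t₂ (le_trans hTnn ht₂)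
    linarith
  have hkey : ∀ t : ℝ, 0 ≤ t → 0 < p t + μ t / F t := by
    intro t ht
    have hFt := hFneg t ht
    have hpt := hppos t ht
    have hμt := hμpos t
    have hHt : F t + μ t / p t < 0 := by
      have h := hHneg t ht
      rw [hHdef] at h; exact h
    have h1 : μ t / p t < -F t := by linarith
    have h2 : μ t < -F t * p t := (div_lt_iff₀ hpt).mp h1
    have h3 : -p t < μ t / F t := by
      rw [lt_div_iff_of_neg hFt]; nlinarith
    linarith
  have hlt : ∀ t : ℝ, 0 ≤ t → p₁ t < p t := by
    intro t ht
    rw [hP1 t]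
    have := div_neg_of_pos_of_neg (hμpos t) (hFneg t ht)
    linarith
  refine ⟨?_, ?_, ?_, ?_, fun t ht => hlt t ht, ?_⟩
  · intro t ht
    have hFt := hFne t ht
    have hd := (hp t ht).add ((hμD t ht).div (hFD t ht) hFt)
    have hfun : p₁ = fun t => p t + μ t / F t := funext hP1
    rw [hfun]
    have hd' : HasDerivWithinAt (fun t => p t + μ t / F t) _ (Set.Ici 0) t := hd
    convert hd' using 1
    have h4 : f t = a t - 2 * p t := by rw [hfdef]
    simp only [h4]
    field_simp
    ring
  · rw [hP1 0]
    have h1 : μ 0 = 1 := by rw [hmudef, hAdef]; simp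
    have h2 : F 0 = -I := by rw [hFdef]; simp
    rw [h1, h2, div_neg]
    ring
  · intro t ht
    rw [hP1 t]
    exact hkey t ht
  · refine ⟨M, fun t ht => abs_le.mpr ⟨?_, ?_⟩⟩
    · have h1 := hkey t ht
      have h2 : (0:ℝ) ≤ M := le_trans (abs_nonneg _) (hM t ht)
      rw [hP1 t]; linarith
    · exact le_trans (hlt t ht).le (le_trans (le_abs_self _) (hM t ht))
  · have hI0 : 0 < I := by
      have h := hFneg 0 le_rfl
      have h2 : F 0 = -I := by rw [hFdef]; simp
      rw [h2] at h; linarith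
    have key : ∀ S : ℝ, 0 ≤ S →
        (∫ t in (0:ℝ)..S, p t - p₁ t) = Real.log I - Real.log (-F S) := by
      intro S hS
      have hsub : Set.Icc (0:ℝ) S ⊆ Set.Ici 0 := fun x hx => hx.1
      have hgcont : ContinuousOn (fun t => -Real.log (-F t)) (Set.Icc 0 S) := by
        apply ContinuousOn.neg
        apply ContinuousOn.log ((hFC.mono hsub).neg)
        intro x hx
        have := hFneg x hx.1
        intro hc; rw [Pi.neg_apply, neg_eq_zero] at hc; exact (hFne x hx.1) hc
      have hderiv : ∀ x ∈ Set.Ioo 0 S,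
          HasDerivWithinAt (fun t => -Real.log (-F t)) (p x - p₁ x) (Set.Ioi x) x := by
        intro x hx
        have hx0 : (0:ℝ) ≤ x := hx.1.le
        have hFx := hFneg x hx0
        have hFa : HasDerivAt F (μ x) x := (hFD x hx0).hasDerivAt (Ici_mem_nhds hx.1)
        have hlog : HasDerivAt (fun t => Real.log (-F t)) (-μ x / -F x) x :=
          hFa.neg.log (by intro hc; rw [Pi.neg_apply, neg_eq_zero] at hc; exact (hFne x hx0) hc)
        have heq : p x - p₁ x = -(-μ x / -F x) := by
          rw [hP1 x]
          field_simp
          ring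
        exact (heq ▸ hlog.neg).hasDerivWithinAt
      have hInt : IntervalIntegrable (fun t => p t - p₁ t) volume 0 S := by
        have heq : (fun t => p t - p₁ t) = fun t => -(μ t / F t) :=
          funext fun t => by rw [hP1 t]; ring
        rw [heq]
        apply ContinuousOn.intervalIntegrable
        have hsub2 : Set.uIcc (0:ℝ) S ⊆ Set.Ici 0 :=
          Set.ordConnected_Ici.uIcc_subset le_rfl hS
        exact ((hμC.mono hsub2).div (hFC.mono hsub2)
          (fun x hx => hFne x (hsub2 hx))).neg
      rw [intervalIntegral.integral_eq_sub_of_hasDeriv_right_of_le hS hgcont hderiv hInt]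
      have hF00 : F 0 = -I := by rw [hFdef]; simp
      rw [hF00]; ring_nf
    have h1 : Tendsto (fun S => -F S) atTop (𝓝[>] 0) := by
      apply tendsto_nhdsWithin_of_tendsto_nhds_of_eventually_within
      · simpa using hF0.neg
      · filter_upwards [eventually_ge_atTop (0:ℝ)] with S hS
        simp only [Set.mem_Ioi]
        linarith [hFneg S hS]
    have h2 : Tendsto (fun S => Real.log (-F S)) atTop atBot :=
      Real.tendsto_log_nhdsGT_zero.comp h1
    have h3 : Tendsto (fun S => Real.log I + -Real.log (-F S)) atTop atTop :=
      tendsto_atTop_add_const_left _ _ (tendsto_neg_atBot_atTop.comp h2)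
    apply h3.congr'
    filter_upwards [eventually_ge_atTop (0:ℝ)] with S hS
    rw [key S hS, sub_eq_add_neg]
end

section
/- The functions p(t) = 1/2 + 2/(t+5) and p₁(t) = 1/2 − 1/(t+5) are both differentiable solutions on [0,∞) of the equation z'(t) = z(t) − z(t)² − (1/4 − 2/(t+5)²); both are positive and bounded on [0,∞), p(t) > p₁(t) for all t ≥ 0, and ∫₀^∞ (p(t) − p₁(t)) dt = ∞; that is, p and p₁ are two separated positive bounded solutions. -/
open Real Filter MeasureTheory Set intervalIntegral

lemma aux_deriv (t : ℝ) (ht : t ≥ 0) (c : ℝ) :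
    HasDerivAt (fun t : ℝ => 1/2 + c/(t+5)) (-c/(t+5)^2) t := by
  have hne : t + 5 ≠ 0 := by nlinarith
  have h : HasDerivAt (fun t : ℝ => t + 5) 1 t := (hasDerivAt_id t).add_const 5
  have h2 := (h.inv hne).const_mul c
  have h3 := h2.const_add (1/2 : ℝ)
  simp only [div_eq_mul_inv]
  convert h3 using 1
  · rfl
  · rfl
  · funext x; simp only [Pi.inv_apply]; ring
  · ring

theorem stmt18 :
    (∀ t ≥ (0:ℝ), HasDerivWithinAt (fun t : ℝ => 1/2 + 2/(t+5))
      ((1/2 + 2/(t+5)) - (1/2 + 2/(t+5))^2 - (1/4 - 2/(t+5)^2)) (Set.Ici (0:ℝ)) t) ∧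
    (∀ t ≥ (0:ℝ), HasDerivWithinAt (fun t : ℝ => 1/2 - 1/(t+5))
      ((1/2 - 1/(t+5)) - (1/2 - 1/(t+5))^2 - (1/4 - 2/(t+5)^2)) (Set.Ici (0:ℝ)) t) ∧
    (∀ t ≥ (0:ℝ), 0 < 1/2 + 2/(t+5)) ∧
    (∀ t ≥ (0:ℝ), 0 < 1/2 - 1/(t+5)) ∧
    (∃ M : ℝ, ∀ t ≥ (0:ℝ), |1/2 + 2/(t+5)| ≤ M) ∧
    (∃ M : ℝ, ∀ t ≥ (0:ℝ), |1/2 - 1/(t+5)| ≤ M) ∧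
    (∀ t ≥ (0:ℝ), (1/2 + 2/(t+5) : ℝ) > 1/2 - 1/(t+5)) ∧
    Tendsto (fun S => ∫ t in (0:ℝ)..S, (1/2 + 2/(t+5)) - (1/2 - 1/(t+5))) atTop atTop := by
  refine ⟨?_, ?_, ?_, ?_, ?_, ?_, ?_, ?_⟩
  · intro t ht
    have hne : t + 5 ≠ 0 := by nlinarith
    have h := (aux_deriv t ht 2).hasDerivWithinAt (s := Set.Ici (0:ℝ))
    refine h.congr_deriv ?_
    field_simp
    ring
  · intro t ht
    have hne : t + 5 ≠ 0 := by nlinarith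
    have h := (aux_deriv t ht (-1)).hasDerivWithinAt (s := Set.Ici (0:ℝ))
    have : (fun t : ℝ => 1/2 - 1/(t+5)) = (fun t : ℝ => 1/2 + (-1)/(t+5)) := by
      funext x; ring
    rw [this]
    refine h.congr_deriv ?_
    field_simp
    ring
  · intro t ht; positivity
  · intro t ht
    have h5 : (0:ℝ) < t + 5 := by linarith
    rw [sub_pos, div_lt_iff₀ h5]; linarith
  · refine ⟨1, fun t ht => ?_⟩
    have h5 : (0:ℝ) < t + 5 := by linarith
    rw [abs_le]
    constructor
    · nlinarith [div_nonneg (by norm_num : (2:ℝ) ≥ 0).le (le_of_lt h5)]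
    · have : 2/(t+5) ≤ 2/5 := by
        apply div_le_div_of_nonneg_left (by norm_num) (by norm_num) (by linarith)
      linarith
  · refine ⟨1, fun t ht => ?_⟩
    have h5 : (0:ℝ) < t + 5 := by linarith
    have h1 : 1/(t+5) ≤ 1/5 := by
      apply div_le_div_of_nonneg_left (by norm_num) (by norm_num) (by linarith)
    have h2 : 0 < 1/(t+5) := by positivity
    rw [abs_le]; constructor <;> linarith
  · intro t ht
    have h5 : (0:ℝ) < t + 5 := by linarith
    have h2 : 0 < 1/(t+5) := by positivity
    have h3 : 0 < 2/(t+5) := by positivity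
    linarith
  · have key : ∀ S ≥ (0:ℝ), (∫ t in (0:ℝ)..S, (1/2 + 2/(t+5)) - (1/2 - 1/(t+5)))
        = 3 * Real.log ((S+5)/5) := by
      intro S hS
      have heq : ∀ t ∈ Set.uIcc (0:ℝ) S,
          (1/2 + 2/(t+5)) - (1/2 - 1/(t+5)) = 3 * (t+5)⁻¹ := by
        intro t htm
        rw [Set.uIcc_of_le hS] at htm
        have : (0:ℝ) < t + 5 := by have := htm.1; linarith
        field_simp
        ring
      rw [intervalIntegral.integral_congr heq, intervalIntegral.integral_const_mul]
      have : (∫ t in (0:ℝ)..S, (t+5)⁻¹) = ∫ t in (5:ℝ)..(S+5), t⁻¹ := by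
        have := intervalIntegral.integral_comp_add_right (a := (0:ℝ)) (b := S)
          (fun x => x⁻¹) 5
        simpa using this
      rw [this, integral_inv_of_pos (by norm_num) (by linarith)]
    have h1 : Tendsto (fun S : ℝ => 3 * Real.log ((S+5)/5)) atTop atTop := by
      apply Tendsto.const_mul_atTop (by norm_num)
      apply Real.tendsto_log_atTop.comp
      apply Tendsto.atTop_div_const (by norm_num)
      exact tendsto_atTop_add_const_right _ 5 tendsto_id
    refine h1.congr' ?_
    filter_upwards [eventually_ge_atTop (0:ℝ)] with S hS
    exact (key S hS).symm
end

section
/- Let k > 1. Then there is no differentiable function z : [0,∞) → ℝ with z'(t) = z(t) − z(t)² − k(1/4 − 2/(t+5)²) for all t ≥ 0; that is, for every k > 1 all solutions of this equation go to −∞ in finite time. -/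
open Real Filter MeasureTheory Set intervalIntegral

theorem stmt19 (k : ℝ) (hk : 1 < k) :
    ¬ ∃ z : ℝ → ℝ,
      ∀ t ≥ (0:ℝ), HasDerivWithinAt z
        (z t - z t ^ 2 - k * (1/4 - 2/(t+5)^2)) (Set.Ici (0:ℝ)) t := by
  rintro ⟨z, hz⟩
  set c : ℝ := (k - 1) / 8 with hc
  have hc0 : 0 < c := div_pos (by linarith) (by norm_num)
  -- derivative as HasDerivAt for positive times
  have hz' : ∀ t : ℝ, 0 < t →
      HasDerivAt z (z t - z t ^ 2 - k * (1/4 - 2/(t+5)^2)) t := by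
    intro t ht
    exact (hz t ht.le).hasDerivAt (Ici_mem_nhds ht)
  have hzc : ContinuousOn z (Ici (0:ℝ)) := fun t ht => (hz t ht).continuousWithinAt
  -- choose T
  set T : ℝ := 16 * k / (k - 1) with hT
  have hT16 : 16 < T := by
    rw [hT, lt_div_iff₀ (by linarith : (0:ℝ) < k - 1)]
    nlinarith
  have hTpos : (0:ℝ) < T := by linarith
  -- key bound on the forcing term
  have hforce : ∀ t : ℝ, T ≤ t → k * (2/(t+5)^2) ≤ c := by
    intro t ht
    have ht1 : (1:ℝ) ≤ t := by linarith
    have hsq : T ≤ (t+5)^2 := by nlinarith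
    have hsqpos : (0:ℝ) < (t+5)^2 := by positivity
    have h1 : k * (2/(t+5)^2) = 2*k/(t+5)^2 := by ring
    rw [h1]
    have h2 : 2*k/(t+5)^2 ≤ 2*k/T :=
      div_le_div_of_nonneg_left (by linarith) hTpos hsq
    have h3 : 2*k/T = c := by
      rw [hT, hc]
      field_simp
      ring
    linarith
  -- the derivative bound for t ≥ T
  have hD : ∀ t : ℝ, T ≤ t →
      z t - z t ^ 2 - k * (1/4 - 2/(t+5)^2) ≤ -(z t - 1/2)^2 - c := by
    intro t ht
    have h1 := hforce t ht
    have h2 : k * (1/4 - 2/(t+5)^2) = k/4 - k * (2/(t+5)^2) := by ring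
    rw [h2]
    have : z t - z t ^ 2 = -(z t - 1/2)^2 + 1/4 := by ring
    rw [this, hc] at *
    linarith
  -- z t + c*t is antitone on [T, ∞)
  have hanti : AntitoneOn (fun t => z t + c * t) (Ici T) := by
    apply antitoneOn_of_deriv_nonpos (convex_Ici T)
    · exact ((hzc.mono (Ici_subset_Ici.2 hTpos.le)).add (continuous_const.mul continuous_id).continuousOn)
    · intro t ht
      rw [interior_Ici] at ht
      have htpos : 0 < t := lt_trans hTpos ht
      exact ((hz' t htpos).add (((hasDerivAt_id t).const_mul c))).differentiableAt.differentiableWithinAt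
    · intro t ht
      rw [interior_Ici] at ht
      have htpos : 0 < t := lt_trans hTpos ht
      have hd : HasDerivAt (fun t => z t + c * t)
          ((z t - z t ^ 2 - k * (1/4 - 2/(t+5)^2)) + c * 1) t :=
        (hz' t htpos).add (((hasDerivAt_id t).const_mul c))
      rw [hd.deriv]
      have := hD t ht.le
      nlinarith [sq_nonneg (z t - 1/2)]
  -- find T₁ with z T₁ ≤ -1
  set T₁ : ℝ := T + (|z T| + 1)/c with hT₁
  have hTT₁ : T ≤ T₁ := by
    have h0 : 0 ≤ (|z T| + 1)/c := by positivity
    rw [hT₁]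
    linarith
  have hzT₁ : z T₁ ≤ -1 := by
    have h := hanti (self_mem_Ici) (mem_Ici.2 hTT₁) hTT₁
    simp only at h
    have hce : c * T₁ = c * T + (|z T| + 1) := by
      rw [hT₁]; field_simp
    have habs : z T ≤ |z T| := le_abs_self _
    nlinarith
  -- z stays ≤ -1 after T₁
  have hstay : ∀ t : ℝ, T₁ ≤ t → z t ≤ -1 := by
    intro t ht
    have h := hanti (mem_Ici.2 hTT₁) (mem_Ici.2 (le_trans hTT₁ ht)) ht
    simp only at h
    nlinarith [mul_le_mul_of_nonneg_left ht hc0.le]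
  -- now study u t = (z t - 1/2)⁻¹ - t, monotone on [T₁, ∞)
  have hmono : MonotoneOn (fun t => (z t - 1/2)⁻¹ - t) (Ici T₁) := by
    apply monotoneOn_of_deriv_nonneg (convex_Ici T₁)
    · apply ContinuousOn.sub _ continuous_id.continuousOn
      apply ContinuousOn.inv₀
      · exact (hzc.mono (Ici_subset_Ici.2 (le_trans hTpos.le hTT₁))).sub continuousOn_const
      · intro t ht
        have := hstay t ht
        intro hzero
        nlinarith
    · intro t ht
      rw [interior_Ici] at ht
      have htpos : 0 < t := lt_of_le_of_lt (le_trans hTpos.le hTT₁) ht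
      have hne : z t - 1/2 ≠ 0 := by
        have := hstay t ht.le
        intro hzero; nlinarith
      have hd : HasDerivAt (fun s => z s - 1/2) (z t - z t ^ 2 - k * (1/4 - 2/(t+5)^2)) t :=
        (hz' t htpos).sub_const _
      exact ((hd.inv hne).sub (hasDerivAt_id t)).differentiableAt.differentiableWithinAt
    · intro t ht
      rw [interior_Ici] at ht
      have htpos : 0 < t := lt_of_le_of_lt (le_trans hTpos.le hTT₁) ht
      have hzt : z t ≤ -1 := hstay t ht.le
      have hne : z t - 1/2 ≠ 0 := by intro hzero; nlinarith
      have hd : HasDerivAt (fun s => z s - 1/2) (z t - z t ^ 2 - k * (1/4 - 2/(t+5)^2)) t :=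
        (hz' t htpos).sub_const _
      have hd2 : HasDerivAt (fun s => (z s - 1/2)⁻¹ - s)
          (-(z t - z t ^ 2 - k * (1/4 - 2/(t+5)^2)) / (z t - 1/2)^2 - 1) t :=
        (hd.inv hne).sub (hasDerivAt_id t)
      rw [hd2.deriv]
      -- show the derivative is ≥ 0
      have hDt := hD t (le_trans hTT₁ ht.le)
      have hw2 : (1:ℝ) ≤ (z t - 1/2)^2 := by nlinarith
      have hw2pos : (0:ℝ) < (z t - 1/2)^2 := by nlinarith
      rw [sub_nonneg, le_div_iff₀ hw2pos]
      nlinarith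
  -- contradiction at t = T₁ + 2
  have h1 : z T₁ - 1/2 ≤ -1 := by have := hzT₁; linarith
  have h2 : z (T₁ + 2) - 1/2 ≤ -1 := by have := hstay (T₁+2) (by linarith); linarith
  have hu1 : -1 ≤ (z T₁ - 1/2)⁻¹ := by
    have hlt : z T₁ - 1/2 < 0 := by linarith
    have hinv : (z T₁ - 1/2) * (z T₁ - 1/2)⁻¹ = 1 := mul_inv_cancel₀ (ne_of_lt hlt)
    nlinarith
  have hu2 : (z (T₁+2) - 1/2)⁻¹ < 0 := by
    exact inv_lt_zero.mpr (by linarith)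
  have hm := hmono (self_mem_Ici) (mem_Ici.2 (by linarith : T₁ ≤ T₁ + 2)) (by linarith)
  simp only at hm
  linarith
end
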